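/- arXiv:1505.02839 — 5 statements merged into one kernel-verified Lean document; each statement's English description precedes it below -/
import Mathlib

section
/- Let (X,d) be a compact metric space and let ξ = ξ(x,ω) be a jointly measurable random field on X defined on a probability space (Ω,B,P) whose sample paths are almost surely continuous. Let Φ be an Orlicz function satisfying the Δ₂ condition, and suppose that the Luxemburg norm ‖ sup_{x∈X} |ξ(x)| ‖_Φ is finite. Then there exist a scaling function g on [0, diam(X)] and a non-negative random variable τ₀ with ‖τ₀‖_Φ = 1 such that, almost surely, Δ(ξ(·,ω), δ) ≤ τ₀(ω) · g(δ) for every δ ∈ [0, diam(X)]. -/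
open MeasureTheory Filter Set
open scoped ENNReal NNReal Topology

/-- The modulus of continuity `Δ(f, δ)` of a function `f` on a metric space. -/
noncomputable def modCont {X : Type*} [MetricSpace X] (f : X → ℝ) (δ : ℝ) : ℝ :=
  sSup {r : ℝ | ∃ x y : X, dist x y ≤ δ ∧ r = |f x - f y|}

/-- An Orlicz (Young) function: even, convex, continuous, strictly increasing on `[0,∞)`,
vanishing at `0`, and tending to `∞` at `∞`. -/
structure IsOrliczFunction (Φ : ℝ → ℝ) : Prop where
  even : ∀ u, Φ (-u) = Φ u
  nonneg : ∀ u, 0 ≤ Φ u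
  convexOn : ConvexOn ℝ Set.univ Φ
  continuous : Continuous Φ
  strictMonoOn : StrictMonoOn Φ (Set.Ici 0)
  map_zero : Φ 0 = 0
  tendsto_atTop : Filter.Tendsto Φ Filter.atTop Filter.atTop

/-- The `Δ₂` condition: `limsup_{u→∞} Φ(2u)/Φ(u) < ∞`. -/
def OrliczDelta2 (Φ : ℝ → ℝ) : Prop :=
  ∃ C : ℝ, ∀ᶠ u in Filter.atTop, Φ (2 * u) ≤ C * Φ u

/-- The Luxemburg norm of a random variable `ζ` with respect to the Orlicz function `Φ`,
with value `∞` when `ζ` belongs to no ball of the Orlicz space. -/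
noncomputable def luxNorm {Ω : Type*} [MeasurableSpace Ω] (P : Measure Ω)
    (Φ : ℝ → ℝ) (ζ : Ω → ℝ) : ℝ≥0∞ :=
  sInf {c : ℝ≥0∞ | 0 < c ∧ c ≠ ∞ ∧
    ∫⁻ ω, ENNReal.ofReal (Φ (|ζ ω| / c.toReal)) ∂P ≤ 1}

/-- A scaling function on `[0, D]`: continuous, non-negative, nondecreasing, vanishing at `0`. -/
def IsScalingFunction (g : ℝ → ℝ) (D : ℝ) : Prop :=
  ContinuousOn g (Set.Icc 0 D) ∧ (∀ δ ∈ Set.Icc 0 D, 0 ≤ g δ) ∧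
    MonotoneOn g (Set.Icc 0 D) ∧ g 0 = 0

/-- `Ψ` is weaker than `Φ` (`Ψ << Φ`): for every `v > 0`, `Ψ(uv)/Φ(u) → 0` as `u → ∞`. -/
def OrliczWeaker (Ψ Φ : ℝ → ℝ) : Prop :=
  ∀ v : ℝ, 0 < v →
    Filter.Tendsto (fun u => Ψ (u * v) / Φ u) Filter.atTop (nhds 0)

namespace FCaux

lemma exists_min_nat {p : ℕ → Prop} (h : ∃ n, p n) : ∃ n, p n ∧ ∀ j, j < n → ¬ p j := by
  classical
  exact ⟨Nat.find h, Nat.find_spec h, fun j hj => Nat.find_min h hj⟩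

variable {Φ : ℝ → ℝ}

lemma monoOn (hΦ : IsOrliczFunction Φ) : MonotoneOn Φ (Set.Ici 0) :=
  hΦ.strictMonoOn.monotoneOn

lemma mono_le (hΦ : IsOrliczFunction Φ) {a b : ℝ} (ha : 0 ≤ a) (hab : a ≤ b) :
    Φ a ≤ Φ b := monoOn hΦ ha (ha.trans hab) hab

lemma le_of_apply_le (hΦ : IsOrliczFunction Φ) {a b : ℝ} (ha : 0 ≤ a) (hb : 0 ≤ b)
    (h : Φ a ≤ Φ b) : a ≤ b := by
  by_contra hlt
  exact absurd (hΦ.strictMonoOn hb ha (lt_of_not_ge hlt)) (not_lt.2 h)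

lemma exists_one (hΦ : IsOrliczFunction Φ) : ∃ u₁ : ℝ, 0 < u₁ ∧ Φ u₁ = 1 := by
  obtain ⟨b, hb⟩ := (hΦ.tendsto_atTop.eventually_ge_atTop 1).exists
  have hb' : (1:ℝ) ≤ Φ |b| := by
    rcases abs_choice b with h | h
    · rwa [h]
    · rw [h, hΦ.even]; exact hb
  have h01 : (1:ℝ) ∈ Set.Icc (Φ 0) (Φ |b|) := ⟨by rw [hΦ.map_zero]; norm_num, hb'⟩
  obtain ⟨u, hu, hΦu⟩ := intermediate_value_Icc (abs_nonneg b) hΦ.continuous.continuousOn h01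
  refine ⟨u, ?_, hΦu⟩
  rcases eq_or_lt_of_le hu.1 with h | h
  · exfalso; rw [← h, hΦ.map_zero] at hΦu; norm_num at hΦu
  · exact h

lemma smul_le (hΦ : IsOrliczFunction Φ) {t : ℝ} (ht0 : 0 ≤ t) (ht1 : t ≤ 1) (u : ℝ) :
    Φ (t * u) ≤ t * Φ u := by
  have := hΦ.convexOn.2 (Set.mem_univ u) (Set.mem_univ 0) ht0
    (show (0:ℝ) ≤ 1 - t by linarith) (show t + (1 - t) = 1 by ring)
  simp only [smul_eq_mul, mul_zero, add_zero, hΦ.map_zero] at this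
  linarith

lemma delta2_global (hΦ : IsOrliczFunction Φ) (hΦ2 : OrliczDelta2 Φ) :
    ∃ C K : ℝ, 0 ≤ C ∧ 0 ≤ K ∧ ∀ u, 0 ≤ u → Φ (2 * u) ≤ C * Φ u + K := by
  obtain ⟨C, hC⟩ := hΦ2
  obtain ⟨u₀, hu₀⟩ := eventually_atTop.1 hC
  refine ⟨max C 0, Φ (2 * max u₀ 0), le_max_right _ _, hΦ.nonneg _, fun u hu => ?_⟩
  rcases le_total u (max u₀ 0) with h | h
  · have h1 : Φ (2 * u) ≤ Φ (2 * max u₀ 0) := mono_le hΦ (by linarith) (by linarith)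
    have h2 : 0 ≤ max C 0 * Φ u := mul_nonneg (le_max_right _ _) (hΦ.nonneg _)
    linarith
  · have h1 : Φ (2 * u) ≤ C * Φ u := hu₀ u ((le_max_left _ _).trans h)
    have h2 : C * Φ u ≤ max C 0 * Φ u := mul_le_mul_of_nonneg_right (le_max_left _ _) (hΦ.nonneg _)
    have h3 : 0 ≤ Φ (2 * max u₀ 0) := hΦ.nonneg _
    linarith

variable {Ω : Type*} [MeasurableSpace Ω]

lemma luxNorm_const_one (P : Measure Ω) [IsProbabilityMeasure P]
    (hlt : ∀ a b : ℝ, 0 ≤ a → 0 ≤ b → Φ a ≤ Φ b → a ≤ b)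
    {u₁ : ℝ} (hu₁ : 0 < u₁) (h1 : Φ u₁ = 1) :
    luxNorm P Φ (fun _ => u₁) = 1 := by
  unfold luxNorm
  apply le_antisymm
  · apply sInf_le
    refine ⟨zero_lt_one, ENNReal.one_ne_top, ?_⟩
    simp only [ENNReal.toReal_one, div_one, abs_of_pos hu₁]
    rw [lintegral_const, measure_univ, mul_one, h1, ENNReal.ofReal_one]
  · refine le_sInf fun c hc => ?_
    obtain ⟨hc0, hct, hci⟩ := hc
    rw [lintegral_const, measure_univ, mul_one] at hci
    have hct' : 0 < c.toReal := ENNReal.toReal_pos hc0.ne' hct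
    have hle : Φ (|u₁| / c.toReal) ≤ 1 := ENNReal.ofReal_le_one.1 hci
    rw [abs_of_pos hu₁] at hle
    have h2 : u₁ / c.toReal ≤ u₁ :=
      hlt _ _ (le_of_lt (div_pos hu₁ hct')) hu₁.le (by rw [h1]; exact hle)
    have h3 : (1:ℝ) ≤ c.toReal := by
      rw [div_le_iff₀ hct'] at h2
      nlinarith
    calc (1:ℝ≥0∞) = ENNReal.ofReal 1 := ENNReal.ofReal_one.symm
      _ ≤ ENNReal.ofReal c.toReal := ENNReal.ofReal_le_ofReal h3
      _ = c := ENNReal.ofReal_toReal hct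

lemma luxNorm_normalize (P : Measure Ω) (Φ : ℝ → ℝ) (τ : Ω → ℝ)
    (h1 : 1 ≤ luxNorm P Φ τ) (hfin : luxNorm P Φ τ ≠ ∞) :
    luxNorm P Φ (fun ω => τ ω / (luxNorm P Φ τ).toReal) = 1 := by
  set N' := luxNorm P Φ τ with hN'
  set N := N'.toReal with hN
  have hN'0 : N' ≠ 0 := by
    intro h; rw [h] at h1; exact absurd h1 (by simp)
  have hNpos : 0 < N := ENNReal.toReal_pos hN'0 hfin
  have key : ∀ c : ℝ≥0∞, c ≠ ∞ → ∀ ω,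
      ENNReal.ofReal (Φ (|τ ω / N| / c.toReal)) =
      ENNReal.ofReal (Φ (|τ ω| / (c * N').toReal)) := by
    intro c hc ω
    congr 2
    rw [ENNReal.toReal_mul, abs_div, abs_of_pos hNpos, div_div, mul_comm N c.toReal]
  apply le_antisymm
  · refine ENNReal.le_of_forall_pos_le_add fun ε hε _ => ?_
    have hlt : N' < N' * (1 + ε) := by
      nth_rewrite 1 [← mul_one N']
      rw [ENNReal.mul_lt_mul_iff_right hN'0 hfin]
      exact ENNReal.lt_add_right ENNReal.one_ne_top (by exact_mod_cast hε.ne')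
    obtain ⟨c, hcS, hclt⟩ := (sInf_lt_iff).1 (hN' ▸ hlt)
    obtain ⟨hc0, hct, hci⟩ := hcS
    have hmem : c / N' ∈ {c : ℝ≥0∞ | 0 < c ∧ c ≠ ∞ ∧
        ∫⁻ ω, ENNReal.ofReal (Φ (|τ ω / N| / c.toReal)) ∂P ≤ 1} := by
      refine ⟨ENNReal.div_pos hc0.ne' hfin, (ENNReal.div_lt_top hct hN'0).ne, ?_⟩
      have hrw : ∀ ω, ENNReal.ofReal (Φ (|τ ω / N| / (c / N').toReal)) =
          ENNReal.ofReal (Φ (|τ ω| / c.toReal)) := by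
        intro ω
        congr 2
        rw [ENNReal.toReal_div, abs_div, abs_of_pos hNpos]
        have hcr : c.toReal ≠ 0 := (ENNReal.toReal_pos hc0.ne' hct).ne'
        rw [← hN]
        field_simp
      rw [lintegral_congr hrw]
      exact hci
    calc luxNorm P Φ (fun ω => τ ω / N) ≤ c / N' := sInf_le hmem
      _ ≤ (N' * (1 + ε)) / N' := ENNReal.div_le_div_right hclt.le _
      _ = 1 + ε := by
          rw [mul_comm, mul_div_assoc, ENNReal.div_self hN'0 hfin, mul_one]
  · refine le_sInf fun c hc => ?_
    obtain ⟨hc0, hct, hci⟩ := hc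
    have hmem : c * N' ∈ {c : ℝ≥0∞ | 0 < c ∧ c ≠ ∞ ∧
        ∫⁻ ω, ENNReal.ofReal (Φ (|τ ω| / c.toReal)) ∂P ≤ 1} := by
      refine ⟨ENNReal.mul_pos hc0.ne' hN'0, ENNReal.mul_ne_top hct hfin, ?_⟩
      rw [← lintegral_congr (key c hct)]
      exact hci
    have hle : N' ≤ c * N' := sInf_le hmem
    rw [mul_comm] at hle
    nth_rewrite 1 [← mul_one N'] at hle
    exact (ENNReal.mul_le_mul_iff_right hN'0 hfin).1 hle

variable {X : Type*} [MetricSpace X] [CompactSpace X] {f : X → ℝ}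

lemma exists_bound [Nonempty X] (hf : Continuous f) : ∃ C : ℝ, 0 ≤ C ∧ ∀ x, |f x| ≤ C := by
  obtain ⟨x₀, -, hx₀⟩ := isCompact_univ.exists_isMaxOn univ_nonempty
    (hf.abs.continuousOn : ContinuousOn (fun x => |f x|) univ)
  exact ⟨|f x₀|, abs_nonneg _, fun x => hx₀ (mem_univ x)⟩

omit [CompactSpace X] in
lemma modCont_zero [Nonempty X] (f : X → ℝ) : modCont f 0 = 0 := by
  have h : {r : ℝ | ∃ x y : X, dist x y ≤ 0 ∧ r = |f x - f y|} = {0} := by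
    apply Set.Subset.antisymm
    · rintro r ⟨x, y, hxy, rfl⟩
      have : x = y := dist_le_zero.1 hxy
      simp [this]
    · rintro r (rfl : r = 0)
      exact ⟨Classical.arbitrary X, Classical.arbitrary X, by simp, by simp⟩
  rw [modCont, h, csSup_singleton]

omit [CompactSpace X] in
lemma modCont_bddAbove {C : ℝ} (hC : ∀ x, |f x| ≤ C) (δ : ℝ) :
    BddAbove {r : ℝ | ∃ x y : X, dist x y ≤ δ ∧ r = |f x - f y|} := by
  refine ⟨2 * C, ?_⟩
  rintro r ⟨x, y, -, rfl⟩
  calc |f x - f y| ≤ |f x| + |f y| := abs_sub _ _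
    _ ≤ 2 * C := by have := hC x; have := hC y; linarith

omit [CompactSpace X] in
lemma le_modCont {C : ℝ} (hC : ∀ x, |f x| ≤ C) {δ : ℝ} {x y : X}
    (hxy : dist x y ≤ δ) : |f x - f y| ≤ modCont f δ :=
  le_csSup (modCont_bddAbove hC δ) ⟨x, y, hxy, rfl⟩

omit [CompactSpace X] in
lemma modCont_nonneg [Nonempty X] {C : ℝ} (hC : ∀ x, |f x| ≤ C) {δ : ℝ} (hδ : 0 ≤ δ) :
    0 ≤ modCont f δ := by
  have := le_modCont (f := f) hC (x := Classical.arbitrary X) (y := Classical.arbitrary X)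
    (by simpa using hδ)
  simpa using this

omit [CompactSpace X] in
lemma modCont_le {δ a : ℝ} (ha : 0 ≤ a)
    (h : ∀ x y : X, dist x y ≤ δ → |f x - f y| ≤ a) : modCont f δ ≤ a := by
  apply Real.sSup_le _ ha
  rintro r ⟨x, y, hxy, rfl⟩
  exact h x y hxy

lemma modCont_small (hf : Continuous f) {ε : ℝ} (hε : 0 < ε) :
    ∃ η > 0, ∀ δ : ℝ, δ < η → modCont f δ ≤ ε := by
  have huc : UniformContinuous f := CompactSpace.uniformContinuous_of_continuous hf
  obtain ⟨η, hη, hd⟩ := Metric.uniformContinuous_iff.1 huc ε hε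
  refine ⟨η, hη, fun δ hδ => ?_⟩
  apply modCont_le hε.le
  intro x y hxy
  have := hd (lt_of_le_of_lt hxy hδ)
  rw [Real.dist_eq] at this
  exact this.le

end FCaux

set_option maxHeartbeats 2000000 in
/-- factorable continuity with a normed factor in `L(Φ)`, for an Orlicz
function `Φ` satisfying the `Δ₂` condition. -/
theorem factorable_continuity_orlicz_delta2
    {X Ω : Type*} [MetricSpace X] [CompactSpace X]
    [MeasurableSpace X] [BorelSpace X] [MeasurableSpace Ω]
    (P : Measure Ω) [IsProbabilityMeasure P]
    (ξ : X → Ω → ℝ)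
    (hmeas : Measurable fun p : X × Ω => ξ p.1 p.2)
    (hcont : ∀ᵐ ω ∂P, Continuous fun x => ξ x ω)
    (Φ : ℝ → ℝ) (hΦ : IsOrliczFunction Φ) (hΦ2 : OrliczDelta2 Φ)
    (hfin : luxNorm P Φ (fun ω => ⨆ x : X, |ξ x ω|) < ∞) :
    ∃ (g : ℝ → ℝ) (τ₀ : Ω → ℝ),
      IsScalingFunction g (Metric.diam (Set.univ : Set X)) ∧
      Measurable τ₀ ∧ (∀ ω, 0 ≤ τ₀ ω) ∧ luxNorm P Φ τ₀ = 1 ∧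
      ∀ᵐ ω ∂P, ∀ δ ∈ Set.Icc (0 : ℝ) (Metric.diam (Set.univ : Set X)),
        modCont (fun x => ξ x ω) δ ≤ τ₀ ω * g δ := by
  classical
  obtain ⟨u₁, hu₁, hΦ1⟩ := FCaux.exists_one hΦ
  have hlt' : ∀ a b : ℝ, 0 ≤ a → 0 ≤ b → Φ a ≤ Φ b → a ≤ b :=
    fun a b ha hb h => FCaux.le_of_apply_le hΦ ha hb h
  by_cases hX : Nonempty X
  swap
  · -- the case of empty X
    haveI : IsEmpty X := not_nonempty_iff.1 hX
    refine ⟨id, fun _ => u₁,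
      ⟨continuous_id.continuousOn, fun δ hδ => hδ.1, fun a _ b _ hab => hab, rfl⟩,
      measurable_const, fun _ => hu₁.le,
      FCaux.luxNorm_const_one P hlt' hu₁ hΦ1, ?_⟩
    filter_upwards with ω δ hδ
    have hempty : {r : ℝ | ∃ x y : X, dist x y ≤ δ ∧ r = |ξ x ω - ξ y ω|} = ∅ := by
      ext r; simp
    rw [modCont]
    simp only [hempty, Real.sSup_empty]
    exact mul_nonneg hu₁.le hδ.1
  · haveI := hX
    obtain ⟨s, hs⟩ : ∃ s : ℕ → X, DenseRange s :=
      ⟨TopologicalSpace.denseSeq X, TopologicalSpace.denseRange_denseSeq X⟩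
    have hξmeas : ∀ x : X, Measurable fun ω => ξ x ω := fun x =>
      hmeas.comp (measurable_const.prodMk measurable_id)
    set Md : Ω → ℝ≥0∞ := fun ω => ⨆ k, ENNReal.ofReal |ξ (s k) ω| with hMd
    have hMdmeas : Measurable Md :=
      Measurable.iSup fun k => ENNReal.measurable_ofReal.comp (hξmeas (s k)).abs
    set Dd : ℝ → Ω → ℝ≥0∞ := fun δ ω => ⨆ p : ℕ × ℕ,
      if dist (s p.1) (s p.2) ≤ δ then ENNReal.ofReal |ξ (s p.1) ω - ξ (s p.2) ω| else 0 with hDd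
    have hDdmeas : ∀ δ, Measurable (Dd δ) := by
      intro δ
      refine Measurable.iSup fun p => ?_
      by_cases h : dist (s p.1) (s p.2) ≤ δ
      · simp only [h, if_true]
        exact ENNReal.measurable_ofReal.comp (((hξmeas _).sub (hξmeas _)).abs)
      · simp only [h, if_false]; exact measurable_const
    have hDdle : ∀ δ ω, Dd δ ω ≤ 2 * Md ω := by
      intro δ ω
      refine iSup_le fun p => ?_
      by_cases h : dist (s p.1) (s p.2) ≤ δ
      · simp only [h, if_true]
        calc ENNReal.ofReal |ξ (s p.1) ω - ξ (s p.2) ω|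
            ≤ ENNReal.ofReal (|ξ (s p.1) ω| + |ξ (s p.2) ω|) :=
              ENNReal.ofReal_le_ofReal (abs_sub _ _)
          _ ≤ ENNReal.ofReal |ξ (s p.1) ω| + ENNReal.ofReal |ξ (s p.2) ω| :=
              ENNReal.ofReal_add_le
          _ ≤ Md ω + Md ω := by
              rw [hMd]
              exact add_le_add (le_iSup (fun k => ENNReal.ofReal |ξ (s k) ω| ) p.1)
                (le_iSup (fun k => ENNReal.ofReal |ξ (s k) ω| ) p.2)
          _ = 2 * Md ω := (two_mul _).symm
      · simp [h]
    have hMdub : ∀ ω k, ENNReal.ofReal |ξ (s k) ω| ≤ Md ω := by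
      intro ω k; rw [hMd]; exact le_iSup (fun k => ENNReal.ofReal |ξ (s k) ω|) k
    have hDdub : ∀ δ ω (p : ℕ × ℕ), dist (s p.1) (s p.2) ≤ δ →
        ENNReal.ofReal |ξ (s p.1) ω - ξ (s p.2) ω| ≤ Dd δ ω := by
      intro δ ω p hp
      have h := le_iSup (fun p : ℕ × ℕ => if dist (s p.1) (s p.2) ≤ δ then
        ENNReal.ofReal |ξ (s p.1) ω - ξ (s p.2) ω| else 0) p
      rw [if_pos hp] at h
      exact h
    set Mdr : Ω → ℝ := fun ω => (Md ω).toReal with hMdr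
    set Dr : ℝ → Ω → ℝ := fun δ ω => (Dd δ ω).toReal with hDr
    have hMdrmeas : Measurable Mdr := hMdmeas.ennreal_toReal
    have hDrmeas : ∀ δ, Measurable (Dr δ) := fun δ => (hDdmeas δ).ennreal_toReal
    set Msup : Ω → ℝ := fun ω => ⨆ x : X, |ξ x ω| with hMsup
    have hMsupnn : ∀ ω, 0 ≤ Msup ω := fun ω => Real.iSup_nonneg fun x => abs_nonneg _
    -- pointwise facts for continuous paths
    have hgood : ∀ ω, Continuous (fun x => ξ x ω) →
        (Md ω ≤ ENNReal.ofReal (Msup ω)) ∧ (Msup ω ≤ Mdr ω) ∧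
        (∀ δ, 0 ≤ δ → Dr δ ω ≤ modCont (fun x => ξ x ω) δ) ∧
        (∀ δ δ', 0 ≤ δ → δ < δ' → modCont (fun x => ξ x ω) δ ≤ Dr δ' ω) ∧
        (∀ δ, modCont (fun x => ξ x ω) δ ≤ 2 * Msup ω) := by
      intro ω hw
      obtain ⟨C, hC0, hC⟩ := FCaux.exists_bound hw
      have hbddM : BddAbove (Set.range fun x => |ξ x ω|) := ⟨C, by rintro r ⟨x, rfl⟩; exact hC x⟩
      have habs_le_Msup : ∀ x, |ξ x ω| ≤ Msup ω := fun x => le_ciSup hbddM x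
      have h1 : Md ω ≤ ENNReal.ofReal (Msup ω) := by
        rw [hMd]
        exact iSup_le fun k => ENNReal.ofReal_le_ofReal (habs_le_Msup (s k))
      have hMdfin : Md ω ≠ ∞ := (lt_of_le_of_lt h1 ENNReal.ofReal_lt_top).ne
      have h2 : Msup ω ≤ Mdr ω := by
        refine Real.iSup_le (fun x => ?_) ENNReal.toReal_nonneg
        refine le_of_forall_pos_le_add fun ε hε => ?_
        obtain ⟨η, hη, hcont'⟩ := Metric.continuousAt_iff.1 (hw.continuousAt (x := x)) ε hε
        obtain ⟨k, hk⟩ := Metric.denseRange_iff.1 hs x η hη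
        have hd1 : dist (ξ (s k) ω) (ξ x ω) < ε := hcont' (by rwa [dist_comm])
        have hfk : |ξ (s k) ω| ≤ Mdr ω := by
          have : ENNReal.ofReal |ξ (s k) ω| ≤ Md ω := hMdub ω k
          calc |ξ (s k) ω| = (ENNReal.ofReal |ξ (s k) ω|).toReal :=
                (ENNReal.toReal_ofReal (abs_nonneg _)).symm
            _ ≤ Mdr ω := ENNReal.toReal_mono hMdfin this
        have : |ξ x ω| ≤ |ξ (s k) ω| + ε := by
          rw [Real.dist_eq] at hd1
          have := abs_sub_abs_le_abs_sub (ξ x ω) (ξ (s k) ω)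
          have h' : |ξ x ω - ξ (s k) ω| < ε := by rwa [abs_sub_comm]
          linarith
        linarith
      have h3 : ∀ δ, 0 ≤ δ → Dr δ ω ≤ modCont (fun x => ξ x ω) δ := by
        intro δ hδ
        have hle : Dd δ ω ≤ ENNReal.ofReal (modCont (fun x => ξ x ω) δ) := by
          rw [hDd]
          refine iSup_le fun p => ?_
          by_cases h : dist (s p.1) (s p.2) ≤ δ
          · simp only [h, if_true]
            exact ENNReal.ofReal_le_ofReal (FCaux.le_modCont hC h)
          · simp [h]
        have hmnn : 0 ≤ modCont (fun x => ξ x ω) δ := FCaux.modCont_nonneg hC hδ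
        calc Dr δ ω ≤ (ENNReal.ofReal (modCont (fun x => ξ x ω) δ)).toReal :=
              ENNReal.toReal_mono ENNReal.ofReal_ne_top hle
          _ = modCont (fun x => ξ x ω) δ := ENNReal.toReal_ofReal hmnn
      have h4 : ∀ δ δ', 0 ≤ δ → δ < δ' → modCont (fun x => ξ x ω) δ ≤ Dr δ' ω := by
        intro δ δ' hδ hlt
        have hDfin : Dd δ' ω ≠ ∞ := by
          refine ne_top_of_le_ne_top ?_ (hDdle δ' ω)
          exact ENNReal.mul_ne_top (by simp) hMdfin
        refine Real.sSup_le ?_ ENNReal.toReal_nonneg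
        rintro r ⟨x, y, hxy, rfl⟩
        refine le_of_forall_pos_le_add fun ε hε => ?_
        obtain ⟨η₁, hη₁, hcx⟩ := Metric.continuousAt_iff.1 (hw.continuousAt (x := x)) (ε/2)
          (by linarith)
        obtain ⟨η₂, hη₂, hcy⟩ := Metric.continuousAt_iff.1 (hw.continuousAt (x := y)) (ε/2)
          (by linarith)
        have hgap : 0 < (δ' - δ)/2 := by linarith
        obtain ⟨k, hk⟩ := Metric.denseRange_iff.1 hs x (min η₁ ((δ' - δ)/2))
          (lt_min hη₁ hgap)
        obtain ⟨l, hl⟩ := Metric.denseRange_iff.1 hs y (min η₂ ((δ' - δ)/2))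
          (lt_min hη₂ hgap)
        have hdkl : dist (s k) (s l) ≤ δ' := by
          have h1' := dist_triangle (s k) x (s l)
          have h2' := dist_triangle x y (s l)
          have hk' : dist (s k) x < (δ' - δ)/2 := by
            rw [dist_comm]; exact lt_of_lt_of_le hk (min_le_right _ _)
          have hl' : dist y (s l) < (δ' - δ)/2 := lt_of_lt_of_le hl (min_le_right _ _)
          nlinarith [dist_nonneg (x := x) (y := y)]
        have hterm : |ξ (s k) ω - ξ (s l) ω| ≤ Dr δ' ω := by
          have h' := hDdub δ' ω (k, l) hdkl
          calc |ξ (s k) ω - ξ (s l) ω|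
              = (ENNReal.ofReal |ξ (s k) ω - ξ (s l) ω|).toReal :=
                (ENNReal.toReal_ofReal (abs_nonneg _)).symm
            _ ≤ Dr δ' ω := ENNReal.toReal_mono hDfin h'
        have hfx : |ξ (s k) ω - ξ x ω| < ε/2 := by
          have := hcx (show dist (s k) x < η₁ by
            rw [dist_comm]; exact lt_of_lt_of_le hk (min_le_left _ _))
          rwa [Real.dist_eq] at this
        have hfy : |ξ (s l) ω - ξ y ω| < ε/2 := by
          have := hcy (show dist (s l) y < η₂ by
            rw [dist_comm]; exact lt_of_lt_of_le hl (min_le_left _ _))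
          rwa [Real.dist_eq] at this
        have htri : |ξ x ω - ξ y ω| ≤
            |ξ x ω - ξ (s k) ω| + |ξ (s k) ω - ξ (s l) ω| + |ξ (s l) ω - ξ y ω| := by
          have := abs_sub_le (ξ x ω) (ξ (s k) ω) (ξ y ω)
          have := abs_sub_le (ξ (s k) ω) (ξ (s l) ω) (ξ y ω)
          linarith
        rw [abs_sub_comm] at hfx
        linarith
      have h5 : ∀ δ, modCont (fun x => ξ x ω) δ ≤ 2 * Msup ω := by
        intro δ
        refine Real.sSup_le ?_ (by linarith [hMsupnn ω])
        rintro r ⟨x, y, hxy, rfl⟩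
        calc |ξ x ω - ξ y ω| ≤ |ξ x ω| + |ξ y ω| := abs_sub _ _
          _ ≤ 2 * Msup ω := by have := habs_le_Msup x; have := habs_le_Msup y; linarith
      exact ⟨h1, h2, h3, h4, h5⟩
    have hMdrnn : ∀ ω, 0 ≤ Mdr ω := fun ω => ENNReal.toReal_nonneg
    have hDrnn : ∀ δ ω, 0 ≤ Dr δ ω := fun δ ω => ENNReal.toReal_nonneg
    -- extract a point of the Orlicz ball from hfin
    obtain ⟨c0, hc00, hc0t, hc0i⟩ : ∃ c0 : ℝ≥0∞, 0 < c0 ∧ c0 ≠ ∞ ∧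
        ∫⁻ ω, ENNReal.ofReal (Φ (|Msup ω| / c0.toReal)) ∂P ≤ 1 := by
      unfold luxNorm at hfin
      by_contra h
      push_neg at h
      have hempty : {c : ℝ≥0∞ | 0 < c ∧ c ≠ ∞ ∧
          ∫⁻ ω, ENNReal.ofReal (Φ (|Msup ω| / c.toReal)) ∂P ≤ 1} = ∅ := by
        rw [Set.eq_empty_iff_forall_notMem]
        rintro c ⟨hc1, hc2, hc3⟩
        exact absurd (h c hc1 hc2) (not_lt.2 hc3)
      rw [hempty, sInf_empty] at hfin
      exact lt_irrefl _ hfin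
    have hc0r : 0 < c0.toReal := ENNReal.toReal_pos hc00.ne' hc0t
    have hbase : ∫⁻ ω, ENNReal.ofReal (Φ (Mdr ω / c0.toReal)) ∂P ≤ 1 := by
      refine le_trans (lintegral_mono_ae ?_) hc0i
      filter_upwards [hcont] with ω hw
      obtain ⟨h1, -, -, -, -⟩ := hgood ω hw
      have hMle : Mdr ω ≤ |Msup ω| := by
        rw [abs_of_nonneg (hMsupnn ω)]
        calc Mdr ω ≤ (ENNReal.ofReal (Msup ω)).toReal :=
              ENNReal.toReal_mono ENNReal.ofReal_ne_top h1
          _ = Msup ω := ENNReal.toReal_ofReal (hMsupnn ω)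
      exact ENNReal.ofReal_le_ofReal (FCaux.mono_le hΦ
        (div_nonneg (hMdrnn ω) hc0r.le) (by gcongr))
    obtain ⟨C2, K2, hC2, hK2, hCK⟩ := FCaux.delta2_global hΦ hΦ2
    have hpow : ∀ m : ℕ, ∫⁻ ω, ENNReal.ofReal (Φ ((2:ℝ)^m * (Mdr ω / c0.toReal))) ∂P < ∞ := by
      intro m
      induction m with
      | zero =>
        refine lt_of_le_of_lt ?_ (lt_of_le_of_lt hbase (by norm_num))
        refine lintegral_mono fun ω => ?_
        apply ENNReal.ofReal_le_ofReal
        apply le_of_eq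
        norm_num
      | succ m ih =>
        have hmeas' : Measurable fun ω => ENNReal.ofReal (Φ ((2:ℝ)^m * (Mdr ω / c0.toReal))) :=
          ENNReal.measurable_ofReal.comp
            (hΦ.continuous.measurable.comp ((hMdrmeas.div_const _).const_mul _))
        have hptw : ∀ ω, ENNReal.ofReal (Φ ((2:ℝ)^(m+1) * (Mdr ω / c0.toReal))) ≤
            ENNReal.ofReal C2 * ENNReal.ofReal (Φ ((2:ℝ)^m * (Mdr ω / c0.toReal))) +
              ENNReal.ofReal K2 := by
          intro ω
          have harg : (2:ℝ)^(m+1) * (Mdr ω / c0.toReal)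
              = 2 * ((2:ℝ)^m * (Mdr ω / c0.toReal)) := by ring
          rw [harg]
          calc ENNReal.ofReal (Φ (2 * ((2:ℝ)^m * (Mdr ω / c0.toReal))))
              ≤ ENNReal.ofReal (C2 * Φ ((2:ℝ)^m * (Mdr ω / c0.toReal)) + K2) :=
                ENNReal.ofReal_le_ofReal (hCK _
                  (mul_nonneg (by positivity) (div_nonneg (hMdrnn ω) hc0r.le)))
            _ ≤ ENNReal.ofReal (C2 * Φ ((2:ℝ)^m * (Mdr ω / c0.toReal))) +
                ENNReal.ofReal K2 := ENNReal.ofReal_add_le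
            _ = ENNReal.ofReal C2 * ENNReal.ofReal (Φ ((2:ℝ)^m * (Mdr ω / c0.toReal))) +
                ENNReal.ofReal K2 := by rw [ENNReal.ofReal_mul hC2]
        calc ∫⁻ ω, ENNReal.ofReal (Φ ((2:ℝ)^(m+1) * (Mdr ω / c0.toReal))) ∂P
            ≤ ∫⁻ ω, (ENNReal.ofReal C2 *
              ENNReal.ofReal (Φ ((2:ℝ)^m * (Mdr ω / c0.toReal))) + ENNReal.ofReal K2) ∂P :=
              lintegral_mono hptw
          _ = ENNReal.ofReal C2 * (∫⁻ ω, ENNReal.ofReal (Φ ((2:ℝ)^m * (Mdr ω / c0.toReal))) ∂P)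
              + ENNReal.ofReal K2 := by
              rw [lintegral_add_right _ measurable_const, lintegral_const_mul _ hmeas',
                lintegral_const, measure_univ, mul_one]
          _ < ∞ := by
              apply ENNReal.add_lt_top.2
              exact ⟨ENNReal.mul_lt_top ENNReal.ofReal_lt_top ih, ENNReal.ofReal_lt_top⟩
    have hInt2 : ∀ b : ℝ, 0 ≤ b → ∫⁻ ω, ENNReal.ofReal (Φ (b * Mdr ω)) ∂P < ∞ := by
      intro b hb
      obtain ⟨m, hm⟩ : ∃ m : ℕ, b * c0.toReal < 2 ^ m :=
        pow_unbounded_of_one_lt (b * c0.toReal) (by norm_num)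
      refine lt_of_le_of_lt (lintegral_mono fun ω => ?_) (hpow m)
      apply ENNReal.ofReal_le_ofReal
      apply FCaux.mono_le hΦ (mul_nonneg hb (hMdrnn ω))
      have hble : b ≤ 2^m / c0.toReal := by rw [le_div_iff₀ hc0r]; exact hm.le
      calc b * Mdr ω ≤ (2^m / c0.toReal) * Mdr ω :=
            mul_le_mul_of_nonneg_right hble (hMdrnn ω)
        _ = 2^m * (Mdr ω / c0.toReal) := by ring
    have hsmall : ∀ a η β : ℝ, 0 < a → 0 < η → 0 < β →
        ∃ δ, 0 < δ ∧ δ < β ∧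
          ∫⁻ ω, ENNReal.ofReal (Φ (Dr δ ω / a)) ∂P ≤ ENNReal.ofReal η := by
      intro a η β ha hη hβ
      set F : ℕ → Ω → ℝ≥0∞ := fun k ω => ENNReal.ofReal (Φ (Dr (β / ((k:ℝ)+2)) ω / a)) with hF
      have hFmeas : ∀ k, Measurable (F k) := fun k =>
        ENNReal.measurable_ofReal.comp (hΦ.continuous.measurable.comp ((hDrmeas _).div_const a))
      have hbound : ∀ k, F k ≤ᵐ[P] fun ω => ENNReal.ofReal (Φ ((2/a) * Mdr ω)) := by
        intro k
        filter_upwards [hcont] with ω hw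
        obtain ⟨h1, -, -, -, -⟩ := hgood ω hw
        have hMdfin : Md ω ≠ ∞ := (lt_of_le_of_lt h1 ENNReal.ofReal_lt_top).ne
        have hD2M : Dr (β/((k:ℝ)+2)) ω ≤ 2 * Mdr ω := by
          have h' := hDdle (β/((k:ℝ)+2)) ω
          calc Dr _ ω ≤ (2 * Md ω).toReal :=
                ENNReal.toReal_mono (ENNReal.mul_ne_top (by simp) hMdfin) h'
            _ = 2 * Mdr ω := by rw [ENNReal.toReal_mul]; norm_num; rfl
        apply ENNReal.ofReal_le_ofReal
        apply FCaux.mono_le hΦ (div_nonneg (hDrnn _ ω) ha.le)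
        rw [div_mul_eq_mul_div]
        gcongr
      have hfinbound : ∫⁻ ω, ENNReal.ofReal (Φ ((2/a) * Mdr ω)) ∂P ≠ ∞ :=
        (hInt2 (2/a) (by positivity)).ne
      have hlim : ∀ᵐ ω ∂P, Tendsto (fun k => F k ω) atTop (𝓝 ((fun _ => (0:ℝ≥0∞)) ω)) := by
        filter_upwards [hcont] with ω hw
        obtain ⟨-, -, h3, -, -⟩ := hgood ω hw
        have hDr0 : Tendsto (fun k : ℕ => Dr (β/((k:ℝ)+2)) ω) atTop (𝓝 0) := by
          rw [Metric.tendsto_atTop]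
          intro ε hε
          obtain ⟨η', hη', hmc⟩ := FCaux.modCont_small hw (half_pos hε)
          have hβk : Tendsto (fun k : ℕ => β / ((k:ℝ)+2)) atTop (𝓝 0) := by
            apply Tendsto.div_atTop (tendsto_const_nhds)
            exact tendsto_atTop_add_const_right _ 2 tendsto_natCast_atTop_atTop
          obtain ⟨N, hN⟩ := eventually_atTop.1 (hβk.eventually (gt_mem_nhds hη'))
          refine ⟨N, fun k hk => ?_⟩
          have hle : Dr (β/((k:ℝ)+2)) ω ≤ ε/2 :=
            le_trans (h3 _ (by positivity)) (hmc _ (hN k hk))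
          rw [Real.dist_eq, sub_zero, abs_of_nonneg (hDrnn _ ω)]
          linarith
        have hΦ0 : Tendsto (fun k : ℕ => Φ (Dr (β/((k:ℝ)+2)) ω / a)) atTop (𝓝 0) := by
          have hdiv : Tendsto (fun k : ℕ => Dr (β/((k:ℝ)+2)) ω / a) atTop (𝓝 0) := by
            simpa using hDr0.div_const a
          have := (hΦ.continuous.tendsto 0).comp hdiv
          rwa [hΦ.map_zero] at this
        have := ENNReal.tendsto_ofReal hΦ0
        simpa using this
      have hconv := MeasureTheory.tendsto_lintegral_of_dominated_convergence _
        hFmeas hbound hfinbound hlim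
      rw [lintegral_zero] at hconv
      obtain ⟨k, hk⟩ := (hconv.eventually (gt_mem_nhds
        (show (0:ℝ≥0∞) < ENNReal.ofReal η by simpa using hη))).exists
      refine ⟨β/((k:ℝ)+2), by positivity, ?_, hk.le⟩
      rw [div_lt_iff₀ (by positivity)]
      nlinarith
    -- choose the grid
    choose e he0 heβ hei using fun n : ℕ =>
      hsmall ((2:ℝ)⁻¹^n) ((2:ℝ)⁻¹^(n+2)) ((2:ℝ)⁻¹^(n+1))
        (by positivity) (by positivity) (by positivity)
    set d : ℕ → ℝ := fun n => e n / 2 with hd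
    have hd0 : ∀ n, 0 < d n := fun n => half_pos (he0 n)
    have hde : ∀ n, d n < e n := fun n => half_lt_self (he0 n)
    have hdlt : ∀ n, d n < (2:ℝ)⁻¹^(n+2) := by
      intro n
      have h2 := heβ n
      have heq : (2:ℝ)⁻¹^(n+2) = (2:ℝ)⁻¹^(n+1)/2 := by ring
      rw [hd]
      simp only
      linarith
    set T : Ω → ℝ≥0∞ := fun ω => max (2 * Md ω) (⨆ n : ℕ, (2:ℝ≥0∞)^n * Dd (e n) ω) with hT
    have hTmeas : Measurable T :=
      (hMdmeas.const_mul 2).max (Measurable.iSup fun n => (hDdmeas (e n)).const_mul _)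
    set τ' : Ω → ℝ := fun ω => max u₁ (T ω).toReal with hτ'
    have hτ'meas : Measurable τ' := measurable_const.max hTmeas.ennreal_toReal
    have hτ'u₁ : ∀ ω, u₁ ≤ τ' ω := fun ω => le_max_left _ _
    have hτ'nn : ∀ ω, 0 ≤ τ' ω := fun ω => hu₁.le.trans (hτ'u₁ ω)
    set h_ : ℕ → Ω → ℝ≥0∞ := fun n ω => ENNReal.ofReal (Φ ((2:ℝ)^n * Dr (e n) ω)) with hh
    have hhmeas : ∀ n, Measurable (h_ n) := fun n =>
      ENNReal.measurable_ofReal.comp (hΦ.continuous.measurable.comp ((hDrmeas _).const_mul _))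
    have hhint : ∀ n, ∫⁻ ω, h_ n ω ∂P ≤ ENNReal.ofReal ((2:ℝ)⁻¹^(n+2)) := by
      intro n
      refine le_trans (le_of_eq (lintegral_congr fun ω => ?_)) (hei n)
      rw [hh]
      simp only
      congr 2
      have h2 : ((2:ℝ)⁻¹)^n = ((2:ℝ)^n)⁻¹ := by rw [inv_pow]
      rw [h2, div_eq_mul_inv, inv_inv]
      ring
    have hsummable : Summable (fun n : ℕ => (2:ℝ)⁻¹^(n+2)) := by
      have h := (summable_geometric_of_lt_one (by norm_num : (0:ℝ) ≤ 2⁻¹)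
        (by norm_num : (2:ℝ)⁻¹ < 1)).mul_right ((2:ℝ)⁻¹^2)
      refine h.congr fun n => ?_
      rw [← pow_add]
    have hsupμ : ∫⁻ ω, (⨆ n, h_ n ω) ∂P ≤ 1 := by
      have h1 : ∀ ω, (⨆ n, h_ n ω) ≤ ∑' n, h_ n ω := fun ω =>
        iSup_le fun n => ENNReal.le_tsum n
      have hval : ∑' n, (2:ℝ)⁻¹^(n+2) ≤ 1 := by
        have hgeo : ∑' n : ℕ, (2:ℝ)⁻¹^n = 2 := by
          rw [tsum_geometric_of_lt_one (by norm_num) (by norm_num)]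
          norm_num
        have : ∑' n : ℕ, (2:ℝ)⁻¹^(n+2) = (∑' n : ℕ, (2:ℝ)⁻¹^n) * (2:ℝ)⁻¹^2 := by
          rw [← tsum_mul_right]
          congr 1
          funext n
          rw [pow_add]
        rw [this, hgeo]
        norm_num
      calc ∫⁻ ω, (⨆ n, h_ n ω) ∂P ≤ ∫⁻ ω, ∑' n, h_ n ω ∂P := lintegral_mono h1
        _ = ∑' n, ∫⁻ ω, h_ n ω ∂P := lintegral_tsum (fun n => (hhmeas n).aemeasurable)
        _ ≤ ∑' n, ENNReal.ofReal ((2:ℝ)⁻¹^(n+2)) := ENNReal.tsum_le_tsum hhint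
        _ = ENNReal.ofReal (∑' n, (2:ℝ)⁻¹^(n+2)) :=
            (ENNReal.ofReal_tsum_of_nonneg (fun n => by positivity) hsummable).symm
        _ ≤ 1 := by rw [← ENNReal.ofReal_one]; exact ENNReal.ofReal_le_ofReal hval
    have haesup : ∀ᵐ ω ∂P, (⨆ n, h_ n ω) < ∞ :=
      ae_lt_top (Measurable.iSup hhmeas) (lt_of_le_of_lt hsupμ (by norm_num)).ne
    have haeT : ∀ᵐ ω ∂P, T ω < ∞ := by
      filter_upwards [haesup, hcont] with ω hsupω hw
      obtain ⟨h1, -, -, -, -⟩ := hgood ω hw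
      have hMdfin : Md ω ≠ ∞ := (lt_of_le_of_lt h1 ENNReal.ofReal_lt_top).ne
      rw [hT]
      simp only
      refine max_lt ?_ ?_
      · exact ENNReal.mul_lt_top (by norm_num) hMdfin.lt_top
      · obtain ⟨u, hu, hu0⟩ : ∃ u : ℝ, (⨆ n, h_ n ω).toReal < Φ u ∧ 0 ≤ u := by
          obtain ⟨u, h'⟩ := ((hΦ.tendsto_atTop.eventually_gt_atTop
            ((⨆ n, h_ n ω).toReal)).and (eventually_ge_atTop (0:ℝ))).exists
          exact ⟨u, h'.1, h'.2⟩
        have hub : ∀ n, (2:ℝ≥0∞)^n * Dd (e n) ω ≤ ENNReal.ofReal u := by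
          intro n
          have hDdfin : Dd (e n) ω ≠ ∞ :=
            ne_top_of_le_ne_top (ENNReal.mul_ne_top (by simp) hMdfin) (hDdle _ ω)
          have hfin' : (2:ℝ≥0∞)^n * Dd (e n) ω ≠ ∞ := ENNReal.mul_ne_top (by simp) hDdfin
          have htr : ((2:ℝ≥0∞)^n * Dd (e n) ω).toReal = (2:ℝ)^n * Dr (e n) ω := by
            rw [ENNReal.toReal_mul, ENNReal.toReal_pow]
            norm_num; rfl
          by_contra hgt
          push_neg at hgt
          have hlt2 : u < (2:ℝ)^n * Dr (e n) ω := by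
            have := (ENNReal.toReal_lt_toReal ENNReal.ofReal_ne_top hfin').2 hgt
            rwa [ENNReal.toReal_ofReal hu0, htr] at this
          have hΦle : Φ u ≤ Φ ((2:ℝ)^n * Dr (e n) ω) := FCaux.mono_le hΦ hu0 hlt2.le
          have hWle : h_ n ω ≤ ⨆ n, h_ n ω := le_iSup (fun n => h_ n ω) n
          have : Φ ((2:ℝ)^n * Dr (e n) ω) ≤ (⨆ n, h_ n ω).toReal := by
            have h3 : ENNReal.ofReal (Φ ((2:ℝ)^n * Dr (e n) ω)) ≤ ⨆ n, h_ n ω := hWle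
            calc Φ ((2:ℝ)^n * Dr (e n) ω)
                = (ENNReal.ofReal (Φ ((2:ℝ)^n * Dr (e n) ω))).toReal :=
                  (ENNReal.toReal_ofReal (hΦ.nonneg _)).symm
              _ ≤ (⨆ n, h_ n ω).toReal := ENNReal.toReal_mono hsupω.ne h3
          linarith
        calc (⨆ n, (2:ℝ≥0∞)^n * Dd (e n) ω) ≤ ENNReal.ofReal u := iSup_le hub
          _ < ∞ := ENNReal.ofReal_lt_top
    have htr : ∀ (n : ℕ) (ω : Ω),
        ((2:ℝ≥0∞)^n * Dd (e n) ω).toReal = (2:ℝ)^n * Dr (e n) ω := by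
      intro n ω
      rw [ENNReal.toReal_mul, ENNReal.toReal_pow]
      norm_num; rfl
    have hmaxΦ : ∀ a b : ℝ, 0 ≤ a → 0 ≤ b → Φ (max a b) ≤ Φ a + Φ b := by
      intro a b ha hb
      rcases max_cases a b with ⟨h, -⟩ | ⟨h, -⟩ <;> rw [h] <;>
        [linarith [hΦ.nonneg b]; linarith [hΦ.nonneg a]]
    have haemod : ∀ᵐ ω ∂P, ENNReal.ofReal (Φ (τ' ω)) ≤
        ENNReal.ofReal (Φ u₁) + (ENNReal.ofReal (Φ (2 * Mdr ω)) + ⨆ n, h_ n ω) := by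
      filter_upwards [haesup, haeT, hcont] with ω hsupω hTω hw
      obtain ⟨hg1, -, -, -, -⟩ := hgood ω hw
      have hMdfin : Md ω ≠ ∞ := (lt_of_le_of_lt hg1 ENNReal.ofReal_lt_top).ne
      have hstep1 : Φ (τ' ω) ≤ Φ u₁ + Φ ((T ω).toReal) :=
        hmaxΦ _ _ hu₁.le ENNReal.toReal_nonneg
      set S := ⨆ n : ℕ, (2:ℝ≥0∞)^n * Dd (e n) ω with hS
      have hSleT : S ≤ T ω := by rw [hT]; exact le_max_right _ _
      have hSfin : S ≠ ∞ := ne_top_of_le_ne_top hTω.ne hSleT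
      have hA : (2 * Md ω).toReal = 2 * Mdr ω := by
        rw [ENNReal.toReal_mul]; norm_num; rfl
      have hTtoReal : (T ω).toReal = max (2 * Mdr ω) S.toReal := by
        rw [hT]
        simp only
        rcases le_total (2 * Md ω) S with h | h
        · rw [max_eq_right h, max_eq_right]
          exact le_trans (le_of_eq hA.symm) (ENNReal.toReal_mono hSfin h)
        · rw [max_eq_left h, hA, max_eq_left]
          have hAfin : 2 * Md ω ≠ ∞ := ENNReal.mul_ne_top (by simp) hMdfin
          exact le_trans (ENNReal.toReal_mono hAfin h) (le_of_eq hA)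
      -- bound on the sup part
      have hxfin : ∀ n, (2:ℝ≥0∞)^n * Dd (e n) ω ≠ ∞ := by
        intro n
        have hDdfin : Dd (e n) ω ≠ ∞ :=
          ne_top_of_le_ne_top (ENNReal.mul_ne_top (by simp) hMdfin) (hDdle _ ω)
        exact ENNReal.mul_ne_top (by simp) hDdfin
      have hStr : S.toReal = ⨆ n, (2:ℝ)^n * Dr (e n) ω := by
        rw [hS, ENNReal.toReal_iSup hxfin]
        congr 1
        funext n
        exact htr n ω
      have hbnn : ∀ n, 0 ≤ (2:ℝ)^n * Dr (e n) ω := fun n =>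
        mul_nonneg (by positivity) (hDrnn _ _)
      have hsupnn : (0:ℝ) ≤ ⨆ n, (2:ℝ)^n * Dr (e n) ω := Real.iSup_nonneg hbnn
      have hbdd : BddAbove (Set.range fun n => (2:ℝ)^n * Dr (e n) ω) := by
        refine ⟨S.toReal, ?_⟩
        rintro r ⟨n, rfl⟩
        show (2:ℝ)^n * Dr (e n) ω ≤ S.toReal
        rw [← htr n ω]
        exact ENNReal.toReal_mono hSfin
          (le_trans (le_iSup (fun n => (2:ℝ≥0∞)^n * Dd (e n) ω) n) (le_of_eq hS.symm))
      set Ψ : ℝ → ℝ := fun t => Φ (max t 0) with hΨ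
      have hΨmono : Monotone Ψ := fun a b hab =>
        FCaux.mono_le hΦ (le_max_right a 0) (max_le_max hab le_rfl)
      have hΨcont : Continuous Ψ := hΦ.continuous.comp (continuous_id.max continuous_const)
      have hmap : Ψ (⨆ n, (2:ℝ)^n * Dr (e n) ω) = ⨆ n, Ψ ((2:ℝ)^n * Dr (e n) ω) :=
        Monotone.map_ciSup_of_continuousAt hΨcont.continuousAt hΨmono hbdd
      have hφS : Φ S.toReal = ⨆ n, Φ ((2:ℝ)^n * Dr (e n) ω) := by
        rw [hStr]
        conv_lhs => rw [← max_eq_left hsupnn]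
        rw [show Φ (max (⨆ n, (2:ℝ)^n * Dr (e n) ω) 0) = Ψ (⨆ n, (2:ℝ)^n * Dr (e n) ω) from rfl,
          hmap]
        congr 1
        funext n
        rw [hΨ]
        simp only
        rw [max_eq_left (hbnn n)]
      set R := (⨆ n, h_ n ω) with hR
      have hRfin : R ≠ ∞ := hsupω.ne
      have hle' : ∀ n, Φ ((2:ℝ)^n * Dr (e n) ω) ≤ R.toReal := by
        intro n
        have hnR : ENNReal.ofReal (Φ ((2:ℝ)^n * Dr (e n) ω)) ≤ R :=
          le_iSup (fun n => h_ n ω) n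
        calc Φ ((2:ℝ)^n * Dr (e n) ω)
            = (ENNReal.ofReal (Φ ((2:ℝ)^n * Dr (e n) ω))).toReal :=
              (ENNReal.toReal_ofReal (hΦ.nonneg _)).symm
          _ ≤ R.toReal := ENNReal.toReal_mono hRfin hnR
      have hSbound : ENNReal.ofReal (Φ S.toReal) ≤ R := by
        rw [hφS]
        calc ENNReal.ofReal (⨆ n, Φ ((2:ℝ)^n * Dr (e n) ω))
            ≤ ENNReal.ofReal R.toReal :=
              ENNReal.ofReal_le_ofReal (Real.iSup_le hle' ENNReal.toReal_nonneg)
          _ = R := ENNReal.ofReal_toReal hRfin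
      calc ENNReal.ofReal (Φ (τ' ω))
          ≤ ENNReal.ofReal (Φ u₁ + Φ ((T ω).toReal)) := ENNReal.ofReal_le_ofReal hstep1
        _ ≤ ENNReal.ofReal (Φ u₁) + ENNReal.ofReal (Φ ((T ω).toReal)) := ENNReal.ofReal_add_le
        _ ≤ ENNReal.ofReal (Φ u₁) + (ENNReal.ofReal (Φ (2 * Mdr ω)) + ⨆ n, h_ n ω) := by
            apply add_le_add_right
            rw [hTtoReal]
            calc ENNReal.ofReal (Φ (max (2 * Mdr ω) S.toReal))
                ≤ ENNReal.ofReal (Φ (2 * Mdr ω) + Φ S.toReal) :=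
                  ENNReal.ofReal_le_ofReal
                    (hmaxΦ _ _ (by positivity) ENNReal.toReal_nonneg)
              _ ≤ ENNReal.ofReal (Φ (2 * Mdr ω)) + ENNReal.ofReal (Φ S.toReal) :=
                  ENNReal.ofReal_add_le
              _ ≤ ENNReal.ofReal (Φ (2 * Mdr ω)) + ⨆ n, h_ n ω :=
                  add_le_add_right hSbound _
    have hτ'int : Measurable fun ω => ENNReal.ofReal (Φ (τ' ω)) :=
      ENNReal.measurable_ofReal.comp (hΦ.continuous.measurable.comp hτ'meas)
    have hmid : Measurable fun ω => ENNReal.ofReal (Φ (2 * Mdr ω)) :=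
      ENNReal.measurable_ofReal.comp (hΦ.continuous.measurable.comp (hMdrmeas.const_mul 2))
    have hmodfin : ∫⁻ ω, ENNReal.ofReal (Φ (τ' ω)) ∂P < ∞ := by
      calc ∫⁻ ω, ENNReal.ofReal (Φ (τ' ω)) ∂P
          ≤ ∫⁻ ω, (ENNReal.ofReal (Φ u₁) +
            (ENNReal.ofReal (Φ (2 * Mdr ω)) + ⨆ n, h_ n ω)) ∂P := lintegral_mono_ae haemod
        _ = ENNReal.ofReal (Φ u₁) +
            (∫⁻ ω, (ENNReal.ofReal (Φ (2 * Mdr ω)) + ⨆ n, h_ n ω) ∂P) := by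
            rw [lintegral_add_left measurable_const, lintegral_const, measure_univ, mul_one]
        _ = ENNReal.ofReal (Φ u₁) + ((∫⁻ ω, ENNReal.ofReal (Φ (2 * Mdr ω)) ∂P) +
            ∫⁻ ω, (⨆ n, h_ n ω) ∂P) := by rw [lintegral_add_left hmid]
        _ < ∞ := by
            apply ENNReal.add_lt_top.2
            refine ⟨ENNReal.ofReal_lt_top, ENNReal.add_lt_top.2 ⟨?_, ?_⟩⟩
            · exact hInt2 2 (by norm_num)
            · exact lt_of_le_of_lt hsupμ (by norm_num)
    set I := ∫⁻ ω, ENNReal.ofReal (Φ (τ' ω)) ∂P with hI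
    set k : ℕ := max 1 ⌈I.toReal⌉₊ with hk
    have hk1 : 1 ≤ k := le_max_left _ _
    have hkr : (1:ℝ) ≤ (k:ℝ) := by exact_mod_cast hk1
    have hkr0 : (0:ℝ) < (k:ℝ) := by linarith
    have hIk : I ≤ (k:ℝ≥0∞) := by
      rw [← ENNReal.ofReal_toReal hmodfin.ne]
      calc ENNReal.ofReal I.toReal ≤ ENNReal.ofReal (k:ℝ) := by
            apply ENNReal.ofReal_le_ofReal
            calc I.toReal ≤ (⌈I.toReal⌉₊ : ℝ) := Nat.le_ceil _
              _ ≤ (k:ℝ) := by exact_mod_cast le_max_right 1 ⌈I.toReal⌉₊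
        _ = (k:ℝ≥0∞) := ENNReal.ofReal_natCast k
    have hmem : (k:ℝ≥0∞) ∈ {c : ℝ≥0∞ | 0 < c ∧ c ≠ ∞ ∧
        ∫⁻ ω, ENNReal.ofReal (Φ (|τ' ω| / c.toReal)) ∂P ≤ 1} := by
      refine ⟨by exact_mod_cast lt_of_lt_of_le Nat.zero_lt_one hk1,
        ENNReal.natCast_ne_top k, ?_⟩
      have hptw : ∀ ω, ENNReal.ofReal (Φ (|τ' ω| / ((k:ℝ≥0∞)).toReal)) ≤
          ENNReal.ofReal (1/(k:ℝ)) * ENNReal.ofReal (Φ (τ' ω)) := by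
        intro ω
        rw [ENNReal.toReal_natCast, abs_of_nonneg (hτ'nn ω)]
        have h1 : τ' ω / (k:ℝ) = (1/(k:ℝ)) * τ' ω := by ring
        rw [h1, ← ENNReal.ofReal_mul (by positivity)]
        refine ENNReal.ofReal_le_ofReal (FCaux.smul_le hΦ (by positivity) ?_ _)
        rw [div_le_one hkr0]
        exact hkr
      calc ∫⁻ ω, ENNReal.ofReal (Φ (|τ' ω| / ((k:ℝ≥0∞)).toReal)) ∂P
          ≤ ∫⁻ ω, ENNReal.ofReal (1/(k:ℝ)) * ENNReal.ofReal (Φ (τ' ω)) ∂P :=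
            lintegral_mono hptw
        _ = ENNReal.ofReal (1/(k:ℝ)) * I := by rw [lintegral_const_mul _ hτ'int]
        _ ≤ ENNReal.ofReal (1/(k:ℝ)) * (k:ℝ≥0∞) := mul_le_mul_right hIk _
        _ = ENNReal.ofReal ((1/(k:ℝ)) * (k:ℝ)) := by
            rw [← ENNReal.ofReal_natCast k, ← ENNReal.ofReal_mul (by positivity)]
        _ = 1 := by
            rw [one_div, inv_mul_cancel₀ (ne_of_gt hkr0), ENNReal.ofReal_one]
    have hluxfin : luxNorm P Φ τ' ≠ ∞ := by
      have hle : luxNorm P Φ τ' ≤ (k:ℝ≥0∞) := sInf_le hmem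
      exact ne_top_of_le_ne_top (ENNReal.natCast_ne_top k) hle
    have hlux1 : 1 ≤ luxNorm P Φ τ' := by
      unfold luxNorm
      refine le_sInf fun c hc => ?_
      obtain ⟨hc0, hct, hci⟩ := hc
      have hctr : 0 < c.toReal := ENNReal.toReal_pos hc0.ne' hct
      have hconst : ENNReal.ofReal (Φ (u₁ / c.toReal)) ≤ 1 := by
        calc ENNReal.ofReal (Φ (u₁ / c.toReal))
            = ∫⁻ _, ENNReal.ofReal (Φ (u₁ / c.toReal)) ∂P := by
              rw [lintegral_const, measure_univ, mul_one]
          _ ≤ ∫⁻ ω, ENNReal.ofReal (Φ (|τ' ω| / c.toReal)) ∂P := by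
              refine lintegral_mono fun ω => ENNReal.ofReal_le_ofReal
                (FCaux.mono_le hΦ (by positivity) ?_)
              rw [abs_of_nonneg (hτ'nn ω)]
              gcongr
              exact hτ'u₁ ω
          _ ≤ 1 := hci
      have hle : Φ (u₁ / c.toReal) ≤ 1 := ENNReal.ofReal_le_one.1 hconst
      have h2 : u₁ / c.toReal ≤ u₁ := hlt' _ _ (by positivity) hu₁.le (by rw [hΦ1]; exact hle)
      have h3 : (1:ℝ) ≤ c.toReal := by
        rw [div_le_iff₀ hctr] at h2
        nlinarith
      calc (1:ℝ≥0∞) = ENNReal.ofReal 1 := ENNReal.ofReal_one.symm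
        _ ≤ ENNReal.ofReal c.toReal := ENNReal.ofReal_le_ofReal h3
        _ = c := ENNReal.ofReal_toReal hct
    set N : ℝ := (luxNorm P Φ τ').toReal with hN
    have hN0 : luxNorm P Φ τ' ≠ 0 := by
      intro h
      rw [h] at hlux1
      exact absurd hlux1 (by simp)
    have hNpos : 0 < N := ENNReal.toReal_pos hN0 hluxfin
    set τ₀ : Ω → ℝ := fun ω => τ' ω / N with hτ₀
    have hluxτ₀ : luxNorm P Φ τ₀ = 1 := FCaux.luxNorm_normalize P Φ τ' hlux1 hluxfin
    -- the scaling function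
    set g₀ : ℝ → ℝ := fun δ => ∑' n, (2:ℝ)⁻¹^n * min 1 (max 0 (δ / d n)) with hg₀
    have hterm_nonneg : ∀ n (δ : ℝ), 0 ≤ (2:ℝ)⁻¹^n * min 1 (max 0 (δ / d n)) := by
      intro n δ
      apply mul_nonneg (by positivity)
      exact le_min (by norm_num) (le_max_left _ _)
    have hterm_le : ∀ n (δ : ℝ), (2:ℝ)⁻¹^n * min 1 (max 0 (δ / d n)) ≤ (2:ℝ)⁻¹^n := by
      intro n δ
      calc (2:ℝ)⁻¹^n * min 1 (max 0 (δ / d n)) ≤ (2:ℝ)⁻¹^n * 1 := by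
            apply mul_le_mul_of_nonneg_left (min_le_left _ _) (by positivity)
        _ = (2:ℝ)⁻¹^n := mul_one _
    have hgeo_summ : Summable (fun n : ℕ => (2:ℝ)⁻¹^n) :=
      summable_geometric_of_lt_one (by norm_num) (by norm_num)
    have hg₀summ : ∀ δ : ℝ, Summable (fun n => (2:ℝ)⁻¹^n * min 1 (max 0 (δ / d n))) := by
      intro δ
      exact Summable.of_nonneg_of_le (fun n => hterm_nonneg n δ) (fun n => hterm_le n δ) hgeo_summ
    have hg₀cont : Continuous g₀ := by
      rw [hg₀]
      apply continuous_tsum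
      · intro n
        apply continuous_const.mul
        exact continuous_const.min (continuous_const.max (continuous_id.div_const _))
      · exact hgeo_summ
      · intro n δ
        rw [Real.norm_eq_abs, abs_of_nonneg (hterm_nonneg n δ)]
        exact hterm_le n δ
    have hg₀mono : Monotone g₀ := by
      intro a b hab
      refine Summable.tsum_le_tsum (fun n => ?_) (hg₀summ a) (hg₀summ b)
      apply mul_le_mul_of_nonneg_left _ (by positivity)
      apply min_le_min le_rfl
      apply max_le_max le_rfl
      gcongr
      exact (hd0 n).le
    have hg₀nonneg : ∀ δ, 0 ≤ g₀ δ := fun δ => tsum_nonneg (fun n => hterm_nonneg n δ)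
    have hg₀zero : g₀ 0 = 0 := by
      rw [hg₀]
      simp
    have hg₀ge : ∀ (n : ℕ) (δ : ℝ), d n ≤ δ → (2:ℝ)⁻¹^n ≤ g₀ δ := by
      intro n δ hdδ
      have hterm : (2:ℝ)⁻¹^n * min 1 (max 0 (δ / d n)) = (2:ℝ)⁻¹^n := by
        have h1 : (1:ℝ) ≤ δ / d n := (one_le_div (hd0 n)).2 hdδ
        rw [max_eq_right (le_trans zero_le_one h1), min_eq_left h1, mul_one]
      calc (2:ℝ)⁻¹^n = (2:ℝ)⁻¹^n * min 1 (max 0 (δ / d n)) := hterm.symm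
        _ ≤ g₀ δ := Summable.le_tsum (hg₀summ δ) n (fun m _ => hterm_nonneg m δ)
    set g : ℝ → ℝ := fun δ => N * (4 * g₀ δ) with hgdef
    refine ⟨g, τ₀, ⟨?_, ?_, ?_, ?_⟩, hτ'meas.div_const N, fun ω => div_nonneg (hτ'nn ω) hNpos.le,
      hluxτ₀, ?_⟩
    · exact ((continuous_const.mul (continuous_const.mul hg₀cont))).continuousOn
    · intro δ _
      exact mul_nonneg hNpos.le (mul_nonneg (by norm_num) (hg₀nonneg δ))
    · refine Monotone.monotoneOn ?_ _
      intro a b hab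
      have := hg₀mono hab
      have h4 : (4:ℝ) * g₀ a ≤ 4 * g₀ b := by linarith
      exact mul_le_mul_of_nonneg_left h4 hNpos.le
    · rw [hgdef]
      simp [hg₀zero]
    · -- the principal almost-sure estimate
      filter_upwards [hcont, haeT] with ω hw hTω
      obtain ⟨hG1, hG2, hG3, hG4, hG5⟩ := hgood ω hw
      have hkey1 : ∀ n : ℕ, (2:ℝ)^n * Dr (e n) ω ≤ τ' ω := by
        intro n
        have hx : (2:ℝ≥0∞)^n * Dd (e n) ω ≤ T ω := by
          rw [hT]
          exact le_trans (le_iSup (fun n => (2:ℝ≥0∞)^n * Dd (e n) ω) n) (le_max_right _ _)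
        calc (2:ℝ)^n * Dr (e n) ω = ((2:ℝ≥0∞)^n * Dd (e n) ω).toReal := (htr n ω).symm
          _ ≤ (T ω).toReal := ENNReal.toReal_mono hTω.ne hx
          _ ≤ τ' ω := le_max_right _ _
      have hkey2 : 2 * Mdr ω ≤ τ' ω := by
        have hx : 2 * Md ω ≤ T ω := by rw [hT]; exact le_max_left _ _
        have hA : (2 * Md ω).toReal = 2 * Mdr ω := by rw [ENNReal.toReal_mul]; norm_num; rfl
        calc 2 * Mdr ω = (2 * Md ω).toReal := hA.symm
          _ ≤ (T ω).toReal := ENNReal.toReal_mono hTω.ne hx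
          _ ≤ τ' ω := le_max_right _ _
      intro δ hδ
      have hτ₀g : τ₀ ω * g δ = τ' ω * (4 * g₀ δ) := by
        rw [hτ₀, hgdef]
        field_simp
      rcases eq_or_lt_of_le hδ.1 with h0 | h0
      · rw [← h0, FCaux.modCont_zero]
        have hgz : g 0 = 0 := by rw [hgdef]; simp [hg₀zero]
        rw [hgz, mul_zero]
      · rw [hτ₀g]
        have hex : ∃ m, d m < δ := by
          obtain ⟨m, hm'⟩ := exists_pow_lt_of_lt_one h0 (by norm_num : (2:ℝ)⁻¹ < 1)
          refine ⟨m, lt_trans (hdlt m) (lt_of_le_of_lt ?_ hm')⟩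
          exact pow_le_pow_of_le_one (by norm_num) (by norm_num) (by omega)
        obtain ⟨m₀, hm₀lt, hm₀min'⟩ := FCaux.exists_min_nat hex
        have hm₀min : ∀ j, j < m₀ → δ ≤ d j := fun j hj => le_of_not_gt (hm₀min' j hj)
        rcases m₀ with _ | n
        · -- top case: d 0 < δ
          have hd0δ : d 0 < δ := hm₀lt
          have hbd : modCont (fun x => ξ x ω) δ ≤ τ' ω := by
            calc modCont (fun x => ξ x ω) δ ≤ 2 * Msup ω := hG5 δ
              _ ≤ 2 * Mdr ω := by linarith
              _ ≤ τ' ω := hkey2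
          have hgge : (1:ℝ) ≤ 4 * g₀ δ := by
            have := hg₀ge 0 δ hd0δ.le
            simp only [pow_zero] at this
            linarith
          calc modCont (fun x => ξ x ω) δ ≤ τ' ω := hbd
            _ = τ' ω * 1 := (mul_one _).symm
            _ ≤ τ' ω * (4 * g₀ δ) := mul_le_mul_of_nonneg_left hgge (hτ'nn ω)
        · -- intermediate case
          have hfind' : d (n + 1) < δ := hm₀lt
          have hδdn : δ ≤ d n := hm₀min n (Nat.lt_succ_self n)
          have hbd1 : modCont (fun x => ξ x ω) δ ≤ Dr (e n) ω :=
            hG4 δ (e n) hδ.1 (lt_of_le_of_lt hδdn (hde n))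
          have h2n : (0:ℝ) < 2^n := by positivity
          have hbd2 : Dr (e n) ω ≤ (2:ℝ)⁻¹^n * τ' ω := by
            have hk := hkey1 n
            rw [inv_pow]
            rw [inv_mul_eq_div, le_div_iff₀ h2n]
            linarith
          have hgge : (2:ℝ)⁻¹^n ≤ 4 * g₀ δ := by
            have hge := hg₀ge (n+1) δ hfind'.le
            have hps : (2:ℝ)⁻¹^n = 2 * (2:ℝ)⁻¹^(n+1) := by
              rw [pow_succ]
              ring
            have hpn : (0:ℝ) ≤ (2:ℝ)⁻¹^(n+1) := by positivity
            linarith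
          calc modCont (fun x => ξ x ω) δ ≤ Dr (e n) ω := hbd1
            _ ≤ (2:ℝ)⁻¹^n * τ' ω := hbd2
            _ = τ' ω * (2:ℝ)⁻¹^n := mul_comm _ _
            _ ≤ τ' ω * (4 * g₀ δ) := mul_le_mul_of_nonneg_left hgge (hτ'nn ω)
end

section
/- Let (X,d) be a compact metric space and let ξ = ξ(x,ω) be a jointly measurable random field on X defined on a probability space (Ω,B,P) whose sample paths are almost surely continuous. Let Φ be an Orlicz function (not necessarily satisfying the Δ₂ condition) such that the Luxemburg norm ‖ sup_{x∈X} |ξ(x)| ‖_Φ is finite, and let Ψ be another Orlicz function that is weaker than Φ. Then there exist a scaling function h on [0, diam(X)] (depending on Φ and Ψ) and a non-negative random variable ζ with ‖ζ‖_Ψ = 1 such that, almost surely, Δ(ξ(·,ω), δ) ≤ ζ(ω) · h(δ) for every δ ∈ [0, diam(X)]. -/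
open MeasureTheory Filter Set
open scoped ENNReal NNReal

namespace IsOrliczFunction

variable {Ψ : ℝ → ℝ} (hΨ : IsOrliczFunction Ψ)

lemma mono' (hΨ : IsOrliczFunction Ψ) {a b : ℝ} (ha : 0 ≤ a) (hab : a ≤ b) : Ψ a ≤ Ψ b :=
  hΨ.strictMonoOn.monotoneOn ha (ha.trans hab) hab

lemma pos (hΨ : IsOrliczFunction Ψ) {u : ℝ} (hu : 0 < u) : 0 < Ψ u := by
  have := hΨ.strictMonoOn (self_mem_Ici) (le_of_lt hu : (0:ℝ) ≤ u) hu
  simpa [hΨ.map_zero] using this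

lemma exists_small (hΨ : IsOrliczFunction Ψ) {ε : ℝ} (hε : 0 < ε) :
    ∃ t : ℝ, 0 < t ∧ t ≤ 1 ∧ Ψ t ≤ ε := by
  have hc : Tendsto Ψ (nhds 0) (nhds 0) := by
    simpa [hΨ.map_zero] using hΨ.continuous.tendsto 0
  have := (hc.eventually_lt_const hε)
  rw [Metric.eventually_nhds_iff] at this
  obtain ⟨η, hη, hball⟩ := this
  refine ⟨min (η/2) 1, by positivity, min_le_right _ _, ?_⟩
  have : dist (min (η/2) 1) (0:ℝ) < η := by
    rw [Real.dist_eq, sub_zero, abs_of_pos (by positivity)]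
    calc min (η/2) 1 ≤ η/2 := min_le_left _ _
    _ < η := by linarith
  exact (hball this).le

lemma exists_big (hΨ : IsOrliczFunction Ψ) : ∃ u : ℝ, 1 ≤ u ∧ 1 < Ψ u := by
  obtain ⟨u, hu⟩ := ((hΨ.tendsto_atTop.eventually_ge_atTop 2).and (eventually_ge_atTop 1)).exists
  exact ⟨u, hu.2, by linarith [hu.1]⟩

lemma exists_eq_one (hΨ : IsOrliczFunction Ψ) : ∃ t : ℝ, 0 < t ∧ Ψ t = 1 := by
  obtain ⟨u, hu1, hu⟩ := hΨ.exists_big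
  have h01 : (1:ℝ) ∈ Set.Icc (Ψ 0) (Ψ u) := ⟨by rw [hΨ.map_zero]; norm_num, hu.le⟩
  obtain ⟨t, ht, hΨt⟩ := intermediate_value_Icc (by linarith : (0:ℝ) ≤ u) hΨ.continuous.continuousOn h01
  refine ⟨t, lt_of_le_of_ne ht.1 ?_, hΨt⟩
  rintro rfl
  rw [hΨ.map_zero] at hΨt
  norm_num at hΨt

/-- Key sup-sum lemma. -/
lemma ofReal_iSup_le (hΨ : IsOrliczFunction Ψ) (g : ℕ → ℝ≥0∞) (hfin : (⨆ n, g n) ≠ ∞) :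
    ENNReal.ofReal (Ψ ((⨆ n, g n).toReal)) ≤ ∑' n, ENNReal.ofReal (Ψ ((g n).toReal)) := by
  have hg : ∀ n, g n ≠ ∞ := fun n => ne_top_of_le_ne_top hfin (le_iSup g n)
  set r : ℕ → ℝ := fun n => (g n).toReal with hr
  have hrnn : ∀ n, 0 ≤ r n := fun n => ENNReal.toReal_nonneg
  have hrb : BddAbove (Set.range r) := by
    refine ⟨(⨆ n, g n).toReal, ?_⟩
    rintro _ ⟨n, rfl⟩
    exact ENNReal.toReal_mono hfin (le_iSup g n)
  have h1 : (⨆ n, g n).toReal = ⨆ n, r n := ENNReal.toReal_iSup hg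
  set Ψ' : ℝ → ℝ := fun t => Ψ (max t 0) with hΨ'
  have hmono : Monotone Ψ' := fun a b hab =>
    hΨ.mono' (le_max_right a 0) (max_le_max hab le_rfl)
  have hcont : Continuous Ψ' := hΨ.continuous.comp (continuous_id.max continuous_const)
  have h2 : Ψ' (⨆ n, r n) = ⨆ n, Ψ' (r n) :=
    hmono.map_ciSup_of_continuousAt hcont.continuousAt hrb
  have h3 : ∀ n, Ψ' (r n) = Ψ (r n) := fun n => by simp only [hΨ']; rw [sup_eq_left.mpr (hrnn n)]
  have hbΨ : BddAbove (Set.range fun n => Ψ' (r n)) := by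
    obtain ⟨M, hM⟩ := hrb
    refine ⟨Ψ' M, ?_⟩
    rintro _ ⟨n, rfl⟩
    exact hmono (hM ⟨n, rfl⟩)
  have h4 : ENNReal.ofReal (⨆ n, Ψ' (r n)) = ⨆ n, ENNReal.ofReal (Ψ' (r n)) :=
    Monotone.map_ciSup_of_continuousAt (f := ENNReal.ofReal)
      ENNReal.continuous_ofReal.continuousAt (fun a b h => ENNReal.ofReal_le_ofReal h) hbΨ
  calc ENNReal.ofReal (Ψ ((⨆ n, g n).toReal))
      = ENNReal.ofReal (Ψ' (⨆ n, r n)) := by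
        simp only [h1, hΨ']
        rw [sup_eq_left.mpr (le_ciSup_of_le hrb 0 (hrnn 0))]
    _ = ⨆ n, ENNReal.ofReal (Ψ' (r n)) := by rw [h2, h4]
    _ ≤ ∑' n, ENNReal.ofReal (Ψ ((g n).toReal)) := by
        refine iSup_le fun n => ?_
        rw [h3]
        exact ENNReal.le_tsum n

end IsOrliczFunction

lemma luxNorm_const_eq_one {Ω : Type*} [MeasurableSpace Ω] (P : Measure Ω) [IsProbabilityMeasure P]
    {Ψ : ℝ → ℝ} (hΨ : IsOrliczFunction Ψ) {t : ℝ} (ht : 0 < t) (ht1 : Ψ t = 1) :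
    luxNorm P Ψ (fun _ => t) = 1 := by
  have habs : |t| = t := abs_of_pos ht
  refine le_antisymm ?_ ?_
  · refine sInf_le ⟨one_pos, ENNReal.one_ne_top, ?_⟩
    simp only [habs, ENNReal.toReal_one, div_one, lintegral_const, measure_univ, mul_one, ht1]
    simp
  · refine le_sInf fun c hc => ?_
    obtain ⟨hc0, hcT, hcI⟩ := hc
    by_contra hlt
    push_neg at hlt
    have hctr : 0 < c.toReal := ENNReal.toReal_pos hc0.ne' hcT
    have hct1 : c.toReal < 1 := by
      have := ENNReal.toReal_mono ENNReal.one_ne_top hlt.le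
      simp only [ENNReal.toReal_one] at this
      rcases lt_or_eq_of_le this with h | h
      · exact h
      · exact absurd (by rw [← ENNReal.ofReal_toReal hcT, h]; simp : c = 1) hlt.ne
    have harg : t < t / c.toReal := by
      rw [lt_div_iff₀ hctr]
      nlinarith
    have hmono := hΨ.strictMonoOn (le_of_lt ht : (0:ℝ) ≤ t)
      (by positivity : (0:ℝ) ≤ t / c.toReal) harg
    rw [ht1] at hmono
    rw [show (fun ω : Ω => ENNReal.ofReal (Ψ (|t| / c.toReal))) = fun _ : Ω => ENNReal.ofReal (Ψ (t / c.toReal)) by simp [habs]] at hcI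
    rw [lintegral_const, measure_univ, mul_one] at hcI
    have : (1:ℝ≥0∞) < ENNReal.ofReal (Ψ (t / c.toReal)) := by
      rw [← ENNReal.ofReal_one]
      exact ENNReal.ofReal_lt_ofReal_iff_of_nonneg (by norm_num) |>.mpr hmono
    exact absurd hcI (not_le.mpr this)

lemma luxNorm_div_self {Ω : Type*} [MeasurableSpace Ω] (P : Measure Ω)
    {Ψ : ℝ → ℝ} (ζ : Ω → ℝ)
    (h0 : luxNorm P Ψ ζ ≠ 0) (htop : luxNorm P Ψ ζ ≠ ∞) :
    luxNorm P Ψ (fun ω => ζ ω / (luxNorm P Ψ ζ).toReal) = 1 := by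
  set L := luxNorm P Ψ ζ with hL
  have hLr : 0 < L.toReal := ENNReal.toReal_pos h0 htop
  have key : ∀ c : ℝ≥0∞, c ≠ ∞ →
      (fun ω => ENNReal.ofReal (Ψ (|ζ ω / L.toReal| / c.toReal)))
      = fun ω => ENNReal.ofReal (Ψ (|ζ ω| / (L * c).toReal)) := by
    intro c hctop
    funext ω
    rw [abs_div, abs_of_pos hLr, ENNReal.toReal_mul, div_div]
  refine le_antisymm ?_ ?_
  · -- sInf ≤ 1
    refine le_of_forall_gt_imp_ge_of_dense fun b hb => ?_
    rcases eq_or_ne b ∞ with rfl | hbT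
    · exact le_top
    have hLb : L < L * b := by
      conv_lhs => rw [← mul_one L]
      exact (ENNReal.mul_lt_mul_iff_right h0 htop).mpr hb
    have : sInf {c : ℝ≥0∞ | 0 < c ∧ c ≠ ∞ ∧
        ∫⁻ ω, ENNReal.ofReal (Ψ (|ζ ω| / c.toReal)) ∂P ≤ 1} < L * b := hLb
    obtain ⟨s, hs, hsb⟩ := sInf_lt_iff.mp this
    obtain ⟨hs0, hsT, hsI⟩ := hs
    have hmem : (s / L) ∈ {c : ℝ≥0∞ | 0 < c ∧ c ≠ ∞ ∧
        ∫⁻ ω, ENNReal.ofReal (Ψ (|ζ ω / L.toReal| / c.toReal)) ∂P ≤ 1} := by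
      refine ⟨ENNReal.div_pos hs0.ne' htop, (ENNReal.div_lt_top hsT h0).ne, ?_⟩
      rw [key (s / L) ((ENNReal.div_lt_top hsT h0).ne), ENNReal.mul_div_cancel h0 htop]
      exact hsI
    refine le_trans (sInf_le hmem) ?_
    rw [ENNReal.div_le_iff h0 htop, mul_comm]
    exact hsb.le
  · -- 1 ≤ sInf
    refine le_sInf fun c hc => ?_
    obtain ⟨hc0, hcT, hcI⟩ := hc
    rw [key c hcT] at hcI
    have hmem : L ≤ L * c := by
      refine sInf_le ?_
      exact ⟨ENNReal.mul_pos h0 hc0.ne', ENNReal.mul_ne_top htop hcT, hcI⟩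
    have := (ENNReal.mul_le_mul_iff_right h0 htop).mp (by rwa [mul_one] : L * 1 ≤ L * c)
    exact this

set_option maxHeartbeats 2000000 in
theorem factorable_continuity_orlicz_general
    {X Ω : Type*} [MetricSpace X] [CompactSpace X]
    [MeasurableSpace X] [BorelSpace X] [MeasurableSpace Ω]
    (P : Measure Ω) [IsProbabilityMeasure P]
    (ξ : X → Ω → ℝ)
    (hmeas : Measurable fun p : X × Ω => ξ p.1 p.2)
    (hcont : ∀ᵐ ω ∂P, Continuous fun x => ξ x ω)
    (Φ Ψ : ℝ → ℝ) (hΦ : IsOrliczFunction Φ) (hΨ : IsOrliczFunction Ψ)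
    (hweak : OrliczWeaker Ψ Φ)
    (hfin : luxNorm P Φ (fun ω => ⨆ x : X, |ξ x ω|) < ∞) :
    ∃ (h : ℝ → ℝ) (ζ : Ω → ℝ),
      IsScalingFunction h (Metric.diam (Set.univ : Set X)) ∧
      Measurable ζ ∧ (∀ ω, 0 ≤ ζ ω) ∧ luxNorm P Ψ ζ = 1 ∧
      ∀ᵐ ω ∂P, ∀ δ ∈ Set.Icc (0 : ℝ) (Metric.diam (Set.univ : Set X)),
        modCont (fun x => ξ x ω) δ ≤ ζ ω * h δ := by
  classical
  have modCont_zero : ∀ (f : X → ℝ), modCont f 0 ≤ 0 := by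
    intro f
    refine Real.sSup_le ?_ le_rfl
    rintro r ⟨x, y, hxy, rfl⟩
    have hxy0 : x = y := eq_of_dist_eq_zero (le_antisymm hxy dist_nonneg)
    subst hxy0; simp
  by_cases hD0 : Metric.diam (Set.univ : Set X) ≤ 0
  · -- degenerate case: the diameter is 0
    obtain ⟨t₁, ht₁pos, ht₁⟩ := hΨ.exists_eq_one
    refine ⟨fun _ => 0, fun _ => t₁,
      ⟨continuousOn_const, fun _ _ => le_rfl, monotoneOn_const, rfl⟩,
      measurable_const, fun _ => ht₁pos.le, luxNorm_const_eq_one P hΨ ht₁pos ht₁, ?_⟩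
    refine ae_of_all _ fun ω δ hδ => ?_
    have hδ0 : δ = 0 := le_antisymm (hδ.2.trans hD0) hδ.1
    subst hδ0
    rw [mul_zero]
    exact modCont_zero _
  -- main case
  push_neg at hD0
  have hX : Nonempty X := by
    by_contra hne
    rw [not_nonempty_iff] at hne
    rw [Set.univ_eq_empty_iff.mpr hne, Metric.diam_empty] at hD0
    exact lt_irrefl _ hD0
  obtain ⟨xs, hxs⟩ := TopologicalSpace.exists_dense_seq X
  have hmx : ∀ x : X, Measurable fun ω => ξ x ω := fun x =>
    hmeas.comp measurable_prodMk_left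
  -- measurable surrogates
  set oS : Ω → ℝ≥0∞ := fun ω => ⨆ i, (‖ξ (xs i) ω‖₊ : ℝ≥0∞) with hoSdef
  have hoSmeas : Measurable oS := Measurable.iSup fun i => (hmx (xs i)).nnnorm.coe_nnreal_ennreal
  set S' : Ω → ℝ := fun ω => (oS ω).toReal with hS'def
  have hS'meas : Measurable S' := hoSmeas.ennreal_toReal
  have hS'nn : ∀ ω, 0 ≤ S' ω := fun ω => ENNReal.toReal_nonneg
  set Mt : ℝ → Ω → ℝ≥0∞ := fun t ω => ⨆ p : ℕ × ℕ,
    (if dist (xs p.1) (xs p.2) ≤ t then (‖ξ (xs p.1) ω - ξ (xs p.2) ω‖₊ : ℝ≥0∞) else 0)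
    with hMtdef
  have hMtmeas : ∀ t, Measurable (Mt t) := by
    intro t
    refine Measurable.iSup fun p => ?_
    split_ifs with hd
    · exact ((hmx (xs p.1)).sub (hmx (xs p.2))).nnnorm.coe_nnreal_ennreal
    · exact measurable_const
  have hMt_le : ∀ t ω, Mt t ω ≤ 2 * oS ω := by
    intro t ω
    refine iSup_le fun p => ?_
    split_ifs with hd
    · calc (‖ξ (xs p.1) ω - ξ (xs p.2) ω‖₊ : ℝ≥0∞)
          ≤ (‖ξ (xs p.1) ω‖₊ : ℝ≥0∞) + (‖ξ (xs p.2) ω‖₊ : ℝ≥0∞) := by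
            rw [← ENNReal.coe_add]
            exact_mod_cast nnnorm_sub_le _ _
        _ ≤ oS ω + oS ω := add_le_add (le_iSup (fun i => (‖ξ (xs i) ω‖₊ : ℝ≥0∞)) p.1)
            (le_iSup (fun i => (‖ξ (xs i) ω‖₊ : ℝ≥0∞)) p.2)
        _ = 2 * oS ω := (two_mul _).symm
    · exact zero_le
  -- facts that hold for continuous sample paths
  have key_cont : ∀ ω : Ω, Continuous (fun x => ξ x ω) →
      oS ω ≠ ∞ ∧ S' ω = (⨆ x : X, |ξ x ω|) ∧
      (∀ t, 0 < t → modCont (fun x => ξ x ω) t ≤ (Mt (2*t) ω).toReal) ∧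
      (∀ ε : ℝ, 0 < ε → ∃ η : ℝ, 0 < η ∧ ∀ t : ℝ, t ≤ η → Mt t ω ≤ ENNReal.ofReal ε) ∧
      (∀ δ, modCont (fun x => ξ x ω) δ ≤ 2 * S' ω) ∧
      (∀ δ δ', 0 ≤ δ → δ ≤ δ' → modCont (fun x => ξ x ω) δ ≤ modCont (fun x => ξ x ω) δ') := by
    intro ω hc
    set f : X → ℝ := fun x => ξ x ω with hfdef
    have hbdd : BddAbove (Set.range fun x => |f x|) :=
      (isCompact_range (hc.abs)).bddAbove
    have hSnn : 0 ≤ ⨆ x : X, |f x| := Real.iSup_nonneg fun x => abs_nonneg _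
    have hle1 : ∀ x, |f x| ≤ ⨆ x : X, |f x| := fun x => le_ciSup hbdd x
    have hoS_le : oS ω ≤ ENNReal.ofReal (⨆ x : X, |f x|) := by
      refine iSup_le fun i => ?_
      rw [← enorm_eq_nnnorm, Real.enorm_eq_ofReal_abs]
      exact ENNReal.ofReal_le_ofReal (hle1 (xs i))
    have hoSfin : oS ω ≠ ∞ := ne_top_of_le_ne_top ENNReal.ofReal_ne_top hoS_le
    have hx_le : ∀ x : X, ENNReal.ofReal |f x| ≤ oS ω := by
      intro x
      obtain ⟨u, hu_mem, hu_lim⟩ := mem_closure_iff_seq_limit.mp (hxs x)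
      have hlim : Tendsto (fun k => ENNReal.ofReal |f (u k)|) atTop
          (nhds (ENNReal.ofReal |f x|)) :=
        (ENNReal.continuous_ofReal.tendsto _).comp
          (((hc.tendsto x).comp hu_lim).abs)
      refine le_of_tendsto hlim (Filter.Eventually.of_forall fun k => ?_)
      obtain ⟨i, hi⟩ := hu_mem k
      rw [← hi, ← Real.enorm_eq_ofReal_abs]
      exact le_iSup (fun i => (‖ξ (xs i) ω‖₊ : ℝ≥0∞)) i
    have hS'eq : S' ω = ⨆ x : X, |f x| := by
      refine le_antisymm ?_ ?_
      · have := ENNReal.toReal_mono ENNReal.ofReal_ne_top hoS_le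
        rwa [ENNReal.toReal_ofReal hSnn] at this
      · refine ciSup_le fun x => ?_
        have := hx_le x
        rw [ENNReal.ofReal_le_iff_le_toReal hoSfin] at this
        exact this
    have hS'x : ∀ x, |f x| ≤ S' ω := by
      intro x; rw [hS'eq]; exact hle1 x
    have hmodle : ∀ δ, modCont f δ ≤ 2 * S' ω := by
      intro δ
      refine Real.sSup_le ?_ (by positivity)
      rintro r ⟨x, y, hxy, rfl⟩
      calc |f x - f y| ≤ |f x| + |f y| := abs_sub _ _
        _ ≤ S' ω + S' ω := add_le_add (hS'x x) (hS'x y)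
        _ = 2 * S' ω := (two_mul _).symm
    refine ⟨hoSfin, hS'eq, ?_, ?_, hmodle, ?_⟩
    · -- modCont ≤ Mt (2t)
      intro t ht
      have hMfin : Mt (2*t) ω ≠ ∞ :=
        ne_top_of_le_ne_top (by
          exact ENNReal.mul_ne_top (by norm_num) hoSfin) (hMt_le (2*t) ω)
      refine Real.sSup_le ?_ ENNReal.toReal_nonneg
      rintro r ⟨x, y, hxy, rfl⟩
      refine le_of_forall_pos_le_add fun ε hε => ?_
      have hUx : ∃ i, xs i ∈ Metric.ball x (t/2) ∩ f ⁻¹' (Metric.ball (f x) (ε/2)) := by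
        refine hxs.exists_mem_open (Metric.isOpen_ball.inter
          (Metric.isOpen_ball.preimage hc)) ⟨x, ?_⟩
        constructor
        · simp [Metric.mem_ball, dist_self]; linarith
        · simp [Metric.mem_ball, dist_self]; linarith
      have hUy : ∃ j, xs j ∈ Metric.ball y (t/2) ∩ f ⁻¹' (Metric.ball (f y) (ε/2)) := by
        refine hxs.exists_mem_open (Metric.isOpen_ball.inter
          (Metric.isOpen_ball.preimage hc)) ⟨y, ?_⟩
        constructor
        · simp [Metric.mem_ball, dist_self]; linarith
        · simp [Metric.mem_ball, dist_self]; linarith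
      obtain ⟨i, hix, hifx⟩ := hUx
      obtain ⟨j, hjy, hjfy⟩ := hUy
      rw [Metric.mem_ball] at hix hjy
      have hifx' : dist (f (xs i)) (f x) < ε/2 := hifx
      have hjfy' : dist (f (xs j)) (f y) < ε/2 := hjfy
      have hdij : dist (xs i) (xs j) ≤ 2*t := by
        calc dist (xs i) (xs j) ≤ dist (xs i) x + dist x y + dist y (xs j) :=
          dist_triangle4 _ _ _ _
        _ ≤ t/2 + t + t/2 := by
            refine add_le_add (add_le_add hix.le hxy) ?_
            rw [dist_comm]; exact hjy.le
        _ = 2*t := by ring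
      have hterm : ENNReal.ofReal |f (xs i) - f (xs j)| ≤ Mt (2*t) ω := by
        refine le_trans ?_ (le_iSup _ ((i, j) : ℕ × ℕ))
        rw [if_pos hdij, ← enorm_eq_nnnorm, Real.enorm_eq_ofReal_abs]
      have hij : |f (xs i) - f (xs j)| ≤ (Mt (2*t) ω).toReal := by
        rw [← ENNReal.ofReal_le_iff_le_toReal hMfin]
        exact hterm
      have htri : |f x - f y| ≤ |f x - f (xs i)| + |f (xs i) - f (xs j)|
          + |f (xs j) - f y| := by
        calc |f x - f y| ≤ |f x - f (xs j)| + |f (xs j) - f y| := abs_sub_le _ _ _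
        _ ≤ (|f x - f (xs i)| + |f (xs i) - f (xs j)|) + |f (xs j) - f y| := by
            exact add_le_add_left (abs_sub_le _ _ _) _
      have e1 : |f x - f (xs i)| < ε/2 := by
        rw [abs_sub_comm, ← Real.dist_eq]; exact hifx'
      have e2 : |f (xs j) - f y| < ε/2 := by
        rw [← Real.dist_eq]; exact hjfy'
      rw [add_comm]
      linarith
    · -- uniform continuity bound on Mt
      intro ε hε
      have hu := CompactSpace.uniformContinuous_of_continuous hc
      rw [Metric.uniformContinuous_iff] at hu
      obtain ⟨η, hη, hηs⟩ := hu ε hε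
      refine ⟨η/2, by positivity, fun t ht => ?_⟩
      refine iSup_le fun p => ?_
      split_ifs with hd
      · have : dist (xs p.1) (xs p.2) < η := by linarith
        have := hηs this
        rw [Real.dist_eq] at this
        rw [← enorm_eq_nnnorm, Real.enorm_eq_ofReal_abs]
        exact ENNReal.ofReal_le_ofReal this.le
      · exact zero_le
    · -- monotonicity of modCont
      intro δ δ' h0 hδδ
      obtain ⟨x₀⟩ := hX
      refine csSup_le_csSup ⟨2 * S' ω, ?_⟩ ⟨0, x₀, x₀, by simpa [dist_self] using h0, by simp⟩ ?_
      · rintro r ⟨x, y, hxy, rfl⟩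
        calc |f x - f y| ≤ |f x| + |f y| := abs_sub _ _
          _ ≤ S' ω + S' ω := add_le_add (hS'x x) (hS'x y)
          _ = 2 * S' ω := (two_mul _).symm
      · rintro r ⟨x, y, hxy, rfl⟩
        exact ⟨x, y, hxy.trans hδδ, rfl⟩
  -- integrability from hfin and hweak
  obtain ⟨c, ⟨hc0, hcT, hcI⟩, -⟩ := sInf_lt_iff.mp hfin
  have hc0r : 0 < c.toReal := ENNReal.toReal_pos hc0.ne' hcT
  have hSS : ∀ᵐ ω ∂P, S' ω = ⨆ x : X, |ξ x ω| := by
    filter_upwards [hcont] with ω hc'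
    exact (key_cont ω hc').2.1
  have hint : ∀ a : ℝ, 0 < a → ∫⁻ ω, ENNReal.ofReal (Ψ (a * (1 + S' ω))) ∂P < ∞ := by
    intro a ha
    set c₀ : ℝ := c.toReal with hc₀def
    have hv : (0:ℝ) < 2 * a * c₀ := by positivity
    have htt := (hweak (2 * a * c₀) hv).eventually_lt_const one_pos
    rw [eventually_atTop] at htt
    obtain ⟨U₀, hU₀⟩ := htt
    set U : ℝ := max U₀ (max 1 (1/c₀)) with hUdef
    have hU1 : (1:ℝ) ≤ U := le_trans (le_max_left 1 (1/c₀)) (le_max_right _ _)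
    have hUc : 1/c₀ ≤ U := le_trans (le_max_right 1 (1/c₀)) (le_max_right _ _)
    have hΨΦ : ∀ u : ℝ, U ≤ u → Ψ (u * (2 * a * c₀)) ≤ Φ u := by
      intro u hu
      have h1 : Ψ (u * (2 * a * c₀)) / Φ u < 1 := hU₀ u (le_trans (le_max_left _ _) hu)
      have hΦu : 0 < Φ u := hΦ.pos (by linarith)
      exact le_of_lt ((div_lt_one hΦu).mp h1)
    have hptwise : ∀ ω, Ψ (a * (1 + S' ω)) ≤ Ψ (2 * a * c₀ * U) + Φ (S' ω / c₀) := by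
      intro ω
      set s : ℝ := S' ω with hsdef
      have hs : 0 ≤ s := hS'nn ω
      by_cases hcase : 1 + s ≤ 2 * c₀ * U
      · have : Ψ (a * (1 + s)) ≤ Ψ (2 * a * c₀ * U) := by
          refine hΨ.mono' (by positivity) ?_
          nlinarith
        exact le_trans this (le_add_of_nonneg_right (hΦ.nonneg _))
      · push_neg at hcase
        set u : ℝ := (1 + s) / (2 * c₀) with hudef
        have hcu : 0 < 2 * c₀ := by positivity
        have hUu : U ≤ u := by
          rw [hudef, le_div_iff₀ hcu]
          nlinarith
        have hs1 : 1 ≤ s := by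
          have : 2 * c₀ * (1/c₀) ≤ 2 * c₀ * U := by nlinarith
          have h2 : 2 * c₀ * (1/c₀) = 2 := by field_simp
          nlinarith
        have harg : a * (1 + s) = u * (2 * a * c₀) := by
          rw [hudef]; field_simp
        have h1 : Ψ (a * (1 + s)) ≤ Φ u := by rw [harg]; exact hΨΦ u hUu
        have h2 : Φ u ≤ Φ (s / c₀) := by
          refine hΦ.mono' (by positivity) ?_
          rw [hudef, div_le_div_iff₀ hcu hc0r]
          nlinarith
        calc Ψ (a * (1 + s)) ≤ Φ (s / c₀) := h1.trans h2
          _ ≤ Ψ (2 * a * c₀ * U) + Φ (s / c₀) := le_add_of_nonneg_left (hΨ.nonneg _)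
    calc ∫⁻ ω, ENNReal.ofReal (Ψ (a * (1 + S' ω))) ∂P
        ≤ ∫⁻ ω, (ENNReal.ofReal (Ψ (2 * a * c₀ * U)) + ENNReal.ofReal (Φ (S' ω / c₀))) ∂P := by
          refine lintegral_mono fun ω => ?_
          calc ENNReal.ofReal (Ψ (a * (1 + S' ω)))
              ≤ ENNReal.ofReal (Ψ (2 * a * c₀ * U) + Φ (S' ω / c₀)) :=
                ENNReal.ofReal_le_ofReal (hptwise ω)
            _ = _ := ENNReal.ofReal_add (hΨ.nonneg _) (hΦ.nonneg _)
      _ = ENNReal.ofReal (Ψ (2 * a * c₀ * U)) + ∫⁻ ω, ENNReal.ofReal (Φ (S' ω / c₀)) ∂P := by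
          rw [lintegral_add_left measurable_const, lintegral_const, measure_univ, mul_one]
      _ ≤ ENNReal.ofReal (Ψ (2 * a * c₀ * U)) + 1 := by
          refine add_le_add_right ?_ _
          refine le_trans (le_of_eq (lintegral_congr_ae ?_)) hcI
          filter_upwards [hSS] with ω hω
          rw [← hω, abs_of_nonneg (hS'nn ω)]
      _ < ∞ := by
          rw [ENNReal.add_lt_top]
          exact ⟨ENNReal.ofReal_lt_top, ENNReal.one_lt_top⟩
  -- small values of Ψ
  have htb : ∀ n : ℕ, ∃ t : ℝ, 0 < t ∧ t ≤ 1 ∧ Ψ t ≤ (1/2)^n := by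
    intro n
    exact hΨ.exists_small (by positivity)
  choose tb htb0 htb1 htbΨ using htb
  set ε' : ℕ → ℝ := fun n => (1/2)^(n+1) * tb n with hε'def
  have hε'0 : ∀ n, 0 < ε' n := fun n => by
    have := htb0 n; positivity
  -- the dominating functions
  set V : ℕ → Ω → ℝ≥0∞ := fun n ω => ENNReal.ofReal (Ψ (2^(n+2) * (1 + S' ω))) with hVdef
  have hVmeas : ∀ n, Measurable (V n) := fun n =>
    (hΨ.continuous.measurable.comp ((measurable_const.mul
      (measurable_const.add hS'meas)))).ennreal_ofReal
  have hVint : ∀ n, ∫⁻ ω, V n ω ∂P < ∞ := fun n => hint (2^(n+2)) (by positivity)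
  have hVlow : ∀ n ω, ENNReal.ofReal (Ψ 4) ≤ V n ω := by
    intro n ω
    refine ENNReal.ofReal_le_ofReal (hΨ.mono' (by norm_num) ?_)
    have h1 : (4:ℝ) ≤ 2^(n+2) := by
      calc (4:ℝ) = 2^2 := by norm_num
      _ ≤ 2^(n+2) := by
          apply pow_le_pow_right₀ (by norm_num)
          omega
    nlinarith [hS'nn ω]
  -- choice of the scales d n
  have hdchoice : ∀ n : ℕ, ∃ dn : ℝ, 0 < dn ∧ dn ≤ (1/2)^n ∧
      ∫⁻ ω, ({ω' | ENNReal.ofReal (ε' n) < Mt (2*dn) ω'}).indicator (V n) ω ∂P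
        ≤ ENNReal.ofReal ((1/2)^n) := by
    intro n
    set F : ℕ → Ω → ℝ≥0∞ := fun k =>
      ({ω' | ENNReal.ofReal (ε' n) < Mt (2*(1/2)^k) ω'}).indicator (V n) with hFdef
    have hFmeas : ∀ k, Measurable (F k) := fun k =>
      (hVmeas n).indicator (measurableSet_lt measurable_const (hMtmeas _))
    have htend : Tendsto (fun k => ∫⁻ ω, F k ω ∂P) atTop (nhds 0) := by
      have h0 : (0 : ℝ≥0∞) = ∫⁻ _, (0:ℝ≥0∞) ∂P := by simp
      rw [h0]
      refine tendsto_lintegral_of_dominated_convergence (V n) hFmeas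
        (fun k => Filter.Eventually.of_forall fun ω => Set.indicator_le_self _ _ ω)
        (hVint n).ne ?_
      filter_upwards [hcont] with ω hc'
      obtain ⟨η, hη, hηM⟩ := (key_cont ω hc').2.2.2.1 (ε' n) (hε'0 n)
      have hev : ∀ᶠ k in atTop, F k ω = 0 := by
        have hp : Tendsto (fun k : ℕ => 2*(1/2:ℝ)^k) atTop (nhds 0) := by
          have := (tendsto_pow_atTop_nhds_zero_of_lt_one (by norm_num : (0:ℝ) ≤ 1/2)
            (by norm_num : (1/2:ℝ) < 1)).const_mul (2:ℝ)
          simpa using this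
        filter_upwards [hp.eventually_lt_const hη] with k hk
        have hMle : Mt (2*(1/2)^k) ω ≤ ENNReal.ofReal (ε' n) := hηM _ hk.le
        exact Set.indicator_of_notMem (by simpa [Set.mem_setOf_eq, not_lt] using hMle) _
      exact Tendsto.congr' (hev.mono fun k hk => hk.symm) tendsto_const_nhds
    have hpos : (0:ℝ≥0∞) < ENNReal.ofReal ((1/2)^n) := by
      rw [ENNReal.ofReal_pos]; positivity
    obtain ⟨k, hk1, hk2⟩ := ((htend.eventually_lt_const hpos).and (eventually_ge_atTop n)).exists
    refine ⟨(1/2)^k, by positivity, ?_, hk1.le⟩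
    exact pow_le_pow_of_le_one (by norm_num) (by norm_num) hk2
  choose d hd0 hdle hdI using hdchoice
  -- the bad events
  set B : ℕ → Set Ω := fun n => {ω' | ENNReal.ofReal (ε' n) < Mt (2 * d n) ω'} with hBdef
  have hBmeas : ∀ n, MeasurableSet (B n) := fun n =>
    measurableSet_lt measurable_const (hMtmeas _)
  -- the random variable
  set G : ℕ → Ω → ℝ≥0∞ := fun n ω => Nat.casesOn n (2 + 2 * oS ω)
    (fun m => 2^(m+1) * Mt (2 * d m) ω) with hGdef
  have hG0 : ∀ ω, G 0 ω = 2 + 2 * oS ω := fun ω => rfl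
  have hGs : ∀ m ω, G (m+1) ω = 2^(m+1) * Mt (2 * d m) ω := fun m ω => rfl
  have hGmeas : ∀ n, Measurable (G n) := by
    intro n
    cases n with
    | zero => exact (measurable_const.add (measurable_const.mul hoSmeas))
    | succ m => exact measurable_const.mul (hMtmeas _)
  set Z : Ω → ℝ≥0∞ := fun ω => ⨆ n, G n ω with hZdef
  have hZmeas : Measurable Z := Measurable.iSup hGmeas
  set ζ : Ω → ℝ := fun ω => (Z ω).toReal with hζdef
  have hζmeas : Measurable ζ := hZmeas.ennreal_toReal
  have hζnn : ∀ ω, 0 ≤ ζ ω := fun ω => ENNReal.toReal_nonneg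
  -- Borel–Cantelli : almost surely, eventually not in B n
  have hΨ4 : (0:ℝ≥0∞) < ENNReal.ofReal (Ψ 4) := by
    rw [ENNReal.ofReal_pos]; exact hΨ.pos (by norm_num)
  have hPB : ∀ n, P (B n) ≤ ENNReal.ofReal ((1/2)^n) / ENNReal.ofReal (Ψ 4) := by
    intro n
    have h1 : ENNReal.ofReal (Ψ 4) * P (B n) ≤ ENNReal.ofReal ((1/2)^n) := by
      calc ENNReal.ofReal (Ψ 4) * P (B n)
          = ∫⁻ ω, (B n).indicator (fun _ => ENNReal.ofReal (Ψ 4)) ω ∂P := by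
            rw [lintegral_indicator_const (hBmeas n)]
        _ ≤ ∫⁻ ω, (B n).indicator (V n) ω ∂P := by
            refine lintegral_mono fun ω => ?_
            exact Set.indicator_le_indicator (hVlow n ω)
        _ ≤ ENNReal.ofReal ((1/2)^n) := hdI n
    rw [ENNReal.le_div_iff_mul_le (Or.inl hΨ4.ne') (Or.inl ENNReal.ofReal_ne_top)]
    rwa [mul_comm]
  have hgeo : (∑' n : ℕ, ENNReal.ofReal ((1/2:ℝ)^n)) ≠ ∞ := by
    have heq : ∀ n : ℕ, ENNReal.ofReal ((1/2:ℝ)^n) = (1/2 : ℝ≥0∞)^n := by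
      intro n
      rw [ENNReal.ofReal_pow (by norm_num)]
      congr 1
      rw [ENNReal.ofReal_div_of_pos (by norm_num), ENNReal.ofReal_one, ENNReal.ofReal_ofNat]
    rw [tsum_congr heq]
    simp only [one_div]
    rw [ENNReal.tsum_geometric]
    simp
  have hBC : ∀ᵐ ω ∂P, ∀ᶠ n in atTop, ω ∉ B n := by
    refine MeasureTheory.ae_eventually_notMem ?_
    have hsum : (∑' n, P (B n)) ≤ ∑' n : ℕ, ENNReal.ofReal ((1/2:ℝ)^n) / ENNReal.ofReal (Ψ 4) :=
      ENNReal.tsum_le_tsum hPB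
    refine ne_top_of_le_ne_top ?_ hsum
    simp_rw [div_eq_mul_inv]
    rw [ENNReal.tsum_mul_right]
    exact ENNReal.mul_ne_top hgeo (ENNReal.inv_ne_top.mpr hΨ4.ne')
  -- a.s. finiteness of Z
  have hZfin : ∀ᵐ ω ∂P, Z ω ≠ ∞ := by
    filter_upwards [hcont, hBC] with ω hc' hev
    obtain ⟨N, hN⟩ := eventually_atTop.mp hev
    have hoSfin : oS ω ≠ ∞ := (key_cont ω hc').1
    have hGfin : ∀ n, G n ω ≠ ∞ := by
      intro n
      cases n with
      | zero =>
        rw [hG0]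
        exact ENNReal.add_ne_top.mpr ⟨ENNReal.ofNat_ne_top,
          ENNReal.mul_ne_top ENNReal.ofNat_ne_top hoSfin⟩
      | succ m =>
        rw [hGs]
        exact ENNReal.mul_ne_top (by simp) (ne_top_of_le_ne_top
          (ENNReal.mul_ne_top ENNReal.ofNat_ne_top hoSfin) (hMt_le _ ω))
    have hbound : ∀ n, G n ω ≤ (∑ k ∈ Finset.range (N+2), G k ω) + 1 := by
      intro n
      by_cases hn : n < N + 2
      · refine le_trans ?_ le_self_add
        exact Finset.single_le_sum (fun k _ => (zero_le : (0:ℝ≥0∞) ≤ G k ω)) (Finset.mem_range.mpr hn)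
      · push_neg at hn
        match n, hn with
        | (m+1), hm =>
          have hmN : N ≤ m := by omega
          have hnotB : ω ∉ B m := hN m hmN
          have hMle : Mt (2 * d m) ω ≤ ENNReal.ofReal (ε' m) := by
            simpa [hBdef, Set.mem_setOf_eq, not_lt] using hnotB
          have h2 : (2:ℝ≥0∞)^(m+1) * ENNReal.ofReal (ε' m) = ENNReal.ofReal (2^(m+1) * ε' m) := by
            rw [← ENNReal.ofReal_ofNat 2, ← ENNReal.ofReal_pow (by norm_num),
              ← ENNReal.ofReal_mul (by positivity)]
          have h3 : 2^(m+1) * ε' m = tb m := by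
            simp only [hε'def]
            rw [← mul_assoc, ← mul_pow]
            norm_num
          calc G (m+1) ω ≤ 2^(m+1) * ENNReal.ofReal (ε' m) := by
                rw [hGs]
                exact mul_le_mul_right hMle _
            _ = ENNReal.ofReal (tb m) := by rw [h2, h3]
            _ ≤ 1 := by
                rw [← ENNReal.ofReal_one]
                exact ENNReal.ofReal_le_ofReal (htb1 m)
            _ ≤ _ + 1 := le_add_self
    have hfinsum : ((∑ k ∈ Finset.range (N+2), G k ω) + 1) ≠ ∞ := by
      rw [ENNReal.add_ne_top]
      refine ⟨?_, ENNReal.one_ne_top⟩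
      rw [← lt_top_iff_ne_top, ENNReal.sum_lt_top]
      exact fun k _ => (hGfin k).lt_top
    exact ne_top_of_le_ne_top hfinsum (iSup_le hbound)
  -- integral bound on Ψ ∘ ζ
  have hGint : ∀ n, ∫⁻ ω, ENNReal.ofReal (Ψ ((G n ω).toReal)) ∂P ≤
      (if n = 0 then ∫⁻ ω, ENNReal.ofReal (Ψ (2*(1 + S' ω))) ∂P
       else ENNReal.ofReal ((1/2)^(n-1)) + ENNReal.ofReal ((1/2)^(n-1))) := by
    intro n
    cases n with
    | zero =>
      simp only [if_pos rfl]
      refine lintegral_mono_ae ?_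
      filter_upwards [hcont] with ω hc'
      have hoSfin : oS ω ≠ ∞ := (key_cont ω hc').1
      have : (G 0 ω).toReal = 2 * (1 + S' ω) := by
        rw [hG0, ENNReal.toReal_add (by simp) (ENNReal.mul_ne_top ENNReal.ofNat_ne_top hoSfin),
          ENNReal.toReal_mul]
        simp only [hS'def]
        norm_num
        ring
      rw [this]
    | succ m =>
      simp only [Nat.succ_ne_zero, if_false, Nat.add_sub_cancel]
      have hptw : ∀ᵐ ω ∂P, ENNReal.ofReal (Ψ ((G (m+1) ω).toReal)) ≤
          ENNReal.ofReal ((1/2)^m) + (B m).indicator (V m) ω := by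
        filter_upwards [hcont] with ω hc'
        have hoSfin : oS ω ≠ ∞ := (key_cont ω hc').1
        have hMfin : Mt (2 * d m) ω ≠ ∞ := ne_top_of_le_ne_top
          (ENNReal.mul_ne_top ENNReal.ofNat_ne_top hoSfin) (hMt_le _ ω)
        have htr : (G (m+1) ω).toReal = 2^(m+1) * (Mt (2 * d m) ω).toReal := by
          rw [hGs, ENNReal.toReal_mul, ENNReal.toReal_pow]
          norm_num
        by_cases hωB : ω ∈ B m
        · have hMS : (Mt (2 * d m) ω).toReal ≤ 2 * S' ω := by
            have := ENNReal.toReal_mono (ENNReal.mul_ne_top ENNReal.ofNat_ne_top hoSfin)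
              (hMt_le (2 * d m) ω)
            rwa [ENNReal.toReal_mul, ENNReal.toReal_ofNat] at this
          have harg : (G (m+1) ω).toReal ≤ 2^(m+2) * (1 + S' ω) := by
            rw [htr]
            have h1 : (2:ℝ)^(m+2) = 2^(m+1) * 2 := by ring
            nlinarith [pow_pos (by norm_num : (0:ℝ) < 2) (m+1), hS'nn ω,
              ENNReal.toReal_nonneg (a := Mt (2 * d m) ω)]
          have : ENNReal.ofReal (Ψ ((G (m+1) ω).toReal)) ≤ V m ω := by
            simp only [hVdef]
            exact ENNReal.ofReal_le_ofReal (hΨ.mono' ENNReal.toReal_nonneg harg)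
          refine le_trans this ?_
          rw [Set.indicator_of_mem hωB]
          exact self_le_add_left _ _
        · have hMle : Mt (2 * d m) ω ≤ ENNReal.ofReal (ε' m) := by
            simpa [hBdef, Set.mem_setOf_eq, not_lt] using hωB
          have hMr : (Mt (2 * d m) ω).toReal ≤ ε' m := by
            have := ENNReal.toReal_mono ENNReal.ofReal_ne_top hMle
            rwa [ENNReal.toReal_ofReal (hε'0 m).le] at this
          have harg : (G (m+1) ω).toReal ≤ tb m := by
            rw [htr]
            have h3 : 2^(m+1) * ε' m = tb m := by
              simp only [hε'def]
              rw [← mul_assoc, ← mul_pow]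
              norm_num
            nlinarith [pow_pos (by norm_num : (0:ℝ) < 2) (m+1)]
          have : ENNReal.ofReal (Ψ ((G (m+1) ω).toReal)) ≤ ENNReal.ofReal ((1/2)^m) :=
            ENNReal.ofReal_le_ofReal ((hΨ.mono' ENNReal.toReal_nonneg harg).trans (htbΨ m))
          exact le_trans this le_self_add
      calc ∫⁻ ω, ENNReal.ofReal (Ψ ((G (m+1) ω).toReal)) ∂P
          ≤ ∫⁻ ω, (ENNReal.ofReal ((1/2)^m) + (B m).indicator (V m) ω) ∂P :=
            lintegral_mono_ae hptw
        _ = ENNReal.ofReal ((1/2)^m) + ∫⁻ ω, (B m).indicator (V m) ω ∂P := by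
            rw [lintegral_add_left measurable_const, lintegral_const, measure_univ, mul_one]
        _ ≤ ENNReal.ofReal ((1/2)^m) + ENNReal.ofReal ((1/2)^m) :=
            add_le_add_right (hdI m) _
  have hζint : ∫⁻ ω, ENNReal.ofReal (Ψ (ζ ω)) ∂P < ∞ := by
    have hmono : ∫⁻ ω, ENNReal.ofReal (Ψ (ζ ω)) ∂P
        ≤ ∫⁻ ω, ∑' n, ENNReal.ofReal (Ψ ((G n ω).toReal)) ∂P := by
      refine lintegral_mono_ae ?_
      filter_upwards [hZfin] with ω hω
      exact hΨ.ofReal_iSup_le (fun n => G n ω) hω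
    have heq : ∫⁻ ω, ∑' n, ENNReal.ofReal (Ψ ((G n ω).toReal)) ∂P
        = ∑' n, ∫⁻ ω, ENNReal.ofReal (Ψ ((G n ω).toReal)) ∂P := by
      refine lintegral_tsum fun n => ?_
      exact ((hΨ.continuous.measurable.comp (hGmeas n).ennreal_toReal).ennreal_ofReal).aemeasurable
    refine lt_of_le_of_lt (hmono.trans heq.le) ?_
    rw [tsum_eq_zero_add' ENNReal.summable]
    rw [ENNReal.add_lt_top]
    constructor
    · refine lt_of_le_of_lt (hGint 0) ?_
      simp only [if_pos rfl]
      exact hint 2 (by norm_num)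
    · have : ∀ n : ℕ, ∫⁻ ω, ENNReal.ofReal (Ψ ((G (n+1) ω).toReal)) ∂P
          ≤ ENNReal.ofReal ((1/2)^n) + ENNReal.ofReal ((1/2)^n) := by
        intro n
        have := hGint (n+1)
        simpa using this
      refine lt_of_le_of_lt (ENNReal.tsum_le_tsum this) ?_
      rw [ENNReal.tsum_add]
      rw [lt_top_iff_ne_top, ENNReal.add_ne_top]
      exact ⟨hgeo, hgeo⟩
  -- a.e. lower bound on ζ
  have hζ2 : ∀ᵐ ω ∂P, 2 ≤ ζ ω := by
    filter_upwards [hZfin] with ω hω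
    have h1 : (2:ℝ≥0∞) ≤ Z ω := by
      refine le_trans ?_ (le_iSup (fun n => G n ω) 0)
      rw [hG0]
      exact le_add_of_nonneg_right zero_le
    have := ENNReal.toReal_mono hω h1
    simpa using this
  -- ζ has finite positive Luxemburg norm
  have hluxfin : luxNorm P Ψ ζ ≠ ∞ := by
    set Fk : ℕ → Ω → ℝ≥0∞ := fun k ω => ENNReal.ofReal (Ψ (ζ ω / ((k:ℝ)+1))) with hFkdef
    have hFkmeas : ∀ k, Measurable (Fk k) := fun k =>
      (hΨ.continuous.measurable.comp (hζmeas.div_const _)).ennreal_ofReal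
    have hFkbound : ∀ k, ∀ᵐ ω ∂P, Fk k ω ≤ ENNReal.ofReal (Ψ (ζ ω)) := by
      intro k
      refine ae_of_all _ fun ω => ?_
      refine ENNReal.ofReal_le_ofReal (hΨ.mono' (by positivity) ?_)
      rw [div_le_iff₀ (by positivity : (0:ℝ) < (k:ℝ)+1)]
      nlinarith [hζnn ω, Nat.cast_nonneg (α := ℝ) k]
    have hFklim : ∀ᵐ ω ∂P, Tendsto (fun k => Fk k ω) atTop (nhds 0) := by
      refine ae_of_all _ fun ω => ?_
      have h1 : Tendsto (fun k : ℕ => ζ ω / ((k:ℝ)+1)) atTop (nhds 0) := by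
        have h2 : Tendsto (fun k : ℕ => (k:ℝ)+1) atTop atTop :=
          tendsto_atTop_add_const_right atTop 1 tendsto_natCast_atTop_atTop
        exact Tendsto.div_atTop tendsto_const_nhds h2
      have h2 := ((hΨ.continuous.tendsto 0).comp h1)
      rw [hΨ.map_zero] at h2
      have h3 := (ENNReal.continuous_ofReal.tendsto 0).comp h2
      simp only [ENNReal.ofReal_zero] at h3
      exact h3.congr fun k => rfl
    have htend : Tendsto (fun k => ∫⁻ ω, Fk k ω ∂P) atTop (nhds 0) := by
      have h0 : (0 : ℝ≥0∞) = ∫⁻ _, (0:ℝ≥0∞) ∂P := by simp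
      rw [h0]
      exact tendsto_lintegral_of_dominated_convergence _ hFkmeas hFkbound hζint.ne hFklim
    obtain ⟨k, hk⟩ := (htend.eventually_lt_const (zero_lt_one : (0:ℝ≥0∞) < 1)).exists
    refine ne_top_of_le_ne_top (ENNReal.natCast_ne_top (k+1)) (sInf_le ?_)
    refine ⟨by positivity, ENNReal.natCast_ne_top _, ?_⟩
    have habs : ∀ ω, |ζ ω| = ζ ω := fun ω => abs_of_nonneg (hζnn ω)
    have htoR : ((k+1 : ℕ) : ℝ≥0∞).toReal = ((k:ℝ)+1) := by
      rw [ENNReal.toReal_natCast]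
      push_cast
      ring
    calc ∫⁻ ω, ENNReal.ofReal (Ψ (|ζ ω| / ((k+1 : ℕ) : ℝ≥0∞).toReal)) ∂P
        = ∫⁻ ω, Fk k ω ∂P := by
          refine lintegral_congr fun ω => ?_
          rw [habs, htoR]
      _ ≤ 1 := hk.le
  have hluxpos : luxNorm P Ψ ζ ≠ 0 := by
    obtain ⟨u₁, hu₁1, hu₁⟩ := hΨ.exists_big
    have hu₁0 : (0:ℝ) < u₁ := by linarith
    have hkey : ∀ c' : ℝ≥0∞, c' ∈ {c : ℝ≥0∞ | 0 < c ∧ c ≠ ∞ ∧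
        ∫⁻ ω, ENNReal.ofReal (Ψ (|ζ ω| / c.toReal)) ∂P ≤ 1} →
        ENNReal.ofReal (2/u₁) ≤ c' := by
      rintro c' ⟨hc'0, hc'T, hc'I⟩
      by_contra hlt
      push_neg at hlt
      have hc'r : 0 < c'.toReal := ENNReal.toReal_pos hc'0.ne' hc'T
      have hc'lt : c'.toReal < 2/u₁ := by
        have h1 := ENNReal.toReal_mono ENNReal.ofReal_ne_top hlt.le
        rw [ENNReal.toReal_ofReal (by positivity)] at h1
        rcases lt_or_eq_of_le h1 with h | h
        · exact h
        · exfalso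
          have : c' = ENNReal.ofReal (2/u₁) := by
            rw [← ENNReal.ofReal_toReal hc'T, h]
          exact absurd this.symm.le (not_le.mpr hlt)
      have hbig : u₁ < 2 / c'.toReal := by
        rw [lt_div_iff₀ hc'r]
        have h2 := (lt_div_iff₀ hu₁0).mp hc'lt
        nlinarith
      have hml : ∀ᵐ ω ∂P, ENNReal.ofReal (Ψ u₁) ≤ ENNReal.ofReal (Ψ (|ζ ω| / c'.toReal)) := by
        filter_upwards [hζ2] with ω hω
        refine ENNReal.ofReal_le_ofReal (hΨ.mono' (by linarith) ?_)
        have h2 : 2 / c'.toReal ≤ |ζ ω| / c'.toReal := by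
          refine (div_le_div_iff_of_pos_right hc'r).mpr ?_
          rw [abs_of_nonneg (hζnn ω)]
          exact hω
        linarith
      have hcontr : ENNReal.ofReal (Ψ u₁) ≤ 1 := by
        calc ENNReal.ofReal (Ψ u₁) = ∫⁻ _, ENNReal.ofReal (Ψ u₁) ∂P := by
              rw [lintegral_const, measure_univ, mul_one]
          _ ≤ ∫⁻ ω, ENNReal.ofReal (Ψ (|ζ ω| / c'.toReal)) ∂P := lintegral_mono_ae hml
          _ ≤ 1 := hc'I
      have : (1:ℝ≥0∞) < ENNReal.ofReal (Ψ u₁) := by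
        rw [← ENNReal.ofReal_one]
        exact (ENNReal.ofReal_lt_ofReal_iff_of_nonneg (by norm_num)).mpr hu₁
      exact absurd hcontr (not_le.mpr this)
    refine ne_of_gt ?_
    refine lt_of_lt_of_le ?_ (le_sInf hkey)
    rw [ENNReal.ofReal_pos]
    positivity
  -- the scaling function
  set L : ℝ≥0∞ := luxNorm P Ψ ζ with hLdef
  have hLr : 0 < L.toReal := ENNReal.toReal_pos hluxpos hluxfin
  set h₀ : ℝ → ℝ := fun δ => ∑' n, (1/2)^n * min 1 (max (δ / d n) 0) with hh₀def
  have hterm_nonneg : ∀ n (δ : ℝ), 0 ≤ (1/2:ℝ)^n * min 1 (max (δ / d n) 0) := by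
    intro n δ
    have h1 : (0:ℝ) ≤ min 1 (max (δ / d n) 0) := le_min (by norm_num) (le_max_right _ _)
    positivity
  have hterm_le : ∀ n (δ : ℝ), (1/2:ℝ)^n * min 1 (max (δ / d n) 0) ≤ (1/2)^n := by
    intro n δ
    have h1 : min 1 (max (δ / d n) 0) ≤ 1 := min_le_left _ _
    have h2 : (0:ℝ) ≤ (1/2:ℝ)^n := by positivity
    nlinarith [hterm_nonneg n δ]
  have hsummable : ∀ δ : ℝ, Summable fun n => (1/2:ℝ)^n * min 1 (max (δ / d n) 0) := by
    intro δ
    refine Summable.of_nonneg_of_le (hterm_nonneg · δ) (hterm_le · δ) ?_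
    exact summable_geometric_of_lt_one (by norm_num) (by norm_num)
  have hh₀cont : Continuous h₀ := by
    refine continuous_tsum (fun n => ?_) (summable_geometric_of_lt_one
      (by norm_num : (0:ℝ) ≤ 1/2) (by norm_num)) (fun n δ => ?_)
    · exact continuous_const.mul (continuous_const.min
        ((continuous_id.div_const _).max continuous_const))
    · rw [Real.norm_eq_abs, abs_of_nonneg (hterm_nonneg n δ)]
      exact hterm_le n δ
  have hh₀mono : Monotone h₀ := by
    intro δ δ' hδδ
    refine Summable.tsum_le_tsum (fun n => ?_) (hsummable δ) (hsummable δ')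
    have h1 : δ / d n ≤ δ' / d n := (div_le_div_iff_of_pos_right (hd0 n)).mpr hδδ
    exact mul_le_mul_of_nonneg_left
      (min_le_min le_rfl (max_le_max h1 le_rfl)) (by positivity)
  have hh₀nonneg : ∀ δ, 0 ≤ h₀ δ := fun δ => tsum_nonneg (hterm_nonneg · δ)
  have hh₀zero : h₀ 0 = 0 := by
    simp only [hh₀def]
    convert tsum_zero with n
    simp
  have hh₀ge : ∀ (m : ℕ) (δ : ℝ), d m ≤ δ → (1/2:ℝ)^m ≤ h₀ δ := by
    intro m δ hdm
    have h1 : (1:ℝ) ≤ δ / d m := by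
      rw [le_div_iff₀ (hd0 m)]
      linarith
    have h2 : (1/2:ℝ)^m * min 1 (max (δ / d m) 0) = (1/2)^m := by
      rw [min_eq_left (le_max_of_le_left h1)]  -- min 1 x = 1 when 1 ≤ x : min_eq_left needs 1 ≤ max...
      ring
    calc (1/2:ℝ)^m = (1/2:ℝ)^m * min 1 (max (δ / d m) 0) := h2.symm
      _ ≤ h₀ δ := Summable.le_tsum (hsummable δ) m (fun k _ => hterm_nonneg k δ)
  -- assembling
  refine ⟨fun δ => L.toReal * h₀ δ, fun ω => ζ ω / L.toReal, ?_, hζmeas.div_const _,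
    fun ω => div_nonneg (hζnn ω) hLr.le, luxNorm_div_self P ζ hluxpos hluxfin, ?_⟩
  · refine ⟨(continuous_const.mul hh₀cont).continuousOn,
      fun δ _ => mul_nonneg hLr.le (hh₀nonneg δ), ?_, by simp [hh₀zero]⟩
    intro a _ b _ hab
    exact mul_le_mul_of_nonneg_left (hh₀mono hab) hLr.le
  · filter_upwards [hcont, hZfin] with ω hc' hZω δ hδ
    have hfact : ζ ω / L.toReal * (L.toReal * h₀ δ) = ζ ω * h₀ δ := by
      field_simp
    rw [hfact]
    rcases eq_or_lt_of_le hδ.1 with hδ0 | hδ0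
    · rw [← hδ0, hh₀zero, mul_zero]
      exact modCont_zero _
    -- δ > 0
    have hkc := key_cont ω hc'
    have hoSfin := hkc.1
    have hfind : ∃ n, d n < δ := by
      obtain ⟨n, hn⟩ := exists_pow_lt_of_lt_one hδ0 (by norm_num : (1/2:ℝ) < 1)
      exact ⟨n, lt_of_le_of_lt (hdle n) hn⟩
    rcases Nat.eq_zero_or_pos (Nat.find hfind) with hzero | hposn
    ·
      have hd0δ : d 0 < δ := by
        have := Nat.find_spec hfind
        rwa [hzero] at this
      have hh1 : (1:ℝ) ≤ h₀ δ := by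
        have := hh₀ge 0 δ hd0δ.le
        simpa using this
      have hζS : 2 * S' ω ≤ ζ ω := by
        have h1 : (2 : ℝ≥0∞) * oS ω ≤ Z ω := by
          refine le_trans ?_ (le_iSup (fun n => G n ω) 0)
          rw [hG0]
          exact le_add_self
        have h2 := ENNReal.toReal_mono hZω h1
        rwa [ENNReal.toReal_mul, ENNReal.toReal_ofNat] at h2
      calc modCont (fun x => ξ x ω) δ ≤ 2 * S' ω := hkc.2.2.2.2.1 δ
        _ ≤ ζ ω := hζS
        _ = ζ ω * 1 := (mul_one _).symm
        _ ≤ ζ ω * h₀ δ := mul_le_mul_of_nonneg_left hh1 (hζnn ω)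
    · obtain ⟨m, hm⟩ := Nat.exists_eq_succ_of_ne_zero hposn.ne'
      have hdm : δ ≤ d m := by
        have := Nat.find_min hfind (show m < Nat.find hfind by omega)
        push_neg at this
        exact this
      have hdm1 : d (m+1) < δ := by
        have := Nat.find_spec hfind
        rwa [hm] at this
      have hMfin : Mt (2 * d m) ω ≠ ∞ := ne_top_of_le_ne_top
        (ENNReal.mul_ne_top ENNReal.ofNat_ne_top hoSfin) (hMt_le _ ω)
      have hζM : 2^(m+1) * (Mt (2 * d m) ω).toReal ≤ ζ ω := by
        have h1 : G (m+1) ω ≤ Z ω := le_iSup (fun n => G n ω) (m+1)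
        have h2 := ENNReal.toReal_mono hZω h1
        have h3 : (G (m+1) ω).toReal = 2^(m+1) * (Mt (2 * d m) ω).toReal := by
          rw [hGs, ENNReal.toReal_mul, ENNReal.toReal_pow]
          norm_num
        rwa [h3] at h2
      have hstep : modCont (fun x => ξ x ω) δ ≤ (1/2)^(m+1) * ζ ω := by
        calc modCont (fun x => ξ x ω) δ ≤ modCont (fun x => ξ x ω) (d m) :=
              hkc.2.2.2.2.2 δ (d m) hδ.1 hdm
          _ ≤ (Mt (2 * d m) ω).toReal := hkc.2.2.1 (d m) (hd0 m)
          _ ≤ (1/2)^(m+1) * ζ ω := by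
              have h4 := hζM
              have h5 : (0:ℝ) < 2^(m+1) := by positivity
              rw [div_pow, one_pow, div_mul_eq_mul_div, le_div_iff₀ h5]
              linarith
      have hh2 : (1/2:ℝ)^(m+1) ≤ h₀ δ := hh₀ge (m+1) δ hdm1.le
      calc modCont (fun x => ξ x ω) δ ≤ (1/2)^(m+1) * ζ ω := hstep
        _ ≤ h₀ δ * ζ ω := mul_le_mul_of_nonneg_right hh2 (hζnn ω)
        _ = ζ ω * h₀ δ := mul_comm _ _
end

section
/- Let (X,d) be a compact metric space, p ≥ 1 a constant, and ξ = ξ(x,ω) a jointly measurable random field on X with almost surely continuous sample paths such that sup_{x∈X} |ξ(x)|_p = 1. Suppose there exist constants α ∈ (0,1] and C₁ > 0 such that θ_p(δ) := |Δ(ξ,δ)|_p ≤ C₁ δ^α for all δ ∈ (0, 1/e). Then for every θ > 0 and ν > 0 there exist a constant C₂ = C₂(α,p,C₁) and a non-negative random variable τ with E τ^p = 1 such that, almost surely, for all δ ∈ (0,1/e): Δ(ξ,δ) ≤ C₂ · τ · δ^{αθ/(1+θ)} · (1+θ)^{−(1+ν)} · |ln δ|^{1+ν}. -/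
open MeasureTheory Filter Set
open scoped ENNReal NNReal

/-- The `p`-th moment norm `|ζ|_p = (E |ζ|^p)^{1/p}`. -/
noncomputable def pMom {Ω : Type*} [MeasurableSpace Ω] (P : Measure Ω)
    (p : ℝ) (ζ : Ω → ℝ) : ℝ≥0∞ :=
  (∫⁻ ω, ENNReal.ofReal (|ζ ω| ^ p) ∂P) ^ (1 / p)

private lemma mc_bddAbove {X : Type*} [MetricSpace X] {f : X → ℝ} {B : ℝ}
    (hB : ∀ x, |f x| ≤ B) (δ : ℝ) :
    BddAbove {r : ℝ | ∃ x y : X, dist x y ≤ δ ∧ r = |f x - f y|} := by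
  refine ⟨2 * B, ?_⟩
  rintro r ⟨x, y, -, rfl⟩
  calc |f x - f y| ≤ |f x| + |f y| := abs_sub _ _
    _ ≤ B + B := add_le_add (hB x) (hB y)
    _ = 2 * B := by ring

private lemma le_mc {X : Type*} [MetricSpace X] {f : X → ℝ} {B : ℝ}
    (hB : ∀ x, |f x| ≤ B) {x y : X} {δ : ℝ} (h : dist x y ≤ δ) :
    |f x - f y| ≤ modCont f δ :=
  le_csSup (mc_bddAbove hB δ) ⟨x, y, h, rfl⟩

private lemma mc_nonneg {X : Type*} [MetricSpace X] [Nonempty X] {f : X → ℝ} {B : ℝ}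
    (hB : ∀ x, |f x| ≤ B) {δ : ℝ} (hδ : 0 ≤ δ) : 0 ≤ modCont f δ := by
  obtain ⟨x⟩ := ‹Nonempty X›
  have := le_mc hB (x := x) (y := x) (by simpa [dist_self] using hδ)
  simpa using this

private lemma mc_le {X : Type*} [MetricSpace X] {f : X → ℝ} {δ c : ℝ} (h0 : 0 ≤ c)
    (h : ∀ x y : X, dist x y ≤ δ → |f x - f y| ≤ c) : modCont f δ ≤ c :=
  Real.sSup_le (by rintro r ⟨x, y, hxy, rfl⟩; exact h x y hxy) h0

private lemma iSup_rpow' {ι : Sort*} (g : ι → ℝ≥0∞) {q : ℝ} (hq : 0 < q) :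
    (⨆ i, g i) ^ q = ⨆ i, g i ^ q := by
  have h := (ENNReal.orderIsoRpow q hq).map_iSup g
  simp only [ENNReal.orderIsoRpow_apply] at h
  exact h


set_option maxHeartbeats 2000000 in
/-- quantitative factorable estimate obtained from the general
construction with `b_n = ν n⁻¹ (ln(n+1))^{-1-ν}` and `a_n = n^{-1-θ}`. -/
theorem factorable_estimate_Lp_with_log
    {X Ω : Type*} [MetricSpace X] [CompactSpace X]
    [MeasurableSpace X] [BorelSpace X] [MeasurableSpace Ω]
    (P : Measure Ω) [IsProbabilityMeasure P]
    (p : ℝ) (hp : 1 ≤ p)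
    (ξ : X → Ω → ℝ)
    (hmeas : Measurable fun q : X × Ω => ξ q.1 q.2)
    (hcont : ∀ᵐ ω ∂P, Continuous fun x => ξ x ω)
    (hsup : ⨆ x : X, pMom P p (ξ x) = 1)
    (α : ℝ) (hα : α ∈ Set.Ioc (0 : ℝ) 1) (C₁ : ℝ) (hC₁ : 0 < C₁)
    (hθp : ∀ δ ∈ Set.Ioo (0 : ℝ) (Real.exp (-1)),
      pMom P p (fun ω => modCont (fun x => ξ x ω) δ) ≤ ENNReal.ofReal (C₁ * δ ^ α)) :
    ∀ θ : ℝ, 0 < θ → ∀ ν : ℝ, 0 < ν →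
      ∃ C₂ : ℝ, 0 < C₂ ∧
        ∃ τ : Ω → ℝ, Measurable τ ∧ (∀ ω, 0 ≤ τ ω) ∧
          (∫⁻ ω, ENNReal.ofReal (τ ω ^ p) ∂P) = 1 ∧
          ∀ᵐ ω ∂P, ∀ δ ∈ Set.Ioo (0 : ℝ) (Real.exp (-1)),
            modCont (fun x => ξ x ω) δ ≤
              C₂ * τ ω * δ ^ (α * θ / (1 + θ)) * (1 + θ) ^ (-(1 + ν)) *
                |Real.log δ| ^ (1 + ν) := by
  intro θ hθ ν hν
  classical
  obtain ⟨hα0, hα1⟩ := hα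
  have hp0 : (0:ℝ) < p := lt_of_lt_of_le one_pos hp
  -- X is nonempty
  have hXne : Nonempty X := by
    by_contra h
    rw [not_nonempty_iff] at h
    rw [iSup_of_empty] at hsup
    simp at hsup
  -- dense sequence
  set u : ℕ → X := TopologicalSpace.denseSeq X with hu
  have hud : DenseRange u := TopologicalSpace.denseRange_denseSeq X
  have hmx : ∀ x : X, Measurable (ξ x) := fun x => hmeas.comp measurable_prodMk_left
  -- the countable sup process
  set G : ℝ → Ω → ℝ≥0∞ := fun r ω => ⨆ n : ℕ, ⨆ m : ℕ,
      if dist (u n) (u m) < r then ENNReal.ofReal |ξ (u n) ω - ξ (u m) ω| else 0 with hG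
  have hGmeas : ∀ r, Measurable (G r) := by
    intro r
    apply Measurable.iSup; intro n; apply Measurable.iSup; intro m
    by_cases h : dist (u n) (u m) < r
    · simpa [h] using ((hmx (u n)).sub (hmx (u m))).abs.ennreal_ofReal
    · simpa [h] using measurable_const
  have hGpmeas : ∀ r, Measurable fun ω => G r ω ^ p := fun r =>
    ENNReal.continuous_rpow_const.measurable.comp (hGmeas r)
  have hGmono : ∀ {r r' : ℝ}, r ≤ r' → ∀ ω, G r ω ≤ G r' ω := by
    intro r r' hrr ω
    refine iSup_le fun n => iSup_le fun m => ?_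
    refine le_trans ?_ (le_iSup_of_le n (le_iSup_of_le m le_rfl))
    by_cases h : dist (u n) (u m) < r
    · rw [if_pos h, if_pos (lt_of_lt_of_le h hrr)]
    · simp [h]
  -- upper bound: G below modCont
  have hB : ∀ ω, Continuous (fun x => ξ x ω) → ∀ r : ℝ, 0 ≤ r →
      G r ω ≤ ENNReal.ofReal (modCont (fun x => ξ x ω) r) := by
    intro ω hc r _hr
    obtain ⟨B, hBb⟩ := isCompact_univ.exists_bound_of_continuousOn hc.continuousOn
    have hBb' : ∀ x : X, |ξ x ω| ≤ B := fun x => by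
      simpa [Real.norm_eq_abs] using hBb x (mem_univ x)
    refine iSup_le fun n => iSup_le fun m => ?_
    by_cases h : dist (u n) (u m) < r
    · rw [if_pos h]
      exact ENNReal.ofReal_le_ofReal (le_mc hBb' h.le)
    · simp [h]
  -- lower bound: modCont below G
  have hA : ∀ ω, Continuous (fun x => ξ x ω) → ∀ δ r : ℝ, 0 ≤ δ → δ < r → G r ω ≠ ∞ →
      modCont (fun x => ξ x ω) δ ≤ (G r ω).toReal := by
    intro ω hc δ r hδ0 hδr hfin
    refine mc_le ENNReal.toReal_nonneg fun x y hxy => ?_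
    refine le_of_forall_pos_le_add fun ε hε => ?_
    obtain ⟨δ₁, hδ₁, hx⟩ := Metric.continuousAt_iff.1 (hc.continuousAt (x := x)) (ε/2) (by positivity)
    obtain ⟨δ₂, hδ₂, hy⟩ := Metric.continuousAt_iff.1 (hc.continuousAt (x := y)) (ε/2) (by positivity)
    set η := min (min δ₁ δ₂) ((r - δ)/2) with hη
    have hη0 : 0 < η := lt_min (lt_min hδ₁ hδ₂) (by linarith)
    obtain ⟨n, hn⟩ := hud.exists_dist_lt x hη0
    obtain ⟨m, hm⟩ := hud.exists_dist_lt y hη0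
    have hηr : η ≤ (r - δ)/2 := min_le_right _ _
    have hdnm : dist (u n) (u m) < r := by
      have h1 : dist (u n) (u m) ≤ dist (u n) x + dist x y + dist y (u m) := dist_triangle4 _ _ _ _
      have h2 : dist (u n) x = dist x (u n) := dist_comm _ _
      have h3 : dist y (u m) = dist y (u m) := rfl
      have h4 : dist y (u m) < η := hm
      rw [h2] at h1
      linarith
    have hterm : ENNReal.ofReal |ξ (u n) ω - ξ (u m) ω| ≤ G r ω := by
      refine le_trans ?_ (le_iSup_of_le n (le_iSup_of_le m le_rfl))
      rw [if_pos hdnm]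
    have h2 : |ξ (u n) ω - ξ (u m) ω| ≤ (G r ω).toReal :=
      (ENNReal.ofReal_le_iff_le_toReal hfin).1 hterm
    have hfx : |ξ (u n) ω - ξ x ω| < ε/2 := by
      have := hx (show dist (u n) x < δ₁ by
        have : dist (u n) x = dist x (u n) := dist_comm _ _
        rw [this]; exact lt_of_lt_of_le hn ((min_le_left _ _).trans (min_le_left _ _)))
      rwa [Real.dist_eq] at this
    have hfy : |ξ (u m) ω - ξ y ω| < ε/2 := by
      have := hy (show dist (u m) y < δ₂ by
        have : dist (u m) y = dist y (u m) := dist_comm _ _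
        rw [this]; exact lt_of_lt_of_le hm ((min_le_left _ _).trans (min_le_right _ _)))
      rwa [Real.dist_eq] at this
    have tri : |ξ x ω - ξ y ω| ≤
        |ξ x ω - ξ (u n) ω| + |ξ (u n) ω - ξ (u m) ω| + |ξ (u m) ω - ξ y ω| := by
      calc |ξ x ω - ξ y ω| ≤ |ξ x ω - ξ (u n) ω| + |ξ (u n) ω - ξ y ω| := abs_sub_le _ _ _
        _ ≤ |ξ x ω - ξ (u n) ω| + (|ξ (u n) ω - ξ (u m) ω| + |ξ (u m) ω - ξ y ω|) :=
            add_le_add_right (abs_sub_le _ _ _) _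
        _ = _ := by ring
    have hfx' : |ξ x ω - ξ (u n) ω| < ε/2 := by rwa [abs_sub_comm] at hfx
    have hfy' : |ξ (u m) ω - ξ y ω| < ε/2 := hfy
    linarith
  have hGfin : ∀ ω, Continuous (fun x => ξ x ω) → ∀ r : ℝ, 0 ≤ r → G r ω ≠ ∞ :=
    fun ω hc r hr => ((hB ω hc r hr).trans_lt ENNReal.ofReal_lt_top).ne
  -- moment bound
  have hMom : ∀ r : ℝ, r ∈ Set.Ioo (0:ℝ) (Real.exp (-1)) →
      ∫⁻ ω, (G r ω) ^ p ∂P ≤ (ENNReal.ofReal (C₁ * r ^ α)) ^ p := by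
    intro r hr
    have key : ∀ᵐ ω ∂P, (G r ω) ^ p ≤
        ENNReal.ofReal (|modCont (fun x => ξ x ω) r| ^ p) := by
      filter_upwards [hcont] with ω hc
      obtain ⟨B, hBb⟩ := isCompact_univ.exists_bound_of_continuousOn hc.continuousOn
      have hBb' : ∀ x : X, |ξ x ω| ≤ B := fun x => by
        simpa [Real.norm_eq_abs] using hBb x (mem_univ x)
      have h0 : 0 ≤ modCont (fun x => ξ x ω) r := mc_nonneg hBb' hr.1.le
      calc (G r ω) ^ p ≤ (ENNReal.ofReal (modCont (fun x => ξ x ω) r)) ^ p :=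
            ENNReal.rpow_le_rpow (hB ω hc r hr.1.le) hp0.le
        _ = ENNReal.ofReal (|modCont (fun x => ξ x ω) r| ^ p) := by
            rw [ENNReal.ofReal_rpow_of_nonneg h0 hp0.le, abs_of_nonneg h0]
    calc ∫⁻ ω, (G r ω) ^ p ∂P
        ≤ ∫⁻ ω, ENNReal.ofReal (|modCont (fun x => ξ x ω) r| ^ p) ∂P :=
          lintegral_mono_ae key
      _ = (pMom P p (fun ω => modCont (fun x => ξ x ω) r)) ^ p := by
          rw [pMom, ← ENNReal.rpow_mul, one_div, inv_mul_cancel₀ hp0.ne', ENNReal.rpow_one]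
      _ ≤ (ENNReal.ofReal (C₁ * r ^ α)) ^ p := ENNReal.rpow_le_rpow (hθp r hr) hp0.le
  -- sequences
  set t : ℕ → ℝ := fun k => Real.exp (-1) * (1 - 1/((k:ℝ)+2)) with ht
  set ρ : ℕ → ℝ := fun n => Real.exp (-(n:ℝ) - 3/2) with hρdef
  set c : ℕ → ℝ := fun n => C₁ * Real.exp ((-(n:ℝ) - 3/2) * α) * ((n:ℝ)+1) ^ (1+ν) with hcdef
  have htfrac : ∀ k : ℕ, 0 < 1/((k:ℝ)+2) ∧ 1/((k:ℝ)+2) ≤ 1/2 := by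
    intro k
    constructor
    · positivity
    · apply one_div_le_one_div_of_le (by norm_num)
      have : (0:ℝ) ≤ (k:ℝ) := Nat.cast_nonneg k
      linarith
  have ht_mem : ∀ k, t k ∈ Set.Ioo (0:ℝ) (Real.exp (-1)) := by
    intro k
    obtain ⟨h1, h2⟩ := htfrac k
    constructor
    · have : (0:ℝ) < 1 - 1/((k:ℝ)+2) := by linarith
      exact mul_pos (Real.exp_pos _) this
    · have : 1 - 1/((k:ℝ)+2) < 1 := by linarith
      calc t k < Real.exp (-1) * 1 := by
            exact mul_lt_mul_of_pos_left this (Real.exp_pos _)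
        _ = Real.exp (-1) := mul_one _
  have ht_mono : Monotone t := by
    intro a b hab
    have hab' : (a:ℝ) + 2 ≤ (b:ℝ) + 2 := by
      have : (a:ℝ) ≤ (b:ℝ) := Nat.cast_le.2 hab
      linarith
    have := one_div_le_one_div_of_le (by positivity : (0:ℝ) < (a:ℝ)+2) hab'
    have := mul_le_mul_of_nonneg_left (by linarith : 1 - 1/((a:ℝ)+2) ≤ 1 - 1/((b:ℝ)+2))
      (Real.exp_pos (-1)).le
    simpa [ht] using this
  have hρ_mem : ∀ n, ρ n ∈ Set.Ioo (0:ℝ) (Real.exp (-1)) := by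
    intro n
    refine ⟨Real.exp_pos _, Real.exp_lt_exp.2 ?_⟩
    have : (0:ℝ) ≤ (n:ℝ) := Nat.cast_nonneg n
    linarith
  have hc_pos : ∀ n, 0 < c n := by
    intro n
    have h1 : (0:ℝ) < ((n:ℝ)+1) ^ (1+ν) := Real.rpow_pos_of_pos (by positivity) _
    exact mul_pos (mul_pos hC₁ (Real.exp_pos _)) h1
  -- key identity : C₁ * ρ n ^ α = c n * ((n:ℝ)+1) ^ (-(1+ν))
  have hkeyid : ∀ n : ℕ, C₁ * ρ n ^ α = c n * ((n:ℝ)+1) ^ (-(1+ν)) := by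
    intro n
    have h1 : ρ n ^ α = Real.exp ((-(n:ℝ) - 3/2) * α) := by
      rw [hρdef]
      exact (Real.exp_mul _ _).symm
    have h2 : ((n:ℝ)+1) ^ (1+ν) * ((n:ℝ)+1) ^ (-(1+ν)) = 1 := by
      rw [← Real.rpow_add (by positivity), add_neg_cancel, Real.rpow_zero]
    rw [hcdef, h1]
    calc C₁ * Real.exp ((-(n:ℝ) - 3/2) * α)
        = C₁ * Real.exp ((-(n:ℝ) - 3/2) * α) * (((n:ℝ)+1) ^ (1+ν) * ((n:ℝ)+1) ^ (-(1+ν))) := by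
          rw [h2, mul_one]
      _ = C₁ * Real.exp ((-(n:ℝ) - 3/2) * α) * ((n:ℝ)+1) ^ (1+ν) * ((n:ℝ)+1) ^ (-(1+ν)) := by
          ring
  -- processes
  set T : Ω → ℝ≥0∞ := fun ω => ⨆ k, G (t k) ω with hT
  set V : Ω → ℝ≥0∞ := fun ω => ⨆ n, (ENNReal.ofReal (c n))⁻¹ * G (ρ n) ω with hV
  set W : Ω → ℝ≥0∞ := fun ω => 1 ⊔ V ω ⊔ ((ENNReal.ofReal C₁)⁻¹ * T ω) with hW
  have hTmeas : Measurable T := Measurable.iSup fun k => hGmeas _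
  have hVmeas : Measurable V := Measurable.iSup fun n => measurable_const.mul (hGmeas _)
  have hWmeas : Measurable W := (measurable_const.sup hVmeas).sup (measurable_const.mul hTmeas)
  have hWpmeas : Measurable fun ω => W ω ^ p :=
    ENNReal.continuous_rpow_const.measurable.comp hWmeas
  -- integral of T^p
  have hTint : ∫⁻ ω, T ω ^ p ∂P ≤ ENNReal.ofReal C₁ ^ p := by
    have heq : ∀ ω, T ω ^ p = ⨆ k, G (t k) ω ^ p := by
      intro ω; rw [hT]; exact iSup_rpow' _ hp0
    have hmono' : Monotone fun k => fun ω => G (t k) ω ^ p := by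
      intro a b hab ω
      exact ENNReal.rpow_le_rpow (hGmono (ht_mono hab) ω) hp0.le
    calc ∫⁻ ω, T ω ^ p ∂P = ∫⁻ ω, ⨆ k, G (t k) ω ^ p ∂P := lintegral_congr heq
      _ = ⨆ k, ∫⁻ ω, G (t k) ω ^ p ∂P := lintegral_iSup (fun k => hGpmeas _) hmono'
      _ ≤ ENNReal.ofReal C₁ ^ p := by
          refine iSup_le fun k => (hMom _ (ht_mem k)).trans ?_
          refine ENNReal.rpow_le_rpow (ENNReal.ofReal_le_ofReal ?_) hp0.le
          have h1 : t k ^ α ≤ 1 := Real.rpow_le_one (ht_mem k).1.le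
            (by
              have := (ht_mem k).2
              have he : Real.exp (-1) < 1 := by
                rw [Real.exp_lt_one_iff]; norm_num
              linarith) hα0.le
          nlinarith [Real.rpow_nonneg (ht_mem k).1.le α]
  -- integral of V^p
  set S : ℝ≥0∞ := ∑' n : ℕ, ENNReal.ofReal (((n:ℝ)+1) ^ (-(1+ν))) with hS
  have hSfin : S ≠ ∞ := by
    have hsum : Summable fun n : ℕ => ((n:ℝ)+1) ^ (-(1+ν)) := by
      have h1 : Summable fun n : ℕ => ((n:ℝ)) ^ (-(1+ν)) := Real.summable_nat_rpow.2 (by linarith)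
      have h2 := (summable_nat_add_iff 1).2 h1
      apply h2.congr
      intro n
      push_cast
      ring_nf
    rw [hS, ← ENNReal.ofReal_tsum_of_nonneg (fun n => Real.rpow_nonneg (by positivity) _) hsum]
    exact ENNReal.ofReal_ne_top
  have hVint : ∫⁻ ω, V ω ^ p ∂P ≤ S := by
    have hpt : ∀ ω, V ω ^ p ≤ ∑' n, ((ENNReal.ofReal (c n))⁻¹ * G (ρ n) ω) ^ p := by
      intro ω
      rw [hV, iSup_rpow' _ hp0]
      exact iSup_le fun n => ENNReal.le_tsum n
    have hmeasn : ∀ n : ℕ, Measurable fun ω => ((ENNReal.ofReal (c n))⁻¹ * G (ρ n) ω) ^ p :=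
      fun n => ENNReal.continuous_rpow_const.measurable.comp (measurable_const.mul (hGmeas _))
    calc ∫⁻ ω, V ω ^ p ∂P
        ≤ ∫⁻ ω, ∑' n, ((ENNReal.ofReal (c n))⁻¹ * G (ρ n) ω) ^ p ∂P := lintegral_mono hpt
      _ = ∑' n, ∫⁻ ω, ((ENNReal.ofReal (c n))⁻¹ * G (ρ n) ω) ^ p ∂P :=
          lintegral_tsum fun n => (hmeasn n).aemeasurable
      _ ≤ S := by
          rw [hS]
          refine ENNReal.tsum_le_tsum fun n => ?_
          have hcne : ENNReal.ofReal (c n) ≠ 0 := (ENNReal.ofReal_pos.2 (hc_pos n)).ne'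
          have hcnt : ENNReal.ofReal (c n) ≠ ∞ := ENNReal.ofReal_ne_top
          have hcpne : ENNReal.ofReal (c n) ^ p ≠ 0 := by
            simp [ENNReal.rpow_eq_zero_iff, hcne, hcnt]
          have hcpnt : ENNReal.ofReal (c n) ^ p ≠ ∞ := by
            simp [ENNReal.rpow_eq_top_iff, hcne, hcnt]
          calc ∫⁻ ω, ((ENNReal.ofReal (c n))⁻¹ * G (ρ n) ω) ^ p ∂P
              = ∫⁻ ω, (ENNReal.ofReal (c n) ^ p)⁻¹ * G (ρ n) ω ^ p ∂P := by
                apply lintegral_congr; intro ω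
                rw [ENNReal.mul_rpow_of_nonneg _ _ hp0.le, ENNReal.inv_rpow]
            _ = (ENNReal.ofReal (c n) ^ p)⁻¹ * ∫⁻ ω, G (ρ n) ω ^ p ∂P :=
                lintegral_const_mul _ (hGpmeas _)
            _ ≤ (ENNReal.ofReal (c n) ^ p)⁻¹ * (ENNReal.ofReal (C₁ * ρ n ^ α)) ^ p :=
                mul_le_mul_right (hMom _ (hρ_mem n)) _
            _ = ENNReal.ofReal (((n:ℝ)+1) ^ (-(1+ν))) ^ p := by
                rw [hkeyid n, ENNReal.ofReal_mul (hc_pos n).le,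
                  ENNReal.mul_rpow_of_nonneg _ _ hp0.le, ← mul_assoc,
                  ENNReal.inv_mul_cancel hcpne hcpnt, one_mul]
            _ ≤ ENNReal.ofReal (((n:ℝ)+1) ^ (-(1+ν))) := by
                have hr0 : (0:ℝ) < ((n:ℝ)+1) ^ (-(1+ν)) := Real.rpow_pos_of_pos (by positivity) _
                have hr1 : ((n:ℝ)+1) ^ (-(1+ν)) ≤ 1 :=
                  Real.rpow_le_one_of_one_le_of_nonpos (by simp [Nat.cast_nonneg]) (by linarith)
                rw [ENNReal.ofReal_rpow_of_nonneg hr0.le hp0.le]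
                apply ENNReal.ofReal_le_ofReal
                have h3 := Real.rpow_le_rpow_of_exponent_ge hr0 hr1 hp
                simpa using h3
  -- W bounds
  have hWge1 : ∀ ω, 1 ≤ W ω := fun ω => le_sup_left.trans le_sup_left
  have hTleW : ∀ ω, T ω ≤ ENNReal.ofReal C₁ * W ω := by
    intro ω
    have h1 : (ENNReal.ofReal C₁)⁻¹ * T ω ≤ W ω := le_sup_right
    calc T ω = ENNReal.ofReal C₁ * ((ENNReal.ofReal C₁)⁻¹ * T ω) := by
          rw [← mul_assoc, ENNReal.mul_inv_cancel (ENNReal.ofReal_pos.2 hC₁).ne'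
            ENNReal.ofReal_ne_top, one_mul]
      _ ≤ ENNReal.ofReal C₁ * W ω := mul_le_mul_right h1 _
  have hGleW : ∀ (n : ℕ) (ω : Ω), G (ρ n) ω ≤ ENNReal.ofReal (c n) * W ω := by
    intro n ω
    have h0 : (ENNReal.ofReal (c n))⁻¹ * G (ρ n) ω ≤ V ω := le_iSup
      (fun n => (ENNReal.ofReal (c n))⁻¹ * G (ρ n) ω) n
    have h1 : (ENNReal.ofReal (c n))⁻¹ * G (ρ n) ω ≤ W ω :=
      h0.trans (le_sup_right.trans le_sup_left)
    calc G (ρ n) ω = ENNReal.ofReal (c n) * ((ENNReal.ofReal (c n))⁻¹ * G (ρ n) ω) := by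
          rw [← mul_assoc, ENNReal.mul_inv_cancel (ENNReal.ofReal_pos.2 (hc_pos n)).ne'
            ENNReal.ofReal_ne_top, one_mul]
      _ ≤ ENNReal.ofReal (c n) * W ω := mul_le_mul_right h1 _
  -- integral of W^p
  set I : ℝ≥0∞ := ∫⁻ ω, W ω ^ p ∂P with hI
  have hWppt : ∀ ω, W ω ^ p ≤ 1 + V ω ^ p + ((ENNReal.ofReal C₁)⁻¹ * T ω) ^ p := by
    intro ω
    have hmono : Monotone fun x : ℝ≥0∞ => x ^ p := ENNReal.monotone_rpow_of_nonneg hp0.le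
    rw [hW]
    show (1 ⊔ V ω ⊔ ((ENNReal.ofReal C₁)⁻¹ * T ω)) ^ p ≤ _
    rw [hmono.map_sup, hmono.map_sup, ENNReal.one_rpow]
    refine sup_le (sup_le ?_ ?_) ?_
    · exact le_self_add.trans le_self_add
    · exact le_add_self.trans le_self_add
    · exact le_add_self
  have hxint : ∫⁻ ω, ((ENNReal.ofReal C₁)⁻¹ * T ω) ^ p ∂P ≤ 1 := by
    have : ∀ ω, ((ENNReal.ofReal C₁)⁻¹ * T ω) ^ p = (ENNReal.ofReal C₁ ^ p)⁻¹ * T ω ^ p := by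
      intro ω
      rw [ENNReal.mul_rpow_of_nonneg _ _ hp0.le, ENNReal.inv_rpow]
    calc ∫⁻ ω, ((ENNReal.ofReal C₁)⁻¹ * T ω) ^ p ∂P
        = (ENNReal.ofReal C₁ ^ p)⁻¹ * ∫⁻ ω, T ω ^ p ∂P := by
          rw [lintegral_congr this]
          exact lintegral_const_mul _ (ENNReal.continuous_rpow_const.measurable.comp hTmeas)
      _ ≤ (ENNReal.ofReal C₁ ^ p)⁻¹ * ENNReal.ofReal C₁ ^ p := mul_le_mul_right hTint _
      _ ≤ 1 := by
          rw [← ENNReal.div_eq_inv_mul]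
          exact ENNReal.div_self_le_one
  have hI_le : I ≤ 1 + S + 1 := by
    have hVpm : Measurable fun ω => V ω ^ p :=
      ENNReal.continuous_rpow_const.measurable.comp hVmeas
    have hxpm : Measurable fun ω => ((ENNReal.ofReal C₁)⁻¹ * T ω) ^ p :=
      ENNReal.continuous_rpow_const.measurable.comp (measurable_const.mul hTmeas)
    calc I ≤ ∫⁻ ω, (1 + V ω ^ p + ((ENNReal.ofReal C₁)⁻¹ * T ω) ^ p) ∂P :=
          lintegral_mono hWppt
      _ = (∫⁻ _, (1:ℝ≥0∞) ∂P) + (∫⁻ ω, V ω ^ p ∂P) + ∫⁻ ω, ((ENNReal.ofReal C₁)⁻¹ * T ω) ^ p ∂P := by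
          rw [lintegral_add_left (f := fun ω => 1 + V ω ^ p) (measurable_const.add hVpm),
            lintegral_add_left measurable_const]
      _ ≤ 1 + S + 1 := by
          have h1 : (∫⁻ _, (1:ℝ≥0∞) ∂P) = 1 := by simp
          rw [h1]
          exact add_le_add (add_le_add_right hVint 1) hxint
  have hIfin : I ≠ ∞ := by
    refine ne_top_of_le_ne_top ?_ hI_le
    simp [ENNReal.add_ne_top, hSfin]
  have hI1 : (1:ℝ≥0∞) ≤ I := by
    calc (1:ℝ≥0∞) = ∫⁻ _, (1:ℝ≥0∞) ∂P := by simp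
      _ ≤ I := by
          apply lintegral_mono
          intro ω
          calc (1:ℝ≥0∞) = 1 ^ p := (ENNReal.one_rpow p).symm
            _ ≤ W ω ^ p := ENNReal.rpow_le_rpow (hWge1 ω) hp0.le
  have hI0 : I ≠ 0 := (lt_of_lt_of_le zero_lt_one hI1).ne'
  -- normalisation constant
  set c₀ : ℝ := I.toReal ^ (1/p) with hc₀def
  have hItR : 1 ≤ I.toReal := by
    rw [← ENNReal.toReal_one]
    exact ENNReal.toReal_mono hIfin hI1
  have hc₀1 : (1:ℝ) ≤ c₀ := by
    calc (1:ℝ) = 1 ^ (1/p) := (Real.one_rpow _).symm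
      _ ≤ I.toReal ^ (1/p) := Real.rpow_le_rpow zero_le_one hItR (by positivity)
  have hc₀0 : (0:ℝ) < c₀ := lt_of_lt_of_le one_pos hc₀1
  -- the random variable τ
  set τ : Ω → ℝ := fun ω => (W ω).toReal / c₀ with hτdef
  have hτmeas : Measurable τ := hWmeas.ennreal_toReal.div_const _
  have hτnn : ∀ ω, 0 ≤ τ ω := fun ω => div_nonneg ENNReal.toReal_nonneg hc₀0.le
  have hWae : ∀ᵐ ω ∂P, W ω < ∞ := by
    have h := ae_lt_top hWpmeas hIfin
    filter_upwards [h] with ω h2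
    exact (ENNReal.rpow_lt_top_iff_of_pos hp0).1 h2
  have hc₀p : c₀ ^ p = I.toReal := by
    rw [hc₀def, ← Real.rpow_mul ENNReal.toReal_nonneg, one_div,
      inv_mul_cancel₀ hp0.ne', Real.rpow_one]
  have hint : ∫⁻ ω, ENNReal.ofReal (τ ω ^ p) ∂P = 1 := by
    have hpt : ∀ᵐ ω ∂P, ENNReal.ofReal (τ ω ^ p) = W ω ^ p * I⁻¹ := by
      filter_upwards [hWae] with ω hfin
      have h0 : τ ω = (W ω).toReal / c₀ := rfl
      rw [h0, Real.div_rpow ENNReal.toReal_nonneg hc₀0.le,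
        ENNReal.ofReal_div_of_pos (by positivity), hc₀p, ENNReal.ofReal_toReal hIfin,
        ← ENNReal.ofReal_rpow_of_nonneg ENNReal.toReal_nonneg hp0.le,
        ENNReal.ofReal_toReal hfin.ne, ENNReal.div_eq_inv_mul, mul_comm]
    rw [lintegral_congr_ae hpt, lintegral_mul_const' I⁻¹ _ (by simp [hI0]),
      ENNReal.mul_inv_cancel hI0 hIfin]
  -- constants
  set Aθ : ℝ := (1+θ) ^ (1+ν) with hAθdef
  have hAθ0 : 0 < Aθ := Real.rpow_pos_of_pos (by linarith) _
  have hQ : (1+θ) ^ (-(1+ν)) = Aθ⁻¹ := by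
    rw [hAθdef, ← Real.rpow_neg (by linarith : (0:ℝ) ≤ 1+θ)]
  set C₂ : ℝ := C₁ * c₀ * Aθ * Real.exp 3 with hC₂def
  have hC₂0 : 0 < C₂ := by
    rw [hC₂def]
    exact mul_pos (mul_pos (mul_pos hC₁ hc₀0) hAθ0) (Real.exp_pos 3)
  set b : ℝ := α * θ / (1 + θ) with hbdef
  have hb0 : 0 < b := div_pos (mul_pos hα0 hθ) (by linarith)
  have hbα : b ≤ α := by
    rw [hbdef, div_le_iff₀ (by linarith)]
    nlinarith
  have hb1 : b ≤ 1 := hbα.trans hα1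
  refine ⟨C₂, hC₂0, τ, hτmeas, hτnn, hint, ?_⟩
  filter_upwards [hcont, hWae] with ω hcg hWfin
  intro δ hδ
  obtain ⟨hδ0, hδe⟩ := hδ
  have hWt : (W ω).toReal = c₀ * τ ω := by
    have h0 : τ ω = (W ω).toReal / c₀ := rfl
    rw [h0]
    field_simp
  have hkey : ∀ r a : ℝ, 0 ≤ a → δ < r → G r ω ≤ ENNReal.ofReal a * W ω →
      modCont (fun x => ξ x ω) δ ≤ a * (c₀ * τ ω) := by
    intro r a ha hδr hle
    have hfin2 : ENNReal.ofReal a * W ω ≠ ∞ := ENNReal.mul_ne_top ENNReal.ofReal_ne_top hWfin.ne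
    have h1 : modCont (fun x => ξ x ω) δ ≤ (G r ω).toReal :=
      hA ω hcg δ r hδ0.le hδr (ne_top_of_le_ne_top hfin2 hle)
    refine h1.trans ?_
    calc (G r ω).toReal ≤ (ENNReal.ofReal a * W ω).toReal := ENNReal.toReal_mono hfin2 hle
      _ = a * (W ω).toReal := by rw [ENNReal.toReal_mul, ENNReal.toReal_ofReal ha]
      _ = a * (c₀ * τ ω) := by rw [hWt]
  have hlog1 : 1 ≤ |Real.log δ| := by
    have h1 : Real.log δ < -1 := by
      have := Real.log_lt_log hδ0 hδe
      rwa [Real.log_exp] at this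
    rw [abs_of_neg (by linarith)]
    linarith
  have hLppos : 1 ≤ |Real.log δ| ^ (1+ν) := Real.one_le_rpow hlog1 (by linarith)
  by_cases hcase : Real.exp (-2) < δ
  · -- large δ : use T
    have hδe1 : δ * Real.exp 1 < 1 := by
      have h1 := mul_lt_mul_of_pos_right hδe (Real.exp_pos 1)
      rwa [← Real.exp_add, neg_add_cancel, Real.exp_zero] at h1
    set s : ℝ := 1 - δ * Real.exp 1 with hsdef
    have hs0 : 0 < s := by rw [hsdef]; linarith
    obtain ⟨k, hk⟩ := exists_nat_gt (1/s)
    have hks : 1/((k:ℝ)+2) < s := by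
      rw [div_lt_iff₀ (by positivity)]
      rw [div_lt_iff₀ hs0] at hk
      have : (0:ℝ) ≤ (k:ℝ) := Nat.cast_nonneg k
      nlinarith
    have hδtk : δ < t k := by
      have h1 : δ * Real.exp 1 < 1 - 1/((k:ℝ)+2) := by rw [hsdef] at hks; linarith
      have h2 : Real.exp (-1) * (δ * Real.exp 1) = δ := by
        rw [← mul_assoc, mul_comm (Real.exp (-1)) δ, mul_assoc, ← Real.exp_add,
          neg_add_cancel, Real.exp_zero, mul_one]
      calc δ = Real.exp (-1) * (δ * Real.exp 1) := h2.symm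
        _ < Real.exp (-1) * (1 - 1/((k:ℝ)+2)) := mul_lt_mul_of_pos_left h1 (Real.exp_pos _)
        _ = t k := rfl
    have hGle : G (t k) ω ≤ ENNReal.ofReal C₁ * W ω :=
      le_trans (le_iSup (fun k => G (t k) ω) k) (hTleW ω)
    have hmc := hkey (t k) C₁ hC₁.le hδtk hGle
    have hδb : Real.exp (-2) ≤ δ ^ b := by
      calc Real.exp (-2) ≤ Real.exp (-2 * b) := Real.exp_le_exp.2 (by nlinarith)
        _ = Real.exp (-2) ^ b := Real.exp_mul _ _
        _ ≤ δ ^ b := Real.rpow_le_rpow (Real.exp_pos _).le hcase.le hb0.le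
    have hfac : 1 ≤ Real.exp 3 * δ ^ b * |Real.log δ| ^ (1+ν) := by
      have h3 : 1 ≤ Real.exp 3 * Real.exp (-2) := by
        rw [← Real.exp_add]
        exact Real.one_le_exp (by norm_num)
      have h4 : Real.exp 3 * Real.exp (-2) ≤ Real.exp 3 * δ ^ b :=
        mul_le_mul_of_nonneg_left hδb (Real.exp_pos 3).le
      have h5 : 1 ≤ Real.exp 3 * δ ^ b := le_trans h3 h4
      calc (1:ℝ) = 1 * 1 := (one_mul 1).symm
        _ ≤ (Real.exp 3 * δ ^ b) * (|Real.log δ| ^ (1+ν)) :=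
            mul_le_mul h5 hLppos zero_le_one (by linarith)
    have hτ0 : 0 ≤ c₀ * τ ω := mul_nonneg hc₀0.le (hτnn ω)
    calc modCont (fun x => ξ x ω) δ ≤ C₁ * (c₀ * τ ω) := hmc
      _ ≤ C₁ * (c₀ * τ ω) * (Real.exp 3 * δ ^ b * |Real.log δ| ^ (1+ν)) :=
          le_mul_of_one_le_right (mul_nonneg hC₁.le hτ0) hfac
      _ = C₂ * τ ω * δ ^ b * (1+θ) ^ (-(1+ν)) * |Real.log δ| ^ (1+ν) := by
          rw [hQ, hC₂def]
          field_simp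
  · -- small δ : use the dyadic scales
    push_neg at hcase
    have hlogδ2 : Real.log δ ≤ -2 := by
      have := Real.log_le_log hδ0 hcase
      rwa [Real.log_exp] at this
    set L : ℝ := -Real.log δ with hLdef
    have hL2 : 2 ≤ L := by rw [hLdef]; linarith
    set m : ℕ := ⌊L⌋₊ with hm
    have hmL : (m:ℝ) ≤ L := Nat.floor_le (by linarith)
    have hLm : L < m + 1 := Nat.lt_floor_add_one L
    have hm2 : 2 ≤ m := Nat.le_floor (by exact_mod_cast hL2)
    set n : ℕ := m - 2 with hn
    have hnm : ((n:ℝ)) + 2 = (m:ℝ) := by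
      have h := Nat.sub_add_cancel hm2
      have h2 : ((n + 2 : ℕ) : ℝ) = (m:ℝ) := by
        rw [hn, h]
      push_cast at h2
      linarith
    have hδeq : δ = Real.exp (-L) := by
      rw [hLdef, neg_neg, Real.exp_log hδ0]
    have hδup : δ ≤ Real.exp (-((n:ℝ)+2)) := by
      rw [hδeq]
      apply Real.exp_le_exp.2
      linarith
    have hδlow : Real.exp (-((n:ℝ)+3)) ≤ δ := by
      rw [hδeq]
      apply Real.exp_le_exp.2
      linarith
    have hδρ : δ < ρ n := by
      refine lt_of_le_of_lt hδup ?_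
      have hρn : ρ n = Real.exp (-(n:ℝ) - 3/2) := rfl
      rw [hρn]
      exact Real.exp_lt_exp.2 (by linarith)
    have hmc := hkey (ρ n) (c n) (hc_pos n).le hδρ (hGleW n ω)
    have hE : Real.exp ((-(n:ℝ) - 3/2) * α) ≤ Real.exp 3 * δ ^ b := by
      have hn0 : (0:ℝ) ≤ (n:ℝ) := Nat.cast_nonneg n
      have hexp : (-(n:ℝ) - 3/2) * α ≤ 3 + (-((n:ℝ)+3)) * b := by
        have h1 : ((n:ℝ)+3) * b ≤ ((n:ℝ)+3) * α := mul_le_mul_of_nonneg_left hbα (by linarith)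
        nlinarith
      calc Real.exp ((-(n:ℝ) - 3/2) * α) ≤ Real.exp (3 + (-((n:ℝ)+3)) * b) :=
            Real.exp_le_exp.2 hexp
        _ = Real.exp 3 * Real.exp (-((n:ℝ)+3)) ^ b := by rw [Real.exp_add, Real.exp_mul]
        _ ≤ Real.exp 3 * δ ^ b :=
            mul_le_mul_of_nonneg_left (Real.rpow_le_rpow (Real.exp_pos _).le hδlow hb0.le)
              (Real.exp_pos 3).le
    have hN : ((n:ℝ)+1) ^ (1+ν) ≤ L ^ (1+ν) :=
      Real.rpow_le_rpow (by positivity) (by linarith) (by linarith)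
    have hLabs : |Real.log δ| = L := by
      rw [hLdef, abs_of_neg (by linarith : Real.log δ < 0)]
    have hτ0 : 0 ≤ c₀ * τ ω := mul_nonneg hc₀0.le (hτnn ω)
    have hcn : c n = C₁ * Real.exp ((-(n:ℝ) - 3/2) * α) * ((n:ℝ)+1) ^ (1+ν) := rfl
    calc modCont (fun x => ξ x ω) δ ≤ c n * (c₀ * τ ω) := hmc
      _ = C₁ * Real.exp ((-(n:ℝ) - 3/2) * α) * ((n:ℝ)+1) ^ (1+ν) * (c₀ * τ ω) := by rw [hcn]
      _ ≤ C₁ * (Real.exp 3 * δ ^ b) * L ^ (1+ν) * (c₀ * τ ω) := by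
          refine mul_le_mul_of_nonneg_right ?_ hτ0
          refine mul_le_mul (mul_le_mul_of_nonneg_left hE hC₁.le) hN (by positivity) ?_
          exact mul_nonneg hC₁.le (by positivity)
      _ = C₂ * τ ω * δ ^ b * (1+θ) ^ (-(1+ν)) * |Real.log δ| ^ (1+ν) := by
          rw [hLabs, hQ, hC₂def]
          field_simp
end

section
/- Let (ξ_n)_{n≥1} be a sequence of random variables on a probability space (Ω,B,P) such that ξ_n → 0 almost surely as n → ∞. Then there exist a non-negative, almost surely finite random variable η and a deterministic sequence (ε_n)_{n≥1} of positive reals converging to 0 such that, almost surely, |ξ_n| ≤ η · ε_n for every n. -/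
open MeasureTheory Filter
open scoped ENNReal

/-- a sequence of random variables converging to `0` almost surely admits a
factorable bound `|ξ_n| ≤ η · ε_n` with a non-negative finite random variable `η` and a
deterministic positive sequence `ε_n → 0`. -/
theorem factorable_bound_of_ae_tendsto_zero
    {Ω : Type*} [MeasurableSpace Ω] (P : Measure Ω) [IsProbabilityMeasure P]
    (ξ : ℕ → Ω → ℝ) (hm : ∀ n, Measurable (ξ n))
    (h : ∀ᵐ ω ∂P, Filter.Tendsto (fun n => ξ n ω) Filter.atTop (nhds 0)) :
    ∃ (η : Ω → ℝ) (ε : ℕ → ℝ),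
      Measurable η ∧ (∀ ω, 0 ≤ η ω) ∧ (∀ n, 0 < ε n) ∧
      Filter.Tendsto ε Filter.atTop (nhds 0) ∧
      ∀ᵐ ω ∂P, ∀ n, |ξ n ω| ≤ η ω * ε n := by
  classical
  -- the good sets
  set A : ℕ → ℕ → Set Ω := fun k N => {ω | ∀ n, N ≤ n → |ξ n ω| ≤ ((k : ℝ) + 1)⁻¹} with hA
  have hAmeas : ∀ k N, MeasurableSet (A k N) := by
    intro k N
    have : A k N = ⋂ n, ⋂ _ : N ≤ n, {ω | |ξ n ω| ≤ ((k : ℝ) + 1)⁻¹} := by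
      ext ω; simp [hA, Set.mem_iInter]
    rw [this]
    exact MeasurableSet.iInter fun n => MeasurableSet.iInter fun _ =>
      measurableSet_le ((hm n).abs) measurable_const
  have hAmono : ∀ k, Monotone (A k) := by
    intro k N N' hNN' ω hω n hn
    exact hω n (le_trans hNN' hn)
  -- complements shrink to a null set
  have hC0 : ∀ k, Tendsto (fun N => P ((A k N)ᶜ)) atTop (nhds 0) := by
    intro k
    have hnull : P (⋂ N, (A k N)ᶜ) = 0 := by
      rw [measure_eq_zero_iff_ae_notMem]
      filter_upwards [h] with ω hω
      have hpos : (0 : ℝ) < ((k : ℝ) + 1)⁻¹ := by positivity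
      have := Metric.tendsto_atTop.mp hω (((k : ℝ) + 1)⁻¹) hpos
      obtain ⟨N, hN⟩ := this
      simp only [Set.mem_iInter, Set.mem_compl_iff, not_forall, not_not]
      refine ⟨N, fun n hn => ?_⟩
      have := hN n hn
      simp only [Real.dist_eq, sub_zero] at this
      exact this.le
    have := tendsto_measure_iInter_atTop (μ := P)
      (fun N => (hAmeas k N).compl.nullMeasurableSet)
      (fun N N' hNN' => Set.compl_subset_compl.2 (hAmono k hNN'))
      ⟨0, measure_ne_top _ _⟩
    rwa [hnull] at this
  -- choose thresholds
  have hchoice : ∀ k, ∃ N, P ((A k N)ᶜ) ≤ (2 : ℝ≥0∞)⁻¹ ^ k := by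
    intro k
    have hpos : (0 : ℝ≥0∞) < (2 : ℝ≥0∞)⁻¹ ^ k := by
      apply ENNReal.pow_pos; simp
    obtain ⟨N, hN⟩ := ((hC0 k).eventually_le_const hpos).exists
    exact ⟨N, hN⟩
  choose N hN using hchoice
  -- strictly increasing thresholds
  let M : ℕ → ℕ := fun k => k + (Finset.range (k + 1)).sup N
  have hMN : ∀ k, N k ≤ M k := fun k =>
    le_add_of_nonneg_of_le (Nat.zero_le _)
      (Finset.le_sup (Finset.mem_range.2 (Nat.lt_succ_self k)))
  have hMmono : StrictMono M := by
    apply strictMono_nat_of_lt_succ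
    intro k
    exact Nat.add_lt_add_of_lt_of_le (Nat.lt_succ_self k)
      (Finset.sup_mono (Finset.range_subset_range.2 (Nat.le_succ _)))
  have hMk : ∀ k, k ≤ M k := fun k => Nat.le_add_right _ _
  -- Borel-Cantelli
  have hBC : ∀ᵐ ω ∂P, ∀ᶠ k in atTop, ω ∉ (A k (M k))ᶜ := by
    apply measure_setOf_frequently_eq_zero
    have hle : ∀ k, P ((A k (M k))ᶜ) ≤ (2 : ℝ≥0∞)⁻¹ ^ k := fun k =>
      le_trans (measure_mono (Set.compl_subset_compl.2 (hAmono k (hMN k)))) (hN k)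
    refine ne_top_of_le_ne_top ?_ (ENNReal.tsum_le_tsum hle)
    rw [ENNReal.tsum_geometric, ENNReal.one_sub_inv_two, inv_inv]
    exact ENNReal.ofNat_ne_top
  -- define ε
  set c : ℕ → ℕ := fun n => Nat.findGreatest (fun j => M j ≤ n) n with hc
  set ε : ℕ → ℝ := fun n => ((c n : ℝ) + 1)⁻¹ with hε
  have hεpos : ∀ n, 0 < ε n := by intro n; rw [hε]; positivity
  have hεle : ∀ k n, M k ≤ n → ε n ≤ ((k : ℝ) + 1)⁻¹ := by
    intro k n hkn
    have hk : k ≤ Nat.findGreatest (fun j => M j ≤ n) n :=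
      Nat.le_findGreatest (le_trans (hMk k) hkn) hkn
    rw [hε]
    have hcast : (k : ℝ) + 1 ≤ (Nat.findGreatest (fun j => M j ≤ n) n : ℝ) + 1 := by
      have h1 : (k : ℝ) ≤ (Nat.findGreatest (fun j => M j ≤ n) n : ℝ) := by exact_mod_cast hk
      linarith
    exact inv_anti₀ (by positivity) hcast
  have hεtendsto : Tendsto ε atTop (nhds 0) := by
    rw [Metric.tendsto_atTop]
    intro δ hδ
    obtain ⟨k, hk⟩ := exists_nat_one_div_lt hδ
    refine ⟨M k, fun n hn => ?_⟩
    rw [Real.dist_eq, sub_zero, abs_of_pos (hεpos n)]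
    calc ε n ≤ ((k : ℝ) + 1)⁻¹ := hεle k n hn
      _ < δ := by rw [one_div] at hk; exact hk
  -- the key a.e. bound : eventually |ξ n ω| ≤ ε n
  have hkey : ∀ᵐ ω ∂P, ∃ K, ∀ n, M K ≤ n → |ξ n ω| ≤ ε n := by
    filter_upwards [hBC] with ω hω
    rw [eventually_atTop] at hω
    obtain ⟨K, hK⟩ := hω
    refine ⟨K, fun n hn => ?_⟩
    have hKk : K ≤ c n := by
      simp only [hc]
      exact Nat.le_findGreatest (le_trans (hMk K) hn) hn
    have hMkn : M (c n) ≤ n := by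
      simp only [hc]
      exact Nat.findGreatest_spec (P := fun j => M j ≤ n) (le_trans (hMk K) hn) hn
    have hωA : ω ∈ A (c n) (M (c n)) := by simpa using hK (c n) hKk
    have := hωA n hMkn
    simpa [hε] using this
  -- define η
  set S : Ω → ℝ≥0∞ := fun ω => ⨆ n, ENNReal.ofReal (|ξ n ω| / ε n) with hS
  have hSmeas : Measurable S := by
    apply Measurable.iSup
    intro n
    exact ENNReal.measurable_ofReal.comp ((hm n).abs.div_const _)
  refine ⟨fun ω => (S ω).toReal, ε, ENNReal.measurable_toReal.comp hSmeas,
    fun ω => ENNReal.toReal_nonneg, hεpos, hεtendsto, ?_⟩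
  filter_upwards [hkey] with ω hω
  obtain ⟨K, hK⟩ := hω
  -- S ω is finite
  have hSfin : S ω ≠ ⊤ := by
    have hbound : S ω ≤ 1 ⊔ (Finset.range (M K)).sup
        (fun n => ENNReal.ofReal (|ξ n ω| / ε n)) := by
      rw [hS]
      apply iSup_le
      intro n
      rcases lt_or_ge n (M K) with hn | hn
      · exact le_sup_of_le_right
          (Finset.le_sup (f := fun m => ENNReal.ofReal (|ξ m ω| / ε m)) (Finset.mem_range.2 hn))
      · refine le_sup_of_le_left ?_
        rw [← ENNReal.ofReal_one]
        apply ENNReal.ofReal_le_ofReal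
        rw [div_le_one (hεpos n)]
        exact hK n hn
    refine ne_top_of_le_ne_top ?_ hbound
    apply lt_top_iff_ne_top.mp
    apply max_lt ENNReal.one_lt_top
    exact (Finset.sup_lt_iff (by simp : (⊥ : ℝ≥0∞) < ⊤)).2
      (fun n _ => ENNReal.ofReal_lt_top)
  intro n
  have h1 : ENNReal.ofReal (|ξ n ω| / ε n) ≤ S ω := by
    rw [hS]; exact le_iSup (fun m => ENNReal.ofReal (|ξ m ω| / ε m)) n
  have h2 : |ξ n ω| / ε n ≤ (S ω).toReal := by
    have := ENNReal.toReal_mono hSfin h1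
    rwa [ENNReal.toReal_ofReal (div_nonneg (abs_nonneg _) (hεpos n).le)] at this
  calc |ξ n ω| = |ξ n ω| / ε n * ε n := by rw [div_mul_cancel₀ _ (hεpos n).ne']
    _ ≤ (S ω).toReal * ε n := by
        apply mul_le_mul_of_nonneg_right h2 (hεpos n).le
end

section
/- Let (X,d) be a compact metric space and let ξ = ξ(x,ω) be a jointly measurable random field on X whose sample paths are almost surely (uniformly) continuous. Then ξ is factorably continuous: there exist a scaling function g on [0, diam(X)] and a non-negative almost surely finite random variable τ such that, almost surely, Δ(ξ(·,ω),δ) ≤ τ(ω) · g(δ) for every δ ∈ [0, diam(X)]. (Conversely, factorable continuity trivially implies almost sure continuity, so the two notions are equivalent.) -/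
open MeasureTheory Filter Set
open scoped ENNReal Topology NNReal

namespace FactorAux

variable {X : Type*} [MetricSpace X]

/-- sup of increments of `f` over pairs of points of `s` at distance `< 2δ`. -/
noncomputable def FF (s : Set X) (f : X → ℝ) (δ : ℝ) : ℝ≥0∞ :=
  ⨆ p : {q : s × s // dist (q.1 : X) (q.2 : X) < 2 * δ},
    ENNReal.ofReal |f p.1.1 - f p.1.2|

/-- sup of `|f|` over `s`. -/
noncomputable def MM (s : Set X) (f : X → ℝ) : ℝ≥0∞ :=
  ⨆ x : s, ENNReal.ofReal |f x|

lemma FF_le_two_MM {s : Set X} {f : X → ℝ} {δ : ℝ} : FF s f δ ≤ 2 * MM s f := by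
  refine iSup_le fun p => ?_
  have habs : |f p.1.1 - f p.1.2| ≤ |f p.1.1| + |f p.1.2| := by
    have := abs_add_le (f p.1.1) (-(f p.1.2)); simpa [sub_eq_add_neg] using this
  refine le_trans (ENNReal.ofReal_le_ofReal habs) ?_
  refine le_trans ENNReal.ofReal_add_le ?_
  calc ENNReal.ofReal |f p.1.1| + ENNReal.ofReal |f p.1.2|
      ≤ MM s f + MM s f := add_le_add (le_iSup (fun x : s => ENNReal.ofReal |f x|) p.1.1)
        (le_iSup (fun x : s => ENNReal.ofReal |f x|) p.1.2)
    _ = 2 * MM s f := (two_mul _).symm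

lemma MM_ne_top [CompactSpace X] {s : Set X} {f : X → ℝ} (hf : Continuous f) :
    MM s f ≠ ∞ := by
  obtain ⟨C, hC⟩ := isCompact_univ.exists_bound_of_continuousOn hf.continuousOn
  refine ne_top_of_le_ne_top (ENNReal.ofReal_ne_top (r := C)) ?_
  refine iSup_le fun x => ENNReal.ofReal_le_ofReal ?_
  simpa [Real.norm_eq_abs] using hC x trivial

lemma modCont_nonpos_zero (f : X → ℝ) : modCont f 0 ≤ 0 := by
  refine Real.sSup_le ?_ le_rfl
  rintro r ⟨x, y, hxy, rfl⟩
  have : x = y := by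
    have := dist_nonneg (x := x) (y := y)
    exact dist_le_zero.mp (le_antisymm hxy this).le
  simp [this]

lemma modCont_le_toReal {s : Set X} (hs : Dense s) {f : X → ℝ} (hf : Continuous f)
    {δ ρ : ℝ} (hδρ : δ ≤ ρ) (hρ : 0 < ρ) (hfin : FF s f ρ ≠ ∞) :
    modCont f δ ≤ (FF s f ρ).toReal := by
  refine Real.sSup_le ?_ ENNReal.toReal_nonneg
  rintro r ⟨x, y, hxy, rfl⟩
  by_contra hcon
  push_neg at hcon
  set ε := (|f x - f y| - (FF s f ρ).toReal) / 2 with hε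
  have hεpos : 0 < ε := by simp only [hε]; linarith
  obtain ⟨ρx, hρx, hx⟩ := Metric.continuousAt_iff.mp (hf.continuousAt (x := x)) (ε/2)
    (by linarith)
  obtain ⟨ρy, hρy, hy⟩ := Metric.continuousAt_iff.mp (hf.continuousAt (x := y)) (ε/2)
    (by linarith)
  set r' := min (min ρx ρy) (ρ/2) with hr'
  have hr'pos : 0 < r' := lt_min (lt_min hρx hρy) (by linarith)
  obtain ⟨a, has, ha⟩ := Metric.mem_closure_iff.mp (hs x) r' hr'pos
  obtain ⟨b, hbs, hb⟩ := Metric.mem_closure_iff.mp (hs y) r' hr'pos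
  have hfa : |f a - f x| < ε/2 := by
    have := hx (show dist a x < ρx by
      rw [dist_comm]; exact lt_of_lt_of_le ha ((min_le_left _ _).trans (min_le_left _ _)))
    rwa [Real.dist_eq] at this
  have hfb : |f b - f y| < ε/2 := by
    have := hy (show dist b y < ρy by
      rw [dist_comm]; exact lt_of_lt_of_le hb ((min_le_left _ _).trans (min_le_right _ _)))
    rwa [Real.dist_eq] at this
  have hab : dist a b < 2 * ρ := by
    have h4 : dist a b ≤ dist a x + dist x y + dist y b := dist_triangle4 a x y b
    have h5 : dist a x < ρ/2 := by
      rw [dist_comm]; exact lt_of_lt_of_le ha (min_le_right _ _)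
    have h6 : dist y b < ρ/2 := lt_of_lt_of_le hb (min_le_right _ _)
    linarith
  have hle : ENNReal.ofReal |f a - f b| ≤ FF s f ρ :=
    le_iSup (fun p : {q : s × s // dist (q.1 : X) (q.2 : X) < 2 * ρ} =>
      ENNReal.ofReal |f p.1.1 - f p.1.2|) ⟨(⟨a, has⟩, ⟨b, hbs⟩), hab⟩
  have hle2 : |f a - f b| ≤ (FF s f ρ).toReal := by
    have := ENNReal.toReal_mono hfin hle
    rwa [ENNReal.toReal_ofReal (abs_nonneg _)] at this
  have htri : |f x - f y| ≤ |f a - f x| + |f a - f b| + |f b - f y| := by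
    have h7 : f x - f y = -(f a - f x) + (f a - f b) + (f b - f y) := by ring
    calc |f x - f y| = |(-(f a - f x) + (f a - f b)) + (f b - f y)| := by rw [← h7]
      _ ≤ |(-(f a - f x) + (f a - f b))| + |f b - f y| := abs_add_le _ _
      _ ≤ |(-(f a - f x))| + |f a - f b| + |f b - f y| := by
          exact add_le_add (abs_add_le _ _) le_rfl
      _ = |f a - f x| + |f a - f b| + |f b - f y| := by rw [abs_neg]
  have : |f x - f y| < (FF s f ρ).toReal + ε := by
    calc |f x - f y| ≤ |f a - f x| + |f a - f b| + |f b - f y| := htri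
      _ < ε/2 + (FF s f ρ).toReal + ε/2 := by
          have := add_lt_add_of_lt_of_le (add_lt_add_of_lt_of_le hfa hle2) hfb.le
          linarith
      _ = (FF s f ρ).toReal + ε := by ring
  simp only [hε] at this
  linarith

lemma FF_tendsto_zero [CompactSpace X] {s : Set X} {f : X → ℝ} (hf : Continuous f)
    {a : ℝ} (ha : 0 < a) :
    Tendsto (fun k : ℕ => min 1 (FF s f (a / (k + 1)))) atTop (𝓝 0) := by
  rw [ENNReal.tendsto_nhds_zero]
  intro ε hε
  rcases le_or_gt 1 ε with h1 | h1
  · exact Eventually.of_forall fun k => le_trans (min_le_left _ _) h1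
  · have hεtop : ε ≠ ∞ := (h1.trans_le le_top).ne
    have hεr : 0 < ε.toReal := ENNReal.toReal_pos hε.ne' hεtop
    obtain ⟨δ₀, hδ₀, hδ⟩ := Metric.uniformContinuous_iff.mp
      (CompactSpace.uniformContinuous_of_continuous hf) ε.toReal hεr
    obtain ⟨K, hK⟩ := exists_nat_gt (2 * a / δ₀)
    refine eventually_atTop.2 ⟨K, fun k hk => ?_⟩
    refine le_trans (min_le_right _ _) (iSup_le fun p => ?_)
    have hk1 : (2 * a) / δ₀ < (k : ℝ) + 1 := by
      calc (2*a)/δ₀ < (K : ℝ) := hK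
        _ ≤ (k : ℝ) := by exact_mod_cast hk
        _ ≤ (k : ℝ) + 1 := by linarith
    have hkpos : (0:ℝ) < (k:ℝ) + 1 := by positivity
    have hlt : 2 * (a / ((k:ℝ) + 1)) < δ₀ := by
      rw [div_lt_iff₀ hδ₀] at hk1
      have heq : 2 * (a / ((k:ℝ) + 1)) = 2 * a / ((k:ℝ) + 1) := by ring
      rw [heq, div_lt_iff₀ hkpos]
      linarith [hk1]
    have hdist : dist (p.1.1 : X) (p.1.2 : X) < δ₀ := lt_trans p.2 hlt
    have := hδ hdist
    rw [Real.dist_eq] at this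
    exact ENNReal.ofReal_le_of_le_toReal this.le

variable {Ω : Type*} [MeasurableSpace X] [MeasurableSpace Ω]

lemma xi_meas {ξ : X → Ω → ℝ} (hmeas : Measurable fun p : X × Ω => ξ p.1 p.2) (x : X) :
    Measurable fun ω => ξ x ω := hmeas.comp measurable_prodMk_left

lemma FF_meas {s : Set X} (hsc : s.Countable) {ξ : X → Ω → ℝ}
    (hmeas : Measurable fun p : X × Ω => ξ p.1 p.2) (δ : ℝ) :
    Measurable fun ω => FF s (fun x => ξ x ω) δ := by
  have := hsc.to_subtype
  exact Measurable.iSup fun p =>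
    (((xi_meas hmeas _).sub (xi_meas hmeas _)).abs).ennreal_ofReal

lemma MM_meas {s : Set X} (hsc : s.Countable) {ξ : X → Ω → ℝ}
    (hmeas : Measurable fun p : X × Ω => ξ p.1 p.2) :
    Measurable fun ω => MM s (fun x => ξ x ω) := by
  have := hsc.to_subtype
  exact Measurable.iSup fun x => ((xi_meas hmeas _).abs).ennreal_ofReal

end FactorAux

open FactorAux

/-- a random field on a compact metric space with almost surely continuous
sample paths is factorably continuous: `Δ(ξ(·,ω), δ) ≤ τ(ω) · g(δ)` with a scaling
function `g` and a non-negative finite random variable `τ`. -/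
theorem factorably_continuous_of_ae_continuous
    {X Ω : Type*} [MetricSpace X] [CompactSpace X]
    [MeasurableSpace X] [BorelSpace X] [MeasurableSpace Ω]
    (P : Measure Ω) [IsProbabilityMeasure P]
    (ξ : X → Ω → ℝ)
    (hmeas : Measurable fun p : X × Ω => ξ p.1 p.2)
    (hcont : ∀ᵐ ω ∂P, Continuous fun x => ξ x ω) :
    ∃ (g : ℝ → ℝ) (τ : Ω → ℝ),
      IsScalingFunction g (Metric.diam (Set.univ : Set X)) ∧
      Measurable τ ∧ (∀ ω, 0 ≤ τ ω) ∧
      ∀ᵐ ω ∂P, ∀ δ ∈ Set.Icc (0 : ℝ) (Metric.diam (Set.univ : Set X)),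
        modCont (fun x => ξ x ω) δ ≤ τ ω * g δ := by
  classical
  set D := Metric.diam (Set.univ : Set X) with hD
  obtain ⟨s, hsc, hsd⟩ := TopologicalSpace.exists_countable_dense X
  have hFmeas : ∀ δ, Measurable fun ω => FF s (fun x => ξ x ω) δ := FF_meas hsc hmeas
  have hMmeas : Measurable fun ω => MM s (fun x => ξ x ω) := MM_meas hsc hmeas
  -- key approximation step
  have key : ∀ a : ℝ, 0 < a → ∀ ε : ℝ≥0∞, 0 < ε →
      ∃ δ : ℝ, 0 < δ ∧ δ ≤ a ∧ ∫⁻ ω, min 1 (FF s (fun x => ξ x ω) δ) ∂P ≤ ε := by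
    intro a ha ε hε
    have hlim : Tendsto (fun k : ℕ =>
        ∫⁻ ω, min 1 (FF s (fun x => ξ x ω) (a / (k + 1))) ∂P) atTop (𝓝 0) := by
      have h := tendsto_lintegral_of_dominated_convergence (μ := P)
        (F := fun k ω => min 1 (FF s (fun x => ξ x ω) (a / (k + 1))))
        (f := fun _ => 0) (bound := fun _ => 1)
        (fun k => measurable_const.min (hFmeas _))
        (fun k => Eventually.of_forall fun ω => min_le_left _ _)
        (by simp)
        (by filter_upwards [hcont] with ω hω
            exact FF_tendsto_zero hω ha)
      simpa using h
    obtain ⟨k, hk⟩ := (hlim.eventually_lt_const hε).exists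
    refine ⟨a / (k + 1), by positivity, ?_, hk.le⟩
    apply div_le_self ha.le
    have : (0:ℝ) ≤ (k:ℝ) := Nat.cast_nonneg k
    linarith
  -- recursive construction of the scales δs
  have hrec : ∀ (n : ℕ) (a : {x : ℝ // 0 < x}), ∃ b : {x : ℝ // 0 < x},
      (b : ℝ) ≤ (a : ℝ) / 2 ∧
      ∫⁻ ω, min 1 (FF s (fun x => ξ x ω) b) ∂P ≤ (2⁻¹ : ℝ≥0∞) ^ (2 * (n + 1)) := by
    intro n a
    obtain ⟨δ, hδ0, hδa, hδint⟩ := key ((a : ℝ) / 2) (half_pos a.2) _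
      (ENNReal.pow_pos (ENNReal.inv_pos.mpr (ENNReal.ofNat_ne_top (n := 2))) _)
    exact ⟨⟨δ, hδ0⟩, hδa, hδint⟩
  choose nxt hnxt1 hnxt2 using hrec
  have hmax1 : (0:ℝ) < max D 1 := lt_of_lt_of_le one_pos (le_max_right _ _)
  let δs' : ℕ → {x : ℝ // 0 < x} :=
    fun n => Nat.rec ⟨max D 1, hmax1⟩ (fun n prev => nxt n prev) n
  set δs : ℕ → ℝ := fun n => (δs' n).1 with hδsdef
  have hδspos : ∀ n, 0 < δs n := fun n => (δs' n).2
  have hδshalf : ∀ n, δs (n + 1) ≤ δs n / 2 := fun n => hnxt1 n (δs' n)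
  have hδsint : ∀ n, ∫⁻ ω, min 1 (FF s (fun x => ξ x ω) (δs n)) ∂P
      ≤ (2⁻¹ : ℝ≥0∞) ^ (2 * n) := by
    intro n
    cases n with
    | zero =>
        simp only [Nat.mul_zero, pow_zero]
        calc ∫⁻ ω, min 1 (FF s (fun x => ξ x ω) (δs 0)) ∂P
            ≤ ∫⁻ _, 1 ∂P := lintegral_mono fun ω => min_le_left _ _
          _ = 1 := by simp
    | succ n => exact hnxt2 n (δs' n)
  have hδs0 : δs 0 = max D 1 := rfl
  have hδsbound : ∀ n, δs n ≤ max D 1 * (2⁻¹ : ℝ) ^ n := by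
    intro n
    induction n with
    | zero => simp [hδs0]
    | succ n ih =>
        calc δs (n + 1) ≤ δs n / 2 := hδshalf n
          _ ≤ (max D 1 * 2⁻¹ ^ n) / 2 := by linarith
          _ = max D 1 * 2⁻¹ ^ (n + 1) := by ring
  -- the random variable τ'
  set τ' : Ω → ℝ≥0∞ :=
    fun ω => ∑' n, 2 ^ n * min 1 (FF s (fun x => ξ x ω) (δs n)) with hτ'def
  have hτ'meas : Measurable τ' :=
    Measurable.ennreal_tsum fun n => (measurable_const.min (hFmeas _)).const_mul _
  have hτ'int : ∫⁻ ω, τ' ω ∂P ≠ ∞ := by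
    have h1 : ∫⁻ ω, τ' ω ∂P
        = ∑' n, ∫⁻ ω, 2 ^ n * min 1 (FF s (fun x => ξ x ω) (δs n)) ∂P :=
      lintegral_tsum fun n =>
        ((measurable_const.min (hFmeas _)).const_mul _).aemeasurable
    rw [h1]
    have h2 : ∀ n : ℕ, ∫⁻ ω, 2 ^ n * min 1 (FF s (fun x => ξ x ω) (δs n)) ∂P
        ≤ (2⁻¹ : ℝ≥0∞) ^ n := by
      intro n
      rw [lintegral_const_mul _ (measurable_const.min (hFmeas _))]
      calc (2:ℝ≥0∞) ^ n * ∫⁻ ω, min 1 (FF s (fun x => ξ x ω) (δs n)) ∂P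
          ≤ 2 ^ n * (2⁻¹) ^ (2 * n) := mul_le_mul_right (hδsint n) _
        _ = (2⁻¹ : ℝ≥0∞) ^ n := by
            rw [two_mul, pow_add, ← mul_assoc, ← mul_pow,
              ENNReal.mul_inv_cancel (by norm_num) (by norm_num), one_pow, one_mul]
    refine ne_of_lt (lt_of_le_of_lt (ENNReal.tsum_le_tsum h2) ?_)
    rw [ENNReal.tsum_geometric, ENNReal.one_sub_inv_two, inv_inv]
    exact ENNReal.ofNat_lt_top
  -- the scaling function g
  set g : ℝ → ℝ := fun δ => ∑' n, (2⁻¹ : ℝ) ^ n * min 1 (max δ 0 / δs n) with hgdef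
  have hterm_nonneg : ∀ (n : ℕ) (δ : ℝ), 0 ≤ (2⁻¹ : ℝ) ^ n * min 1 (max δ 0 / δs n) :=
    fun n δ => mul_nonneg (by positivity)
      (le_min zero_le_one (div_nonneg (le_max_right _ _) (hδspos n).le))
  have hterm_le : ∀ (n : ℕ) (δ : ℝ),
      (2⁻¹ : ℝ) ^ n * min 1 (max δ 0 / δs n) ≤ (2⁻¹ : ℝ) ^ n := fun n δ =>
    mul_le_of_le_one_right (by positivity) (min_le_left _ _)
  have hgeom : Summable fun n : ℕ => (2⁻¹ : ℝ) ^ n :=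
    summable_geometric_of_lt_one (by norm_num) (by norm_num)
  have hgsum : ∀ δ : ℝ, Summable fun n => (2⁻¹ : ℝ) ^ n * min 1 (max δ 0 / δs n) :=
    fun δ => Summable.of_nonneg_of_le (fun n => hterm_nonneg n δ)
      (fun n => hterm_le n δ) hgeom
  have hgcont : Continuous g := by
    refine continuous_tsum (fun n => ?_) hgeom (fun n δ => ?_)
    · exact continuous_const.mul
        (continuous_const.min (((continuous_id.max continuous_const)).div_const _))
    · rw [Real.norm_eq_abs, abs_of_nonneg (hterm_nonneg n δ)]
      exact hterm_le n δ
  have hgmono : Monotone g := by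
    intro u v huv
    refine Summable.tsum_le_tsum (fun n => ?_) (hgsum u) (hgsum v)
    have h1 : max u 0 / δs n ≤ max v 0 / δs n :=
      (div_le_div_iff_of_pos_right (hδspos n)).mpr (max_le_max huv le_rfl)
    exact mul_le_mul_of_nonneg_left (min_le_min le_rfl h1) (by positivity)
  have hg0 : g 0 = 0 := by
    simp [hgdef]
  have hgnonneg : ∀ δ, 0 ≤ g δ := fun δ => tsum_nonneg fun n => hterm_nonneg n δ
  have hglb : ∀ (n : ℕ) (δ : ℝ), δs n ≤ δ → (2⁻¹ : ℝ) ^ n ≤ g δ := by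
    intro n δ hn
    have h0 : 0 ≤ δ := (hδspos n).le.trans hn
    have heq : (2⁻¹ : ℝ) ^ n * min 1 (max δ 0 / δs n) = (2⁻¹ : ℝ) ^ n := by
      rw [max_eq_left h0, min_eq_left ((one_le_div (hδspos n)).mpr hn), mul_one]
    calc (2⁻¹ : ℝ) ^ n = (2⁻¹ : ℝ) ^ n * min 1 (max δ 0 / δs n) := heq.symm
      _ ≤ g δ := Summable.le_tsum (hgsum δ) n fun m _ => hterm_nonneg m δ
  -- the random variable τ
  set τ : Ω → ℝ := fun ω =>
    2 * (max 1 ((2 * MM s (fun x => ξ x ω)).toReal) * max 1 ((τ' ω).toReal)) with hτdef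
  have hτmeas : Measurable τ := by
    apply Measurable.const_mul
    exact (measurable_const.max ((hMmeas.const_mul 2).ennreal_toReal)).mul
      (measurable_const.max hτ'meas.ennreal_toReal)
  have hτnonneg : ∀ ω, 0 ≤ τ ω := by
    intro ω
    have h1 : (0:ℝ) ≤ max 1 ((2 * MM s (fun x => ξ x ω)).toReal) :=
      zero_le_one.trans (le_max_left _ _)
    have h2 : (0:ℝ) ≤ max 1 ((τ' ω).toReal) := zero_le_one.trans (le_max_left _ _)
    simp only [hτdef]
    nlinarith
  refine ⟨g, τ, ⟨hgcont.continuousOn, fun δ _ => hgnonneg δ,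
    hgmono.monotoneOn _, hg0⟩, hτmeas, hτnonneg, ?_⟩
  filter_upwards [hcont, ae_lt_top hτ'meas hτ'int] with ω hωc hωτ
  rintro δ ⟨hδ0, hδD⟩
  set f := fun x => ξ x ω with hfdef
  rcases eq_or_lt_of_le hδ0 with h0 | hδpos
  · rw [← h0, hg0, mul_zero]
    exact modCont_nonpos_zero f
  · -- find the scale containing δ
    have hlt : ∃ n, δs n < δ := by
      obtain ⟨n, hn⟩ := exists_pow_lt_of_lt_one
        (show (0:ℝ) < δ / max D 1 by positivity) (by norm_num : (2⁻¹ : ℝ) < 1)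
      refine ⟨n, lt_of_le_of_lt (hδsbound n) ?_⟩
      rw [lt_div_iff₀ hmax1] at hn
      linarith [hn]
    have hnne : Nat.find hlt ≠ 0 := by
      intro h
      have := Nat.find_spec hlt
      rw [h, hδs0] at this
      exact absurd this (not_lt.mpr (hδD.trans (le_max_left D 1)))
    obtain ⟨m, hm⟩ := Nat.exists_eq_succ_of_ne_zero hnne
    have hn1 : δs (m + 1) < δ := by
      have := Nat.find_spec hlt
      rwa [hm] at this
    have hmle : δ ≤ δs m := by
      have := Nat.find_min hlt (by omega : m < Nat.find hlt)
      exact not_lt.mp this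
    have hMfin : MM s f ≠ ∞ := MM_ne_top hωc
    have h2Mfin : (2 : ℝ≥0∞) * MM s f ≠ ∞ := ENNReal.mul_ne_top (by norm_num) hMfin
    have hFfin : FF s f (δs m) ≠ ∞ := ne_top_of_le_ne_top h2Mfin FF_le_two_MM
    have h1 : modCont f δ ≤ (FF s f (δs m)).toReal :=
      modCont_le_toReal hsd hωc hmle (hδspos m) hFfin
    set t := max 1 ((τ' ω).toReal) with htdef
    set M := max 1 ((2 * MM s f).toReal) with hMdef
    have ht1 : (1:ℝ) ≤ t := le_max_left _ _
    have hM1 : (1:ℝ) ≤ M := le_max_left _ _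
    have hτ't : (τ' ω).toReal ≤ t := le_max_right _ _
    have h2 : (FF s f (δs m)).toReal ≤ M * (t * (2⁻¹ : ℝ) ^ m) := by
      have hterm : (2:ℝ≥0∞) ^ m * min 1 (FF s f (δs m)) ≤ τ' ω :=
        ENNReal.le_tsum m
      have hpow : ((2:ℝ≥0∞) ^ m).toReal = (2:ℝ) ^ m := by
        simp [ENNReal.toReal_pow]
      have hpowpos : (0:ℝ) < 2 ^ m := by positivity
      rcases le_total (FF s f (δs m)) 1 with hF1 | hF1
      · rw [min_eq_right hF1] at hterm
        have h3 := ENNReal.toReal_mono hωτ.ne hterm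
        rw [ENNReal.toReal_mul, hpow] at h3
        -- h3 : 2^m * F.toReal ≤ τ'.toReal
        have h4 : (FF s f (δs m)).toReal ≤ t * (2⁻¹ : ℝ) ^ m := by
          rw [inv_pow]
          rw [mul_comm t, inv_mul_eq_div, le_div_iff₀ hpowpos]
          calc (FF s f (δs m)).toReal * 2 ^ m = 2 ^ m * (FF s f (δs m)).toReal := by ring
            _ ≤ (τ' ω).toReal := h3
            _ ≤ t := hτ't
        calc (FF s f (δs m)).toReal ≤ t * (2⁻¹:ℝ)^m := h4
          _ = 1 * (t * (2⁻¹:ℝ)^m) := by ring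
          _ ≤ M * (t * (2⁻¹:ℝ)^m) := by
              refine mul_le_mul_of_nonneg_right hM1 ?_
              positivity
      · rw [min_eq_left hF1, mul_one] at hterm
        have h3 := ENNReal.toReal_mono hωτ.ne hterm
        rw [hpow] at h3
        -- h3 : 2^m ≤ τ'.toReal
        have h4 : (1:ℝ) ≤ t * (2⁻¹:ℝ)^m := by
          have : (2:ℝ)^m ≤ t := h3.trans hτ't
          calc (1:ℝ) = 2^m * (2⁻¹:ℝ)^m := by
                rw [← mul_pow]; norm_num
            _ ≤ t * (2⁻¹:ℝ)^m := by
                refine mul_le_mul_of_nonneg_right this ?_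
                positivity
        have h5 : (FF s f (δs m)).toReal ≤ M := by
          refine le_trans (ENNReal.toReal_mono h2Mfin FF_le_two_MM) (le_max_right _ _)
        calc (FF s f (δs m)).toReal ≤ M := h5
          _ = M * 1 := by ring
          _ ≤ M * (t * (2⁻¹:ℝ)^m) := by
              refine mul_le_mul_of_nonneg_left h4 ?_
              linarith
    have h3 : (2⁻¹ : ℝ) ^ (m + 1) ≤ g δ := hglb (m + 1) δ hn1.le
    calc modCont f δ ≤ M * (t * (2⁻¹:ℝ)^m) := h1.trans h2
      _ = 2 * (M * t) * (2⁻¹:ℝ)^(m+1) := by ring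
      _ ≤ 2 * (M * t) * g δ := by
          refine mul_le_mul_of_nonneg_left h3 ?_
          nlinarith
      _ = τ ω * g δ := by simp only [hτdef]; rfl
end
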